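/- arXiv:1403.7480 — 10 statements merged into one kernel-verified Lean document; each statement's English description precedes it below -/
import Mathlib

section
/- Let α be a nonzero algebraic number with primitive minimal polynomial M_α ∈ ℤ[x], and let S ⊆ ℂ be a finite set with ℤ[α] = S[α]. Then for each j ∈ {0, 1, …, |M_α(0)| − 1} there exists a polynomial P_j ∈ ℤ[x] with P_j(α) ∈ S and P_j(0) ≡ j (mod M_α(0)), and the elements P_0(α), …, P_{|M_α(0)|−1}(α) are pairwise distinct; consequently Card(S) ≥ max{2, |M_α(0)|}. -/
open Polynomial

/-- `ℤ[α]`: the set of values `P(α)` for `P ∈ ℤ[x]`. -/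
def Zadj (α : ℂ) : Set ℂ := {z | ∃ P : ℤ[X], aeval α P = z}

/-- `F[α]`: the set of all sums `Σ_{j=0}^{n} f_j α^j` with `n ∈ ℕ` and `f_0, …, f_n ∈ F`. -/
def repSet (α : ℂ) (F : Set ℂ) : Set ℂ :=
  {z | ∃ (n : ℕ) (f : ℕ → ℂ), (∀ j ≤ n, f j ∈ F) ∧
    z = ∑ j ∈ Finset.range (n + 1), f j * α ^ j}

/-- `M` is the minimal polynomial of `α` over `ℚ`, normalized to be a primitive polynomial
with integer coefficients. -/
def IsPrimMinPoly (α : ℂ) (M : ℤ[X]) : Prop :=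
  M.IsPrimitive ∧ ∃ c : ℚ, c ≠ 0 ∧ M.map (Int.castRingHom ℚ) = C c * minpoly ℚ α

lemma key_dvd (α : ℂ) (M : ℤ[X]) (hM : IsPrimMinPoly α M)
    (P : ℤ[X]) (hP : aeval α P = 0) : M ∣ P := by
  obtain ⟨hprim, c, hc, hmap⟩ := hM
  rcases eq_or_ne P 0 with rfl | hP0
  · exact dvd_zero M
  have h1 : minpoly ℚ α ∣ P.map (Int.castRingHom ℚ) := by
    apply minpoly.dvd
    rw [← algebraMap_int_eq, aeval_map_algebraMap]
    exact hP
  have hcu : IsUnit (C c : ℚ[X]) := isUnit_C.mpr hc.isUnit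
  have h2 : M.map (Int.castRingHom ℚ) ∣ P.map (Int.castRingHom ℚ) := by
    rw [hmap]
    exact (associated_unit_mul_left _ _ hcu).dvd_iff_dvd_left.mpr h1
  have h3 : M.map (Int.castRingHom ℚ) ∣ (P.primPart).map (Int.castRingHom ℚ) := by
    have hPc : P = C P.content * P.primPart := P.eq_C_content_mul_primPart
    have hcont : (C (P.content : ℚ) : ℚ[X]) ≠ 0 := by
      simp [Polynomial.content_eq_zero_iff, hP0]
    have hcu2 : IsUnit (C ((P.content : ℚ)) : ℚ[X]) := by
      refine isUnit_C.mpr (isUnit_iff_ne_zero.mpr ?_)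
      simpa [Polynomial.content_eq_zero_iff, hP0] using hP0
    have : P.map (Int.castRingHom ℚ)
        = C (P.content : ℚ) * (P.primPart).map (Int.castRingHom ℚ) := by
      conv_lhs => rw [hPc]
      simp [Polynomial.map_mul]
    rw [this] at h2
    exact (associated_unit_mul_left _ _ hcu2).dvd_iff_dvd_right.mp h2
  have h4 : M ∣ P.primPart := by
    apply hprim.dvd_of_fraction_map_dvd_fraction_map (K := ℚ) (q := P.primPart)
    rwa [algebraMap_int_eq]
  exact h4.trans P.primPart_dvd

lemma eval_zero_ne (α : ℂ) (hα : IsAlgebraic ℚ α) (h0 : α ≠ 0)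
    (M : ℤ[X]) (hM : IsPrimMinPoly α M) : M.eval 0 ≠ 0 := by
  obtain ⟨hprim, c, hc, hmap⟩ := hM
  have h := congrArg (Polynomial.eval (0 : ℚ)) hmap
  rw [eval_zero_map] at h
  have hmin : (minpoly ℚ α).coeff 0 ≠ 0 :=
    minpoly.coeff_zero_ne_zero hα.isIntegral h0
  intro hz
  rw [hz] at h
  simp only [map_zero, eval_mul, eval_C] at h
  rw [← Polynomial.coeff_zero_eq_eval_zero] at h
  exact (mul_ne_zero hc hmin) h.symm

lemma mem_Zadj_of_mem (α : ℂ) (S : Finset ℂ) (hS : repSet α ↑S = Zadj α)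
    {s : ℂ} (hs : s ∈ S) : s ∈ Zadj α := by
  rw [← hS]
  exact ⟨0, fun _ => s, fun j _ => hs, by simp⟩

lemma repr_int (α : ℂ) (hα : IsAlgebraic ℚ α) (h0 : α ≠ 0)
    (M : ℤ[X]) (hM : IsPrimMinPoly α M)
    (S : Finset ℂ) (hS : repSet α ↑S = Zadj α) (j : ℤ) :
    ∃ P : ℤ[X], aeval α P ∈ (S : Set ℂ) ∧ M.eval 0 ∣ P.eval 0 - j := by
  have hj : ((j : ℂ)) ∈ repSet α ↑S := by
    rw [hS]; exact ⟨C j, by simp⟩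
  obtain ⟨n, f, hf, hsum⟩ := hj
  have hQ : ∀ i : ℕ, ∃ Q : ℤ[X], i ≤ n → aeval α Q = f i := by
    intro i
    by_cases hi : i ≤ n
    · obtain ⟨Q, hQ⟩ := mem_Zadj_of_mem α S hS (hf i hi)
      exact ⟨Q, fun _ => hQ⟩
    · exact ⟨0, fun h => absurd h hi⟩
  choose Q hQ using hQ
  set R : ℤ[X] := ∑ i ∈ Finset.range (n + 1), Q i * X ^ i with hR
  have hRα : aeval α R = (j : ℂ) := by
    rw [hR, map_sum, hsum]
    refine Finset.sum_congr rfl fun i hi => ?_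
    rw [map_mul, map_pow, aeval_X, hQ i (Nat.lt_succ_iff.mp (Finset.mem_range.mp hi))]
  have hdvd : M ∣ R - C j := by
    apply key_dvd α M hM
    rw [map_sub, hRα, aeval_C]
    simp
  have hR0 : R.eval 0 = (Q 0).eval 0 := by
    rw [hR, Polynomial.eval_finset_sum]
    rw [Finset.sum_eq_single 0]
    · simp
    · intro i hi hne
      simp [zero_pow hne]
    · simp
  refine ⟨Q 0, ?_, ?_⟩
  · rw [hQ 0 (Nat.zero_le n)]
    exact hf 0 (Nat.zero_le n)
  · obtain ⟨T, hT⟩ := hdvd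
    have := congrArg (Polynomial.eval (0 : ℤ)) hT
    simp only [eval_sub, eval_mul, eval_C] at this
    rw [hR0] at this
    exact ⟨T.eval 0, this⟩

lemma two_le_card (α : ℂ) (S : Finset ℂ) (hS : repSet α ↑S = Zadj α) :
    2 ≤ S.card := by
  by_contra hcon
  push_neg at hcon
  have h1 : (1 : ℂ) ∈ repSet α ↑S := by rw [hS]; exact ⟨1, by simp⟩
  obtain ⟨k, f, hf, hone⟩ := h1
  have hne : S.Nonempty := ⟨f 0, hf 0 (Nat.zero_le k)⟩
  have hcard : S.card = 1 := le_antisymm (by omega) (Finset.card_pos.mpr hne)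
  obtain ⟨s, rfl⟩ := Finset.card_eq_one.mp hcard
  set G : ℕ → ℂ := fun n => ∑ i ∈ Finset.range (n + 1), α ^ i with hG
  have hval : ∀ z ∈ repSet α ↑({s} : Finset ℂ), ∃ n, z = s * G n := by
    rintro z ⟨n, g, hg, hsum⟩
    refine ⟨n, ?_⟩
    rw [hsum, hG, Finset.mul_sum]
    refine Finset.sum_congr rfl fun i hi => ?_
    have : g i = s := by
      have := hg i (Nat.lt_succ_iff.mp (Finset.mem_range.mp hi))
      simpa using this
    rw [this]
  have h0 : (0 : ℂ) ∈ repSet α ↑({s} : Finset ℂ) := by rw [hS]; exact ⟨0, by simp⟩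
  obtain ⟨n₀, hn₀⟩ := hval 0 h0
  have h1' : (1 : ℂ) ∈ repSet α ↑({s} : Finset ℂ) := by rw [hS]; exact ⟨1, by simp⟩
  obtain ⟨k₁, hk₁⟩ := hval 1 h1'
  have hs0 : s ≠ 0 := by
    intro h; rw [h, zero_mul] at hk₁; exact one_ne_zero hk₁
  have hGn₀ : G n₀ = 0 := by
    rcases mul_eq_zero.mp hn₀.symm with h | h
    · exact absurd h hs0
    · exact h
  set N := n₀ + 1 with hN
  have hαN : α ^ N = 1 := by
    have := geom_sum_mul α N
    rw [show (∑ i ∈ Finset.range N, α ^ i) = G n₀ from rfl, hGn₀, zero_mul] at this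
    linear_combination -this
  have hper : ∀ r, G (r + N) = G r := by
    intro r
    show (∑ i ∈ Finset.range (r + N + 1), α ^ i) = G r
    have h2 : r + N + 1 = (r + 1) + N := by ring
    rw [h2, Finset.sum_range_add]
    have : (∑ i ∈ Finset.range N, α ^ (r + 1 + i)) = α ^ (r + 1) * G n₀ := by
      rw [hG, Finset.mul_sum]
      exact Finset.sum_congr rfl fun i _ => (pow_add α (r + 1) i)
    rw [this, hGn₀, mul_zero, add_zero]
  have hmod : ∀ n, G n = G (n % N) := by
    intro n
    induction n using Nat.strong_induction_on with
    | _ n ih =>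
      by_cases h : n < N
      · rw [Nat.mod_eq_of_lt h]
      · push_neg at h
        calc G n = G (n - N + N) := by rw [Nat.sub_add_cancel h]
        _ = G (n - N) := hper _
        _ = G ((n - N) % N) := ih _ (by omega)
        _ = G (n % N) := by rw [← Nat.mod_eq_sub_mod h]
  have hsub : Zadj α ⊆ (fun r => s * G r) '' Set.Iio N := by
    intro z hz
    rw [← hS] at hz
    obtain ⟨n, hn⟩ := hval z hz
    refine ⟨n % N, Nat.mod_lt n (by omega), ?_⟩
    show s * G (n % N) = z
    rw [← hmod, hn]
  have hfin : (Zadj α).Finite :=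
    Set.Finite.subset ((Set.finite_Iio N).image _) hsub
  have hinf : (Zadj α).Infinite := by
    apply Set.Infinite.mono (s := Set.range (Int.cast : ℤ → ℂ))
    · rintro z ⟨j, rfl⟩
      exact ⟨C j, by simp⟩
    · exact Set.infinite_range_of_injective Int.cast_injective
  exact hinf hfin


/-- Let `α` be a nonzero algebraic number with primitive minimal polynomial `M`, and `S ⊆ ℂ`
finite with `ℤ[α] = S[α]`.  Then for each `j < |M(0)|` there is `P_j ∈ ℤ[x]` with
`P_j(α) ∈ S`, `P_j(0) ≡ j (mod M(0))`, the values `P_j(α)` pairwise distinct; consequently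
`Card(S) ≥ max{2, |M(0)|}`. -/
theorem digit_set_contains_residues (α : ℂ) (hα : IsAlgebraic ℚ α) (h0 : α ≠ 0)
    (M : ℤ[X]) (hM : IsPrimMinPoly α M)
    (S : Finset ℂ) (hS : repSet α ↑S = Zadj α) :
    (∃ P : ℕ → ℤ[X],
      (∀ j < (M.eval 0).natAbs,
        aeval α (P j) ∈ (S : Set ℂ) ∧ Int.ModEq (M.eval 0) ((P j).eval 0) (j : ℤ)) ∧
      (∀ i < (M.eval 0).natAbs, ∀ j < (M.eval 0).natAbs,
        i ≠ j → aeval α (P i) ≠ aeval α (P j))) ∧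
    max 2 (M.eval 0).natAbs ≤ S.card := by
  have A : ∀ j : ℕ, ∃ P : ℤ[X], aeval α P ∈ (S : Set ℂ) ∧ M.eval 0 ∣ P.eval 0 - j :=
    fun j => repr_int α hα h0 M hM S hS (j : ℤ)
  choose P hP1 hP2 using A
  have hinj : ∀ i < (M.eval 0).natAbs, ∀ j < (M.eval 0).natAbs,
      i ≠ j → aeval α (P i) ≠ aeval α (P j) := by
    intro i hi j hj hne heq
    have hdvd : M ∣ P i - P j := by
      apply key_dvd α M hM
      rw [map_sub, heq, sub_self]
    have hdvd0 : M.eval 0 ∣ (P i).eval 0 - (P j).eval 0 := by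
      obtain ⟨T, hT⟩ := hdvd
      have := congrArg (Polynomial.eval (0 : ℤ)) hT
      simp only [eval_sub, eval_mul] at this
      exact ⟨T.eval 0, this⟩
    have hij : M.eval 0 ∣ (j : ℤ) - (i : ℤ) := by
      have := (Dvd.dvd.sub (Dvd.dvd.sub (hP2 i) (hP2 j)) hdvd0)
      have h2 : ((P i).eval 0 - ↑i - ((P j).eval 0 - ↑j)
          - ((P i).eval 0 - (P j).eval 0)) = (j : ℤ) - i := by ring
      rwa [h2] at this
    have : ((j : ℤ) - (i : ℤ)) = 0 := by
      apply Int.eq_zero_of_dvd_of_natAbs_lt_natAbs hij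
      omega
    omega
  have hcard : (M.eval 0).natAbs ≤ S.card := by
    have := Finset.card_le_card_of_injOn (s := Finset.range (M.eval 0).natAbs)
      (t := S) (fun i => aeval α (P i)) (fun i _ => hP1 i) ?_
    · simpa using this
    · intro i hi j hj heq
      by_contra hne
      exact hinj i (by simpa using hi) j (by simpa using hj) hne heq
  refine ⟨⟨P, fun j _ => ⟨hP1 j, ?_⟩, hinj⟩, max_le (two_le_card α S hS) hcard⟩
  rw [Int.modEq_iff_dvd]
  have hd := dvd_neg.mpr (hP2 j)
  rwa [neg_sub] at hd
end

section
/- Every root of unity α belongs to 𝓕_2; that is, if α is a root of unity then there exists a set S ⊆ ℤ with Card(S) = 2 and ℤ[α] = S[α], and no finite set S ⊆ ℂ with Card(S) ≤ 1 satisfies ℤ[α] = S[α]. (Explicitly, ℤ[1] = {−1, 1}[1], and for any root of unity α ≠ 1 one has ℤ[α] = {0, 1}[α].) -/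
open Polynomial

lemma repSet_subset_Zadj (α : ℂ) (S : Finset ℤ) :
    repSet α ((fun m : ℤ => (m : ℂ)) '' ↑S) ⊆ Zadj α := by
  rintro z ⟨n, f, hf, rfl⟩
  classical
  have hep : ∀ j : ℕ, ∃ c : ℤ, j ≤ n → (c : ℂ) = f j := by
    intro j
    by_cases h : j ≤ n
    · obtain ⟨c, _, hc⟩ := hf j h
      exact ⟨c, fun _ => hc⟩
    · exact ⟨0, fun h' => absurd h' h⟩
  choose g hg using hep
  refine ⟨∑ j ∈ Finset.range (n + 1), C (g j) * X ^ j, ?_⟩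
  rw [map_sum]
  refine Finset.sum_congr rfl fun j hj => ?_
  rw [Finset.mem_range] at hj
  simp [hg j (by omega)]

lemma zero_mem_repSet {α : ℂ} {F : Set ℂ} (h0 : (0:ℂ) ∈ F) : (0:ℂ) ∈ repSet α F :=
  ⟨0, fun _ => 0, fun _ _ => h0, by simp⟩

lemma pow_mem_repSet {α : ℂ} {F : Set ℂ} (h0 : (0:ℂ) ∈ F) (h1 : (1:ℂ) ∈ F) (e : ℕ) :
    α ^ e ∈ repSet α F := by
  classical
  refine ⟨e, fun j => if j = e then 1 else 0, fun j _ => ?_, ?_⟩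
  · dsimp only; split <;> [exact h1; exact h0]
  · rw [Finset.sum_eq_single_of_mem e (by simp) (fun b _ hb => by simp [hb])]
    simp

lemma add_mem_repSet {α : ℂ} {F : Set ℂ} {m : ℕ} (hm : 0 < m) (hαm : α ^ m = 1)
    (h0 : (0:ℂ) ∈ F) {z w : ℂ} (hz : z ∈ repSet α F) (hw : w ∈ repSet α F) :
    z + w ∈ repSet α F := by
  classical
  obtain ⟨n, f, hf, rfl⟩ := hz
  obtain ⟨n', g, hg, rfl⟩ := hw
  have htn : n + 1 ≤ m * (n + 1) := Nat.le_mul_of_pos_left _ hm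
  refine ⟨m * (n + 1) + n',
    fun j => if j < m * (n + 1) then (if j ≤ n then f j else 0) else g (j - m * (n + 1)),
    fun j hj => ?_, ?_⟩
  · by_cases h1 : j < m * (n + 1)
    · by_cases h2 : j ≤ n
      · simpa [h1, h2] using hf j h2
      · simp [h1, h2, h0]
    · simpa [h1] using hg _ (by omega)
  · have hαt : α ^ (m * (n + 1)) = 1 := by rw [pow_mul, hαm, one_pow]
    have hsplit : m * (n + 1) + n' + 1 = m * (n + 1) + (n' + 1) := by omega
    conv_rhs => rw [hsplit, Finset.sum_range_add]
    have h2 : m * (n + 1) = (n + 1) + (m * (n + 1) - (n + 1)) := by omega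
    congr 1
    · conv_rhs => rw [Finset.range_eq_Ico,
        ← Finset.sum_Ico_consecutive _ (Nat.zero_le (n + 1)) htn]
      have e2 : ∑ j ∈ Finset.Ico (n + 1) (m * (n + 1)),
          (fun j => if j < m * (n + 1) then (if j ≤ n then f j else 0)
            else g (j - m * (n + 1))) j * α ^ j = 0 := by
        refine Finset.sum_eq_zero fun j hj => ?_
        rw [Finset.mem_Ico] at hj
        dsimp only
        rw [if_pos (by omega), if_neg (by omega), zero_mul]
      rw [e2, add_zero, Finset.range_eq_Ico]
      refine Finset.sum_congr rfl fun j hj => ?_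
      rw [Finset.mem_Ico] at hj
      dsimp only
      rw [if_pos (by omega), if_pos (by omega)]
    · refine Finset.sum_congr rfl fun x hx => ?_
      dsimp only
      rw [if_neg (by omega), Nat.add_sub_cancel_left, pow_add, hαt, one_mul]

lemma geom_zero {α : ℂ} (hα1 : α ≠ 1) {m : ℕ} (hαm : α ^ m = 1) :
    ∑ r ∈ Finset.range m, α ^ r = 0 := by
  rw [geom_sum_eq hα1, hαm, sub_self, zero_div]

lemma geom_shift_zero {α : ℂ} (hα1 : α ≠ 1) {m : ℕ} (hαm : α ^ m = 1) (i : ℕ) :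
    ∑ r ∈ Finset.range m, α ^ (i + r) = 0 := by
  have : ∀ r ∈ Finset.range m, α ^ (i + r) = α ^ i * α ^ r := fun r _ => pow_add α i r
  rw [Finset.sum_congr rfl this, ← Finset.mul_sum, geom_zero hα1 hαm, mul_zero]

lemma neg_pow_eq {α : ℂ} (hα1 : α ≠ 1) {m : ℕ} (hm : 0 < m) (hαm : α ^ m = 1) (i : ℕ) :
    -α ^ i = ∑ r ∈ Finset.range (m - 1), α ^ (i + (r + 1)) := by
  have h := geom_shift_zero hα1 hαm i
  have hm1 : m = (m - 1) + 1 := by omega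
  rw [hm1, Finset.sum_range_succ'] at h
  simp only [add_zero] at h
  linear_combination -h

lemma Zadj_subset_repSet {α : ℂ} (hα1 : α ≠ 1) {m : ℕ} (hm : 0 < m) (hαm : α ^ m = 1)
    {F : Set ℂ} (h0 : (0:ℂ) ∈ F) (h1 : (1:ℂ) ∈ F) : Zadj α ⊆ repSet α F := by
  rintro z ⟨P, rfl⟩
  have hT : aeval α P ∈ AddSubmonoid.closure (Set.range fun e : ℕ => α ^ e) := by
    rw [Polynomial.aeval_eq_sum_range]
    refine AddSubmonoid.sum_mem _ fun i _ => ?_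
    obtain ⟨c, hc | hc⟩ := (P.coeff i).eq_nat_or_neg
    · rw [hc, natCast_zsmul]
      refine nsmul_mem ?_ c
      exact AddSubmonoid.subset_closure ⟨i, rfl⟩
    · rw [hc, neg_zsmul, natCast_zsmul, ← smul_neg, neg_pow_eq hα1 hm hαm i]
      refine nsmul_mem (AddSubmonoid.sum_mem _ fun r _ => ?_) c
      exact AddSubmonoid.subset_closure ⟨i + (r + 1), rfl⟩
  refine AddSubmonoid.closure_induction (fun x hx => ?_) (zero_mem_repSet h0)
    (fun x y _ _ hx hy => add_mem_repSet hm hαm h0 hx hy) hT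
  obtain ⟨e, rfl⟩ := hx
  exact pow_mem_repSet h0 h1 e

/-- Every root of unity `α` belongs to `𝓕₂`: there is a two-element set `S ⊆ ℤ` with
`ℤ[α] = S[α]`, and no set `S ⊆ ℂ` with at most one element satisfies `ℤ[α] = S[α]`. -/
theorem rootOfUnity_mem_F2 (α : ℂ) (hα : ∃ m : ℕ, 0 < m ∧ α ^ m = 1) :
    (∃ S : Finset ℤ, S.card = 2 ∧ repSet α ((fun m : ℤ => (m : ℂ)) '' ↑S) = Zadj α) ∧
    ∀ S : Finset ℂ, S.card ≤ 1 → repSet α ↑S ≠ Zadj α := by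
  classical
  obtain ⟨m, hm, hαm⟩ := hα
  constructor
  · by_cases hα1 : α = 1
    · -- S = {-1, 1}
      refine ⟨{-1, 1}, by decide, ?_⟩
      apply Set.Subset.antisymm (repSet_subset_Zadj α _)
      rintro z ⟨P, rfl⟩
      have hz : aeval α P = ((P.eval 1 : ℤ) : ℂ) := by
        rw [hα1]
        exact Polynomial.eval₂_at_one (algebraMap ℤ ℂ)
      rw [hz, hα1]
      set c : ℤ := P.eval 1 with hc
      have hmem1 : (1 : ℂ) ∈ ((fun m : ℤ => (m : ℂ)) '' ↑({-1, 1} : Finset ℤ)) :=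
        ⟨1, by simp⟩
      have hmemn1 : (-1 : ℂ) ∈ ((fun m : ℤ => (m : ℂ)) '' ↑({-1, 1} : Finset ℤ)) :=
        ⟨-1, by simp⟩
      rcases eq_or_ne c 0 with h0 | h0
      · refine ⟨1, fun j => if j = 0 then 1 else -1, fun j _ => ?_, ?_⟩
        · dsimp only; split <;> [exact hmem1; exact hmemn1]
        · rw [h0]
          simp [Finset.sum_range_succ]
      · set k := c.natAbs with hk
        have hk1 : 1 ≤ k := Int.natAbs_pos.mpr h0
        refine ⟨k - 1, fun _ => if 0 ≤ c then 1 else -1, fun j _ => ?_, ?_⟩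
        · dsimp only; split <;> [exact hmem1; exact hmemn1]
        · simp only [one_pow, mul_one, Finset.sum_const, Finset.card_range, nsmul_eq_mul]
          have hkk : k - 1 + 1 = k := by omega
          rw [hkk]
          rcases le_or_gt 0 c with hcs | hcs
          · rw [if_pos hcs, mul_one]
            exact_mod_cast congrArg (fun t : ℤ => (t : ℂ)) (by omega : c = (k : ℤ))
          · rw [if_neg (not_le.mpr hcs)]
            have h3 : (c : ℂ) = -((k : ℤ) : ℂ) :=
              congrArg (fun t : ℤ => (t : ℂ)) (by omega : c = -(k : ℤ)) |>.trans (by push_cast; ring)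
            rw [h3]; push_cast; ring
    · -- S = {0, 1}
      refine ⟨{0, 1}, by decide, ?_⟩
      have h0 : (0 : ℂ) ∈ ((fun m : ℤ => (m : ℂ)) '' ↑({0, 1} : Finset ℤ)) := ⟨0, by simp⟩
      have h1 : (1 : ℂ) ∈ ((fun m : ℤ => (m : ℂ)) '' ↑({0, 1} : Finset ℤ)) := ⟨1, by simp⟩
      exact Set.Subset.antisymm (repSet_subset_Zadj α _)
        (Zadj_subset_repSet hα1 hm hαm h0 h1)
  · intro S hS heq
    have h0Z : (0 : ℂ) ∈ Zadj α := ⟨0, by simp⟩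
    have h1Z : (1 : ℂ) ∈ Zadj α := ⟨1, by simp⟩
    rcases S.eq_empty_or_nonempty with rfl | ⟨s, hs⟩
    · rw [← heq] at h0Z
      obtain ⟨n, f, hf, -⟩ := h0Z
      simpa using hf 0 (Nat.zero_le n)
    · have hsing : ∀ x ∈ S, x = s := fun x hx =>
        Finset.card_le_one.mp hS x hx s hs
      by_cases hα1 : α = 1
      · rw [← heq] at h0Z h1Z
        obtain ⟨n, f, hf, h0e⟩ := h0Z
        have hfs : ∀ j ∈ Finset.range (n + 1), f j * α ^ j = s := by
          intro j hj
          rw [Finset.mem_range] at hj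
          rw [hsing (f j) (hf j (by omega)), hα1, one_pow, mul_one]
        rw [Finset.sum_congr rfl hfs, Finset.sum_const, Finset.card_range,
          nsmul_eq_mul] at h0e
        have hs0 : s = 0 := by
          have hne : ((n + 1 : ℕ) : ℂ) ≠ 0 := Nat.cast_ne_zero.mpr (by omega)
          exact (mul_eq_zero.mp h0e.symm).resolve_left hne
        obtain ⟨n', g, hg, h1e⟩ := h1Z
        have hgs : ∀ j ∈ Finset.range (n' + 1), g j * α ^ j = s := by
          intro j hj
          rw [Finset.mem_range] at hj
          rw [hsing (g j) (hg j (by omega)), hα1, one_pow, mul_one]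
        rw [Finset.sum_congr rfl hgs, Finset.sum_const, Finset.card_range,
          nsmul_eq_mul, hs0, mul_zero] at h1e
        exact one_ne_zero h1e
      · -- α ≠ 1 : repSet {s} is finite, Zadj infinite
        have hinf : (Zadj α).Infinite := by
          apply Set.infinite_of_injective_forall_mem (f := fun k : ℕ => (k : ℂ))
            Nat.cast_injective
          intro k
          exact ⟨C (k : ℤ), by simp⟩
        have key : ∀ n : ℕ, ∃ r < m,
            (∑ j ∈ Finset.range (n + 1), α ^ j) = ∑ j ∈ Finset.range (r + 1), α ^ j := by
          intro n
          induction n using Nat.strong_induction_on with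
          | _ n ih =>
            by_cases h : n < m
            · exact ⟨n, h, rfl⟩
            · obtain ⟨r, hr, he⟩ := ih (n - m) (by omega)
              refine ⟨r, hr, ?_⟩
              have hsp : n + 1 = (n - m + 1) + m := by omega
              rw [hsp, Finset.sum_range_add, geom_shift_zero hα1 hαm, add_zero, he]
        have hsub : repSet α ↑S ⊆
            (fun r : ℕ => s * ∑ j ∈ Finset.range (r + 1), α ^ j) '' (Set.Iio m) := by
          rintro z ⟨n, f, hf, rfl⟩
          obtain ⟨r, hr, he⟩ := key n
          refine ⟨r, hr, ?_⟩
          simp only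
          rw [← he, Finset.mul_sum]
          refine (Finset.sum_congr rfl fun j hj => ?_).symm
          rw [Finset.mem_range] at hj
          rw [hsing (f j) (hf j (by omega))]
        have hfin : ((fun r : ℕ => s * ∑ j ∈ Finset.range (r + 1), α ^ j) ''
            (Set.Iio m)).Finite := (Set.finite_Iio m).image _
        rw [heq] at hsub
        exact hinf (hfin.subset hsub)
end

section
/- If an algebraic number α belongs to 𝓕_2, then either all conjugates of α (the complex roots of its minimal polynomial, including α itself) have modulus 1, or α is an expanding algebraic integer (an algebraic integer all of whose conjugates have modulus greater than 1) with |M_α(0)| = 2. -/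
open Polynomial

/-- `α ∈ 𝓕_N`: the minimal cardinality of a finite `S ⊆ ℂ` with `ℤ[α] = S[α]` equals `N`. -/
def memF (α : ℂ) (N : ℕ) : Prop :=
  (∃ S : Finset ℂ, S.card = N ∧ repSet α ↑S = Zadj α) ∧
  ∀ S : Finset ℂ, repSet α ↑S = Zadj α → N ≤ S.card

/-- Gauss-type lemma: a primitive integer polynomial divides (over `ℤ`) any integer
polynomial that it divides over `ℚ`. -/
lemma gaussDvd {M P : ℤ[X]} (hprim : M.IsPrimitive)
    (h : M.map (Int.castRingHom ℚ) ∣ P.map (Int.castRingHom ℚ)) : M ∣ P := by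
  rcases eq_or_ne P 0 with rfl | hP0
  · exact dvd_zero M
  · have hcontZ : P.content ≠ 0 := fun hc => hP0 (Polynomial.content_eq_zero_iff.mp hc)
    have hcont : (P.content : ℚ) ≠ 0 := by exact_mod_cast hcontZ
    have hmapP : P.map (Int.castRingHom ℚ)
        = C (P.content : ℚ) * (P.primPart).map (Int.castRingHom ℚ) := by
      conv_lhs => rw [P.eq_C_content_mul_primPart]
      rw [Polynomial.map_mul, Polynomial.map_C]
      rfl
    have hu : IsUnit (C (P.content : ℚ)) := Polynomial.isUnit_C.mpr (isUnit_iff_ne_zero.mpr hcont)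
    have h1 : M.map (Int.castRingHom ℚ) ∣ (P.primPart).map (Int.castRingHom ℚ) := by
      rw [hmapP] at h
      exact (hu.dvd_mul_left).mp h
    exact ((Polynomial.IsPrimitive.Int.dvd_iff_map_cast_dvd_map_cast M P.primPart hprim
      ).mpr h1).trans P.primPart_dvd

/-- If `z` is a root of the minimal polynomial of `α` over `ℚ` and `P ∈ ℤ[X]` vanishes at `z`,
then the primitive minimal polynomial `M` divides `P` in `ℤ[X]`. -/
lemma rootDvd {α : ℂ} (hα : IsAlgebraic ℚ α) {M : ℤ[X]} (hprim : M.IsPrimitive)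
    {c : ℚ} (hc : c ≠ 0) (hmap : M.map (Int.castRingHom ℚ) = C c * minpoly ℚ α)
    {z : ℂ} (hz : aeval z (minpoly ℚ α) = 0) {P : ℤ[X]} (hP : aeval z P = 0) : M ∣ P := by
  have hint : IsIntegral ℚ α := hα.isIntegral
  have hminz : minpoly ℚ α = minpoly ℚ z :=
    minpoly.eq_of_irreducible_of_monic (minpoly.irreducible hint) hz (minpoly.monic hint)
  have h1 : minpoly ℚ α ∣ P.map (Int.castRingHom ℚ) := by
    rw [hminz]
    apply minpoly.dvd
    rwa [show Int.castRingHom ℚ = algebraMap ℤ ℚ from rfl, aeval_map_algebraMap]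
  apply gaussDvd hprim
  obtain ⟨T, hT⟩ := h1
  refine ⟨C c⁻¹ * T, ?_⟩
  rw [hmap, hT, show C c * minpoly ℚ α * (C c⁻¹ * T) = (C c * C c⁻¹) * (minpoly ℚ α * T) by ring,
    ← C_mul, mul_inv_cancel₀ hc, C_1, one_mul]

/-- Auxiliary: a product of reals that are all `≥ 1` is `≥ 1`. -/
lemma one_le_multiset_prod (s : Multiset ℝ) (h : ∀ x ∈ s, 1 ≤ x) : 1 ≤ s.prod := by
  induction s using Multiset.induction_on with
  | empty => simp
  | cons a t ih =>
    rw [Multiset.prod_cons]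
    have ha : (1 : ℝ) ≤ a := h a (Multiset.mem_cons_self a t)
    have ht : (1 : ℝ) ≤ t.prod := ih fun x hx => h x (Multiset.mem_cons_of_mem hx)
    nlinarith

/-- If an algebraic number `α` belongs to `𝓕₂`, then either all its conjugates have
modulus `1`, or `α` is an expanding algebraic integer with `|M_α(0)| = 2`. -/
theorem memF_two_characterization (α : ℂ) (hα : IsAlgebraic ℚ α)
    (M : ℤ[X]) (hM : IsPrimMinPoly α M) (h2 : memF α 2) :
    (∀ z : ℂ, aeval z M = 0 → ‖z‖ = 1) ∨
    (IsIntegral ℤ α ∧ (∀ z : ℂ, aeval z M = 0 → 1 < ‖z‖) ∧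
      (M.eval 0).natAbs = 2) := by
  obtain ⟨hprim, c, hc, hmap⟩ := hM
  obtain ⟨⟨S, hScard, hSrep⟩, -⟩ := h2
  obtain ⟨a, b, hab, rfl⟩ := Finset.card_eq_two.mp hScard
  -- `aeval z M` in terms of the minimal polynomial
  have haev : ∀ z : ℂ, aeval z M = (c : ℂ) * aeval z (minpoly ℚ α) := by
    intro z
    rw [← aeval_map_algebraMap ℚ z M, show algebraMap ℤ ℚ = Int.castRingHom ℚ from rfl,
      hmap, map_mul, aeval_C, eq_ratCast]
  have hrootiff : ∀ z : ℂ, aeval z M = 0 ↔ aeval z (minpoly ℚ α) = 0 := by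
    intro z
    rw [haev z]
    constructor
    · intro h
      rcases mul_eq_zero.mp h with h | h
      · exact absurd h (by exact_mod_cast hc)
      · exact h
    · intro h; rw [h, mul_zero]
  -- digit polynomials
  have hmemS : ∀ s ∈ ({a, b} : Finset ℂ), ∃ P : ℤ[X], aeval α P = s := by
    intro s hs
    have hmem : s ∈ repSet α (({a, b} : Finset ℂ) : Set ℂ) :=
      ⟨0, fun _ => s, fun j _ => by exact_mod_cast hs, by simp⟩
    rw [hSrep] at hmem
    exact hmem
  obtain ⟨Pa, hPa⟩ := hmemS a (by simp)
  obtain ⟨Pb, hPb⟩ := hmemS b (by simp)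
  set D : ℂ → ℤ[X] := fun s => if s = a then Pa else Pb with hD
  have hDval : ∀ s ∈ ({a, b} : Finset ℂ), aeval α (D s) = s := by
    intro s hs
    rcases Finset.mem_insert.mp hs with rfl | hs
    · simp [hD, hPa]
    · rw [Finset.mem_singleton.mp hs]
      simp only [hD]
      rw [if_neg (Ne.symm hab)]
      exact hPb
  -- every integer has a digit representation
  have hZ : ∀ m : ℤ, ∃ (n : ℕ) (f : ℕ → ℂ),
      (∀ j ≤ n, f j ∈ (({a, b} : Finset ℂ) : Set ℂ)) ∧
      ((m : ℂ)) = ∑ j ∈ Finset.range (n + 1), f j * α ^ j := by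
    intro m
    have hmem : ((m : ℂ)) ∈ Zadj α := ⟨C m, by simp⟩
    rw [← hSrep] at hmem
    exact hmem
  -- Step 1: all roots of M have modulus ≥ 1
  have habs1 : ∀ z : ℂ, aeval z M = 0 → 1 ≤ ‖z‖ := by
    intro z hzM
    by_contra hlt
    push_neg at hlt
    set r : ℝ := ‖z‖ with hr
    have hr0 : 0 ≤ r := norm_nonneg z
    have h1r : 0 < 1 - r := by linarith
    set B : ℝ := max (‖aeval z Pa‖) (‖aeval z Pb‖) with hB
    have hB0 : 0 ≤ B := le_trans (norm_nonneg _) (le_max_left _ _)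
    obtain ⟨m, hm⟩ : ∃ m : ℕ, B / (1 - r) < m := exists_nat_gt _
    obtain ⟨n, f, hf, hsum⟩ := hZ (m : ℤ)
    set G : ℤ[X] := ∑ j ∈ Finset.range (n + 1), D (f j) * X ^ j with hG
    have hGa : aeval α G = ((m : ℤ) : ℂ) := by
      rw [hG, map_sum, hsum]
      refine Finset.sum_congr rfl fun j hj => ?_
      rw [map_mul, map_pow, aeval_X,
        hDval (f j) (Finset.mem_coe.mp (hf j (Nat.lt_succ_iff.mp (Finset.mem_range.mp hj))))]
    have hdvd : M ∣ (C ((m : ℤ)) - G) :=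
      rootDvd hα hprim hc hmap (minpoly.aeval ℚ α) (by rw [map_sub, aeval_C, hGa, eq_intCast, sub_self])
    have hz2 : aeval z (C ((m : ℤ)) - G) = 0 := by
      obtain ⟨Q, hQ⟩ := hdvd
      rw [hQ, map_mul, hzM, zero_mul]
    rw [map_sub, sub_eq_zero, aeval_C] at hz2
    have hmz : ((m : ℤ) : ℂ) = ∑ j ∈ Finset.range (n + 1), aeval z (D (f j)) * z ^ j := by
      rw [eq_intCast] at hz2
      rw [hz2, hG, map_sum]
      refine Finset.sum_congr rfl fun j hj => ?_
      rw [map_mul, map_pow, aeval_X]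
    have hboundj : ∀ j : ℕ, ‖aeval z (D (f j))‖ ≤ B := by
      intro j
      by_cases hfa : f j = a
      · simp only [hD, hfa, if_pos rfl]
        exact le_max_left _ _
      · simp only [hD, if_neg hfa]
        exact le_max_right _ _
    have hgeom : ∑ j ∈ Finset.range (n + 1), r ^ j ≤ 1 / (1 - r) := by
      have hmul := geom_sum_mul r (n + 1)
      have heq : (∑ j ∈ Finset.range (n + 1), r ^ j) * (1 - r) = 1 - r ^ (n + 1) := by
        nlinarith [hmul]
      rw [show (∑ j ∈ Finset.range (n + 1), r ^ j) = (1 - r ^ (n + 1)) / (1 - r) by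
        rw [eq_div_iff (ne_of_gt h1r)]; exact heq]
      have hpow : 0 ≤ r ^ (n + 1) := pow_nonneg hr0 _
      gcongr
      linarith
    have hest : (m : ℝ) ≤ B / (1 - r) := by
      have h1 : (m : ℝ) = ‖((m : ℤ) : ℂ)‖ := by
        rw [Complex.norm_intCast]
        simp
      rw [h1, hmz]
      calc ‖∑ j ∈ Finset.range (n + 1), aeval z (D (f j)) * z ^ j‖
          ≤ ∑ j ∈ Finset.range (n + 1), ‖aeval z (D (f j)) * z ^ j‖ :=
            norm_sum_le _ _
        _ ≤ ∑ j ∈ Finset.range (n + 1), B * r ^ j := by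
            refine Finset.sum_le_sum fun j _ => ?_
            rw [norm_mul, norm_pow]
            exact mul_le_mul (hboundj j) le_rfl (pow_nonneg hr0 _) hB0
        _ = B * ∑ j ∈ Finset.range (n + 1), r ^ j := by rw [Finset.mul_sum]
        _ ≤ B * (1 / (1 - r)) := by
            exact mul_le_mul_of_nonneg_left hgeom hB0
        _ = B / (1 - r) := by ring
    linarith
  -- Step 2: M(0) divides 1 or 2
  have hdecomp : ∀ m : ℕ, ∃ s ∈ ({a, b} : Finset ℂ), ∃ T : ℤ[X],
      ((m : ℂ)) = s + α * aeval α T := by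
    intro m
    obtain ⟨n, f, hf, hsum⟩ := hZ (m : ℕ)
    refine ⟨f 0, Finset.mem_coe.mp (hf 0 (Nat.zero_le n)),
      ∑ j ∈ Finset.range n, D (f (j + 1)) * X ^ j, ?_⟩
    have htail : ∑ j ∈ Finset.range n, f (j + 1) * α ^ (j + 1)
        = α * aeval α (∑ j ∈ Finset.range n, D (f (j + 1)) * X ^ j) := by
      rw [map_sum, Finset.mul_sum]
      refine Finset.sum_congr rfl fun j hj => ?_
      rw [map_mul, map_pow, aeval_X, hDval (f (j + 1))
        (Finset.mem_coe.mp (hf (j + 1) (Nat.succ_le_of_lt (Finset.mem_range.mp hj))))]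
      ring
    have : ((m : ℤ) : ℂ) = (m : ℂ) := by push_cast; ring
    rw [show ((m : ℂ)) = (((m : ℤ)) : ℂ) from by push_cast; ring, hsum,
      Finset.sum_range_succ', htail, pow_zero, mul_one, add_comm]
  obtain ⟨s₀, hs₀, T₀, hT₀⟩ := hdecomp 0
  obtain ⟨s₁, hs₁, T₁, hT₁⟩ := hdecomp 1
  obtain ⟨s₂, hs₂, T₂, hT₂⟩ := hdecomp 2
  have hδex : ∃ δ : ℤ, (δ = 1 ∨ δ = 2) ∧ ∃ T : ℤ[X], ((δ : ℂ)) = α * aeval α T := by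
    norm_num at hT₀ hT₁ hT₂
    by_cases h01 : s₀ = s₁
    · refine ⟨1, Or.inl rfl, T₁ - T₀, ?_⟩
      rw [map_sub]
      push_cast
      linear_combination hT₁ - hT₀ - h01
    · by_cases h12 : s₁ = s₂
      · refine ⟨1, Or.inl rfl, T₂ - T₁, ?_⟩
        rw [map_sub]
        push_cast
        linear_combination hT₂ - hT₁ - h12
      · have h02 : s₀ = s₂ := by
          simp only [Finset.mem_insert, Finset.mem_singleton] at hs₀ hs₁ hs₂
          rcases hs₀ with rfl | rfl <;> rcases hs₁ with rfl | rfl <;>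
            rcases hs₂ with rfl | rfl <;> first | rfl | tauto
        refine ⟨2, Or.inr rfl, T₂ - T₀, ?_⟩
        rw [map_sub]
        push_cast
        linear_combination hT₂ - hT₀ - h02
  obtain ⟨δ, hδval, T, hT⟩ := hδex
  have hMdvdδ : M ∣ (X * T - C δ) := by
    refine rootDvd hα hprim hc hmap (minpoly.aeval ℚ α) ?_
    rw [map_sub, map_mul, aeval_X, aeval_C]
    rw [eq_intCast, sub_eq_zero]
    exact hT.symm
  have hM0dvd : M.eval 0 ∣ δ := by
    obtain ⟨Q, hQ⟩ := hMdvdδ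
    have h0 := congrArg (eval 0) hQ
    simp only [eval_sub, eval_mul, eval_X, eval_C, zero_mul, zero_sub] at h0
    exact ⟨-Q.eval 0, by linarith [h0]⟩
  have hM0 : (M.eval 0).natAbs = 1 ∨ (M.eval 0).natAbs = 2 := by
    have h := Int.natAbs_dvd_natAbs.mpr hM0dvd
    rcases hδval with rfl | rfl
    · left; exact Nat.dvd_one.mp (by simpa using h)
    · have h2' : (M.eval 0).natAbs ∣ 2 := by simpa using h
      have hle := Nat.le_of_dvd (by norm_num) h2'
      have hne : (M.eval 0).natAbs ≠ 0 := by
        intro h0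
        rw [h0] at h2'
        norm_num at h2'
      omega
  -- Setup: roots of M over ℂ
  have hM0ne : M.eval 0 ≠ 0 := by
    intro h
    rw [h] at hM0
    simp at hM0
  have hMne : M ≠ 0 := fun h => hM0ne (by rw [h]; simp)
  set Mc : ℂ[X] := M.map (Int.castRingHom ℂ) with hMc
  have hinj : Function.Injective (Int.castRingHom ℂ) := fun x y h => Int.cast_injective h
  have hMcne : Mc ≠ 0 := by
    rw [hMc]
    exact (Polynomial.map_ne_zero_iff hinj).mpr hMne
  have haevMc : ∀ z : ℂ, aeval z M = Mc.eval z := by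
    intro z
    rw [hMc, eval_map, aeval_def]
    rfl
  have hrootsmem : ∀ z : ℂ, aeval z M = 0 ↔ z ∈ Mc.roots := by
    intro z
    rw [mem_roots hMcne, IsRoot, ← haevMc]
  have hsplit : Mc = C Mc.leadingCoeff * (Mc.roots.map fun r => X - C r).prod :=
    (IsAlgClosed.splits Mc).eq_prod_roots
  have heval0 : ‖Mc.eval 0‖ = ((M.eval 0).natAbs : ℝ) := by
    have h1 : Mc.eval 0 = ((M.eval 0 : ℤ) : ℂ) := by
      rw [hMc, eval_map, eval₂_at_zero, coeff_zero_eq_eval_zero]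
      rfl
    rw [h1, Complex.norm_intCast, Nat.cast_natAbs, Int.cast_abs]
  have hleadMc : Mc.leadingCoeff = ((M.leadingCoeff : ℤ) : ℂ) := by
    rw [hMc, leadingCoeff_map_of_injective hinj]
    rfl
  have hprodabs : ((M.eval 0).natAbs : ℝ)
      = ((M.leadingCoeff.natAbs : ℝ)) * ((Mc.roots.map norm).prod) := by
    rw [← heval0]
    conv_lhs => rw [hsplit]
    rw [eval_mul, eval_C, norm_mul, hleadMc, Complex.norm_intCast, Nat.cast_natAbs,
      Int.cast_abs]
    congr 1
    rw [eval_multiset_prod, Multiset.map_map, (fun s : Multiset ℂ => (show ‖s.prod‖ = (s.map norm).prod from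
      Multiset.induction_on s (by simp) fun a t ih => by
        rw [Multiset.prod_cons, norm_mul, ih, Multiset.map_cons, Multiset.prod_cons])), Multiset.map_map]
    congr 1
    refine Multiset.map_congr rfl fun r _ => ?_
    simp only [Function.comp_apply, eval_sub, eval_X, eval_C, zero_sub, norm_neg]
  have hlead1 : 1 ≤ M.leadingCoeff.natAbs := by
    rw [Nat.one_le_iff_ne_zero, Ne, Int.natAbs_eq_zero, leadingCoeff_eq_zero]
    exact hMne
  have hroots1 : ∀ x ∈ Mc.roots.map norm, (1 : ℝ) ≤ x := by
    intro x hx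
    obtain ⟨r, hrmem, rfl⟩ := Multiset.mem_map.mp hx
    exact habs1 r ((hrootsmem r).mpr hrmem)
  -- Main case split
  by_cases hall : ∀ z : ℂ, aeval z M = 0 → ‖z‖ = 1
  · exact Or.inl hall
  right
  push_neg at hall
  obtain ⟨z₀, hz₀M, hz₀ne⟩ := hall
  have hz₀gt : 1 < ‖z₀‖ := lt_of_le_of_ne (habs1 z₀ hz₀M) (Ne.symm hz₀ne)
  have hprodgt : 1 < (Mc.roots.map norm).prod := by
    obtain ⟨t, ht⟩ := Multiset.exists_cons_of_mem
      (Multiset.mem_map_of_mem norm ((hrootsmem z₀).mp hz₀M))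
    have ht1 : (1 : ℝ) ≤ t.prod := by
      apply one_le_multiset_prod
      intro x hx
      exact hroots1 x (by rw [ht]; exact Multiset.mem_cons_of_mem hx)
    rw [ht, Multiset.prod_cons]
    calc (1 : ℝ) < ‖z₀‖ := hz₀gt
      _ = ‖z₀‖ * 1 := by ring
      _ ≤ ‖z₀‖ * t.prod :=
        mul_le_mul_of_nonneg_left ht1 (norm_nonneg z₀)
  have h2' : (M.eval 0).natAbs = 2 := by
    rcases hM0 with h1 | h2
    · exfalso
      rw [h1] at hprodabs
      norm_num at hprodabs
      have hge : (1 : ℝ) ≤ ((M.leadingCoeff.natAbs : ℝ)) := by exact_mod_cast hlead1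
      have hLpos : (0 : ℝ) < ((M.leadingCoeff.natAbs : ℝ)) := by linarith
      have hmul := mul_lt_mul_of_pos_left hprodgt hLpos
      rw [mul_one] at hmul
      rw [Nat.cast_natAbs, Int.cast_abs] at hmul hge
      linarith
    · exact h2
  have hlead : M.leadingCoeff.natAbs = 1 := by
    by_contra hne
    have h2le : 2 ≤ M.leadingCoeff.natAbs := by omega
    rw [h2'] at hprodabs
    norm_num at hprodabs
    have hge : (2 : ℝ) ≤ ((M.leadingCoeff.natAbs : ℝ)) := by exact_mod_cast h2le
    have hLpos : (0 : ℝ) < ((M.leadingCoeff.natAbs : ℝ)) := by linarith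
    have hmul := mul_lt_mul_of_pos_left hprodgt hLpos
    rw [mul_one] at hmul
    rw [Nat.cast_natAbs, Int.cast_abs] at hmul hge
    linarith
  have hMα : aeval α M = 0 := (hrootiff α).mpr (minpoly.aeval ℚ α)
  refine ⟨?_, ?_, h2'⟩
  · -- α is an algebraic integer
    rcases Int.natAbs_eq_iff.mp hlead with hl | hl
    · exact ⟨M, hl, hMα⟩
    · refine ⟨-M, ?_, ?_⟩
      · have : (-M).leadingCoeff = -M.leadingCoeff := leadingCoeff_neg M
        rw [Monic, this, hl]
        norm_num
      · show aeval α (-M) = 0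
        rw [map_neg, hMα, neg_zero]
  · -- all roots have modulus > 1
    intro z hzM
    rcases lt_or_eq_of_le (habs1 z hzM) with h | h
    · exact h
    exfalso
    have habsz : ‖z‖ = 1 := h.symm
    have hzne0 : z ≠ 0 := by
      intro h0
      rw [h0] at habsz
      simp at habsz
    -- the complex conjugate of z is also a root of M
    have hconj : aeval (starRingEnd ℂ z) M = 0 := by
      have hcomm : aeval (starRingEnd ℂ z) M = starRingEnd ℂ (aeval z M) := by
        simp only [aeval_def, eval₂_eq_sum_range, map_sum, map_mul, map_pow, eq_intCast,
          map_intCast]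
      rw [hcomm, hzM, map_zero]
    have hzinv : z * starRingEnd ℂ z = 1 := by
      rw [Complex.mul_conj, ← Complex.sq_norm, habsz]
      norm_num
    -- the reverse polynomial vanishes at z
    have hrev : aeval z M.reverse = 0 := by
      letI : Invertible (starRingEnd ℂ z) := ⟨z, hzinv, by rw [mul_comm]; exact hzinv⟩
      have hiv : (⅟(starRingEnd ℂ z) : ℂ) = z := rfl
      have hmain := (eval₂_reverse_eq_zero_iff (algebraMap ℤ ℂ) (starRingEnd ℂ z) M).mpr
        (by rw [← aeval_def]; exact hconj)
      rw [hiv, ← aeval_def] at hmain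
      exact hmain
    have hzmin : aeval z (minpoly ℚ α) = 0 := (hrootiff z).mp hzM
    have hdvdrev : M ∣ M.reverse := rootDvd hα hprim hc hmap hzmin hrev
    obtain ⟨Q, hQ⟩ := hdvdrev
    have hc0 := congrArg (fun p : ℤ[X] => p.coeff 0) hQ
    simp only [coeff_zero_reverse, mul_coeff_zero] at hc0
    have hnat := congrArg Int.natAbs hc0
    rw [Int.natAbs_mul, hlead, coeff_zero_eq_eval_zero, h2'] at hnat
    omega
end

section
/- Let α be an algebraic number with |M_α(1)| = 1. Then α ∉ 𝓕_{|M_α(0)|}; in particular, there is no finite set S ⊆ ℂ with Card(S) = |M_α(0)| and ℤ[α] = S[α]. -/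
open Polynomial

open Classical in
/-- Auxiliary "constant coefficient mod m" map. -/
noncomputable def PhiAux (α : ℂ) (m : ℕ) (z : ℂ) : ZMod m :=
  if h : ∃ P : ℤ[X], aeval α P = z then ((h.choose.eval 0 : ℤ) : ZMod m) else 0

theorem PhiAux_aeval (α : ℂ) (m : ℕ)
    (hkey : ∀ P : ℤ[X], aeval α P = 0 → ((P.eval 0 : ℤ) : ZMod m) = 0)
    (P : ℤ[X]) : PhiAux α m (aeval α P) = ((P.eval 0 : ℤ) : ZMod m) := by
  unfold PhiAux
  split
  next h =>
    have h2 : aeval α (h.choose - P) = 0 := by rw [map_sub, h.choose_spec, sub_self]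
    have h3 := hkey _ h2
    rw [eval_sub] at h3
    push_cast at h3
    linear_combination h3
  next h => exact absurd ⟨P, rfl⟩ h

/-- Let `α` be an algebraic number with `|M_α(1)| = 1`.  Then `α ∉ 𝓕_{|M_α(0)|}`;
in particular no finite `S ⊆ ℂ` with `Card(S) = |M_α(0)|` satisfies `ℤ[α] = S[α]`. -/
theorem not_memF_of_abs_eval_one_eq_one (α : ℂ) (hα : IsAlgebraic ℚ α)
    (M : ℤ[X]) (hM : IsPrimMinPoly α M) (h1 : (M.eval 1).natAbs = 1) :
    ¬ memF α (M.eval 0).natAbs ∧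
    ∀ S : Finset ℂ, S.card = (M.eval 0).natAbs → repSet α ↑S ≠ Zadj α := by
  set m : ℕ := (M.eval 0).natAbs with hmdef
  obtain ⟨hprim, c, hc, hMc⟩ := hM
  have hint : IsIntegral ℚ α := hα.isIntegral
  -- M vanishes at α
  have hMα : aeval α M = 0 := by
    have h2 : aeval α (M.map (Int.castRingHom ℚ)) = 0 := by
      rw [hMc, map_mul, aeval_C, minpoly.aeval ℚ α, mul_zero]
    rwa [← algebraMap_int_eq, aeval_map_algebraMap] at h2
  -- key divisibility: any integer polynomial vanishing at α is divisible by M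
  have hdvd : ∀ P : ℤ[X], aeval α P = 0 → M ∣ P := by
    intro P hP
    rcases eq_or_ne P 0 with rfl | hP0
    · exact dvd_zero M
    have hdeg : 0 < (minpoly ℚ α).natDegree := minpoly.natDegree_pos hint
    have hmd : minpoly ℚ α ∣ P.map (Int.castRingHom ℚ) := by
      apply minpoly.dvd
      rwa [← algebraMap_int_eq, aeval_map_algebraMap]
    have hassoc : Associated (minpoly ℚ α) (M.map (Int.castRingHom ℚ)) := by
      rw [hMc]
      exact ⟨(isUnit_C.mpr hc.isUnit).unit, by rw [IsUnit.unit_spec]; ring⟩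
    have hMdvdP : M.map (Int.castRingHom ℚ) ∣ P.map (Int.castRingHom ℚ) :=
      (hassoc.symm.dvd).trans hmd
    have hMirr : Irreducible (M.map (Int.castRingHom ℚ)) :=
      hassoc.irreducible (minpoly.irreducible hint)
    have hMprime : Prime (M.map (Int.castRingHom ℚ)) := hMirr.prime
    have hPdecomp : P.map (Int.castRingHom ℚ)
        = C ((P.content : ℚ)) * (P.primPart.map (Int.castRingHom ℚ)) := by
      conv_lhs => rw [P.eq_C_content_mul_primPart]
      rw [Polynomial.map_mul, map_C]
      norm_num
    rw [hPdecomp] at hMdvdP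
    rcases hMprime.2.2 _ _ hMdvdP with hcon | hgood
    · exfalso
      have hd0 : ((P.content : ℚ)) ≠ 0 := by
        simp only [ne_eq, Int.cast_eq_zero, content_eq_zero_iff]
        exact hP0
      have hle : (M.map (Int.castRingHom ℚ)).natDegree ≤ 0 := by
        have := natDegree_le_of_dvd hcon (fun h => hd0 (C_eq_zero.mp h))
        simpa using this
      have hMmap0 : M.map (Int.castRingHom ℚ) ≠ 0 := by
        rw [hMc]
        exact mul_ne_zero (by simpa [C_eq_zero] using hc) (minpoly.ne_zero hint)
      have hge : (minpoly ℚ α).natDegree ≤ (M.map (Int.castRingHom ℚ)).natDegree :=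
        natDegree_le_of_dvd hassoc.dvd hMmap0
      omega
    · have : M ∣ P.primPart :=
        (IsPrimitive.Int.dvd_iff_map_cast_dvd_map_cast _ _ hprim).mpr hgood
      exact this.trans P.primPart_dvd
  -- the constant coefficient of `M` is `0` mod `m`
  have castM0 : ((M.eval 0 : ℤ) : ZMod m) = 0 := by
    have hmm : ((m : ℤ) : ZMod m) = 0 := by exact_mod_cast ZMod.natCast_self m
    rcases Int.natAbs_eq (M.eval 0) with h | h
    · rw [h]; exact hmm
    · rw [h, Int.cast_neg, hmm, neg_zero]
  have hkey : ∀ P : ℤ[X], aeval α P = 0 → ((P.eval 0 : ℤ) : ZMod m) = 0 := by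
    intro P hP
    obtain ⟨R, hR⟩ := hdvd P hP
    have : P.eval 0 = M.eval 0 * R.eval 0 := by rw [hR, eval_mul]
    rw [this]
    push_cast
    rw [castM0, zero_mul]
  have hPhi := PhiAux_aeval α m hkey
  -- main claim: no S of cardinality m works
  have main : ∀ S : Finset ℂ, S.card = m → repSet α ↑S ≠ Zadj α := by
    intro S hcard hS
    have hSsub : ∀ s ∈ S, ∃ P : ℤ[X], aeval α P = s := by
      intro s hs
      have : s ∈ repSet α ↑S := ⟨0, fun _ => s, fun j _ => hs, by simp⟩
      rw [hS] at this
      exact this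
    -- the first digit determines Phi
    have hfirst : ∀ (n : ℕ) (f : ℕ → ℂ), (∀ j ≤ n, f j ∈ (S : Set ℂ)) →
        PhiAux α m (∑ j ∈ Finset.range (n + 1), f j * α ^ j) = PhiAux α m (f 0) := by
      intro n f hf
      have hex : ∀ j, ∃ P : ℤ[X], aeval α P = (if j ≤ n then f j else 0) := by
        intro j
        by_cases hj : j ≤ n
        · simp only [if_pos hj]; exact hSsub (f j) (hf j hj)
        · simp only [if_neg hj]; exact ⟨0, by simp⟩
      choose P hP using hex
      have hPj : ∀ j ≤ n, aeval α (P j) = f j := fun j hj => by rw [hP j, if_pos hj]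
      have hsum : aeval α (∑ j ∈ Finset.range (n + 1), P j * X ^ j)
          = ∑ j ∈ Finset.range (n + 1), f j * α ^ j := by
        rw [map_sum]
        refine Finset.sum_congr rfl fun j hj => ?_
        rw [map_mul, map_pow, aeval_X, hPj j (Finset.mem_range_succ_iff.mp hj)]
      rw [← hsum, hPhi]
      have heval : (∑ j ∈ Finset.range (n + 1), P j * X ^ j).eval 0 = (P 0).eval 0 := by
        rw [eval_finset_sum, Finset.sum_eq_single 0]
        · simp
        · intro j hj hj0; simp [zero_pow hj0]
        · intro h; exact absurd (Finset.mem_range.mpr (Nat.succ_pos n)) h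
      rw [heval, ← hPhi (P 0), hPj 0 (Nat.zero_le n)]
    by_cases hex : ∃ s ∈ S, s ≠ 0
    · obtain ⟨s, hsS, hs0⟩ := hex
      have hm0 : m ≠ 0 := by
        rw [← hcard]
        exact Finset.card_ne_zero_of_mem hsS
      haveI : NeZero m := ⟨hm0⟩
      have hα0 : α ≠ 0 := by
        intro h
        have h2 := hMα
        rw [h, aeval_def, eval₂_at_zero, coeff_zero_eq_eval_zero] at h2
        simp only [algebraMap_int_eq, eq_intCast] at h2
        have : (M.eval 0 : ℤ) = 0 := by exact_mod_cast h2
        apply hm0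
        rw [hmdef, this]
        rfl
      -- surjectivity of Phi restricted to S
      have hsurj : ∀ r : ZMod m, ∃ t ∈ S, PhiAux α m t = r := by
        intro r
        obtain ⟨a, ha⟩ := ZMod.intCast_surjective r
        have hz : ((a : ℂ)) ∈ repSet α ↑S := by
          rw [hS]
          exact ⟨C a, by simp⟩
        obtain ⟨n, f, hf, hrep⟩ := hz
        refine ⟨f 0, hf 0 (Nat.zero_le n), ?_⟩
        have h2 := hfirst n f hf
        rw [← hrep] at h2
        have h3 : PhiAux α m ((a : ℂ)) = ((a : ℤ) : ZMod m) := by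
          have := hPhi (C a)
          simpa using this
        rw [← h2, h3, ha]
      -- injectivity of Phi restricted to S
      have hinj : ∀ s₁ ∈ S, ∀ s₂ ∈ S, PhiAux α m s₁ = PhiAux α m s₂ → s₁ = s₂ := by
        have hψsurj : Function.Surjective (fun x : {x // x ∈ S} => PhiAux α m x.1) := by
          intro r
          obtain ⟨t, ht, h⟩ := hsurj r
          exact ⟨⟨t, ht⟩, h⟩
        have hcards : Fintype.card {x // x ∈ S} = Fintype.card (ZMod m) := by
          rw [Fintype.card_coe, hcard, ZMod.card]
        have hbij : Function.Bijective (fun x : {x // x ∈ S} => PhiAux α m x.1) :=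
          (Fintype.bijective_iff_surjective_and_card _).mpr ⟨hψsurj, hcards⟩
        intro s₁ h₁ s₂ h₂ h
        have := hbij.1 (a₁ := ⟨s₁, h₁⟩) (a₂ := ⟨s₂, h₂⟩) h
        exact congrArg Subtype.val this
      -- the unit (1 - α)⁻¹
      obtain ⟨Q, hQ⟩ := X_sub_C_dvd_sub_C_eval (a := (1 : ℤ)) (p := M)
      have hε : M.eval 1 = 1 ∨ M.eval 1 = -1 := Int.natAbs_eq_iff.mp h1
      have hεint : M.eval 1 * M.eval 1 = 1 := by rcases hε with h | h <;> rw [h] <;> norm_num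
      have hQα : (1 - α) * aeval α Q = ((M.eval 1 : ℤ) : ℂ) := by
        have h2 := congrArg (aeval α) hQ
        rw [map_sub, map_mul, map_sub, aeval_X, aeval_C, aeval_C, hMα] at h2
        simp only [algebraMap_int_eq, eq_intCast] at h2
        linear_combination h2
      have hε2 : ((M.eval 1 : ℤ) : ℂ) * ((M.eval 1 : ℤ) : ℂ) = 1 := by
        exact_mod_cast congrArg (fun t : ℤ => (t : ℂ)) hεint
      obtain ⟨Ps, hPs⟩ := hSsub s hsS
      set z : ℂ := ((M.eval 1 : ℤ) : ℂ) * aeval α Q * s with hzdef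
      have hz1 : (1 - α) * z = s := by
        rw [hzdef]
        linear_combination (((M.eval 1 : ℤ) : ℂ) * s) * hQα + s * hε2
      -- Phi z = Phi s
      have hQ0 : ((Q.eval 0 : ℤ) : ZMod m) = ((M.eval 1 : ℤ) : ZMod m) := by
        have h0 := congrArg (eval 0) hQ
        simp only [eval_sub, eval_mul, eval_X, eval_C] at h0
        have h0' := congrArg (fun t : ℤ => (t : ZMod m)) h0
        push_cast at h0'
        linear_combination h0' - castM0
      have hzZ : z = aeval α (C (M.eval 1) * Q * Ps) := by
        rw [map_mul, map_mul, aeval_C, hPs]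
        simp only [algebraMap_int_eq, eq_intCast]
        exact hzdef
      have hΦz : PhiAux α m z = PhiAux α m s := by
        rw [hzZ, hPhi, ← hPs, hPhi]
        simp only [eval_mul, eval_C]
        push_cast
        rw [hQ0]
        have h5 : ((M.eval 1 : ℤ) : ZMod m) * ((M.eval 1 : ℤ) : ZMod m) = 1 := by
          exact_mod_cast congrArg (fun t : ℤ => (t : ZMod m)) hεint
        linear_combination ((Ps.eval 0 : ℤ) : ZMod m) * h5
      -- descent: z has no finite representation
      have descent : ∀ (n : ℕ) (f : ℕ → ℂ), (∀ j ≤ n, f j ∈ (S : Set ℂ)) →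
          z = ∑ j ∈ Finset.range (n + 1), f j * α ^ j → False := by
        intro n
        induction n with
        | zero =>
          intro f hf hrep
          have hrep' : z = f 0 := by simpa using hrep
          have hf0 : f 0 = s := by
            apply hinj _ (hf 0 le_rfl) _ hsS
            rw [← hrep']
            exact hΦz
          have hzs : z = s := hrep'.trans hf0
          have hαz : α * z = 0 := by linear_combination hzs - hz1
          have hz0 : z = 0 := by
            rcases mul_eq_zero.mp hαz with h | h
            · exact absurd h hα0
            · exact h
          apply hs0
          rw [← hz1, hz0, mul_zero]
        | succ k ih =>
          intro f hf hrep
          have hf0 : f 0 = s := by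
            apply hinj _ (hf 0 (Nat.zero_le _)) _ hsS
            have h2 := hfirst (k + 1) f hf
            rw [← hrep] at h2
            exact h2.symm.trans hΦz
          have hsplit : ∑ j ∈ Finset.range (k + 2), f j * α ^ j
              = (∑ j ∈ Finset.range (k + 1), f (j + 1) * α ^ (j + 1)) + f 0 * α ^ 0 :=
            Finset.sum_range_succ' _ _
          have hsum2 : ∑ j ∈ Finset.range (k + 1), f (j + 1) * α ^ (j + 1)
              = α * ∑ j ∈ Finset.range (k + 1), f (j + 1) * α ^ j := by
            rw [Finset.mul_sum]
            exact Finset.sum_congr rfl fun j _ => by ring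
          have h3 : z = α * (∑ j ∈ Finset.range (k + 1), f (j + 1) * α ^ j) + s := by
            rw [hrep, hsplit, hsum2, hf0, pow_zero, mul_one]
          have h4 : α * (∑ j ∈ Finset.range (k + 1), f (j + 1) * α ^ j) = α * z := by
            linear_combination hz1 - h3
          have h5 : z = ∑ j ∈ Finset.range (k + 1), f (j + 1) * α ^ j :=
            (mul_left_cancel₀ hα0 h4).symm
          exact ih (fun j => f (j + 1)) (fun j hj => hf (j + 1) (Nat.succ_le_succ hj)) h5
      have hzrep : z ∈ repSet α ↑S := by
        rw [hS]
        exact ⟨C (M.eval 1) * Q * Ps, hzZ.symm⟩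
      obtain ⟨n, f, hf, hrep⟩ := hzrep
      exact descent n f hf hrep
    · push_neg at hex
      have h1Z : (1 : ℂ) ∈ repSet α ↑S := by
        rw [hS]
        exact ⟨1, by simp⟩
      obtain ⟨n, f, hf, hrep⟩ := h1Z
      have : (1 : ℂ) = 0 := by
        rw [hrep]
        apply Finset.sum_eq_zero
        intro j hj
        rw [hex (f j) (hf j (Finset.mem_range_succ_iff.mp hj)), zero_mul]
      exact one_ne_zero this
  refine ⟨fun hmem => ?_, main⟩
  obtain ⟨⟨S, hcard, hS⟩, -⟩ := hmem
  exact main S hcard hS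
end

section
/- Let α be an algebraic number all of whose conjugates (the complex roots of its minimal polynomial, including α itself) have modulus 1. Then there is no set S ⊆ ℤ with Card(S) = |M_α(0)| and ℤ[α] = S[α]. Consequently, if the minimal cardinality of a finite set S ⊆ ℂ with ℤ[α] = S[α] equals |M_α(0)|, then any such minimal set is not contained in ℤ. -/
open Polynomial

/-- string polynomial -/
noncomputable def SP (s : ℕ → ℤ) (L : ℕ) : ℤ[X] := ∑ j ∈ Finset.range L, C (s j) * X ^ j

lemma SP_aeval (α : ℂ) (s : ℕ → ℤ) (L : ℕ) :
    aeval α (SP s L) = ∑ j ∈ Finset.range L, (s j : ℂ) * α ^ j := by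
  rw [SP, map_sum]
  refine Finset.sum_congr rfl fun j _ => ?_
  rw [map_mul, aeval_C, map_pow, aeval_X]
  norm_num

lemma SP_eval0 (s : ℕ → ℤ) (L : ℕ) (hL : 1 ≤ L) : (SP s L).eval 0 = s 0 := by
  rw [SP, eval_finset_sum, Finset.sum_eq_single 0]
  · simp
  · intro j _ hj; simp [zero_pow hj]
  · intro h; exact absurd (Finset.mem_range.mpr hL) h

theorem no_int_digit_core (α : ℂ) (hα : IsAlgebraic ℚ α) (M : ℤ[X]) (hM : IsPrimMinPoly α M)
    (hconj : ∀ z : ℂ, aeval z M = 0 → ‖z‖ = 1) :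
    ¬ ∃ S : Finset ℤ, S.card = (M.eval 0).natAbs ∧
      repSet α ((fun m : ℤ => (m : ℂ)) '' ↑S) = Zadj α := by
  rintro ⟨S, hcard, hrep⟩
  obtain ⟨hprim, c, hc, hmap⟩ := hM
  have hcast : Int.castRingHom ℚ = algebraMap ℤ ℚ := rfl
  rw [hcast] at hmap
  -- α is a root of M
  have hroot : aeval α M = 0 := by
    have h1 : (aeval α) (M.map (algebraMap ℤ ℚ)) = aeval α M := by
      rw [aeval_map_algebraMap]
    rw [← h1, hmap]
    simp [minpoly.aeval ℚ α]
  have habs : ‖α‖ = 1 := hconj α hroot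
  have hne : α ≠ 0 := by intro h; rw [h] at habs; simp at habs
  -- M.eval 0 ≠ 0
  have ha₀ : M.eval 0 ≠ 0 := by
    intro h0
    have : aeval (0 : ℂ) M = 0 := by
      rw [aeval_def, eval₂_at_zero, coeff_zero_eq_eval_zero, h0]
      simp
    have := hconj 0 this
    simp at this
  set a₀ : ℤ := M.eval 0 with ha₀def
  -- kernel lemma
  have hker : ∀ W : ℤ[X], aeval α W = 0 → M ∣ W := by
    intro W hW
    by_cases hW0 : W = 0
    · simp [hW0]
    have h1 : aeval α (W.map (algebraMap ℤ ℚ)) = 0 := by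
      rw [aeval_map_algebraMap]; exact hW
    have h2 : minpoly ℚ α ∣ W.map (algebraMap ℤ ℚ) := minpoly.dvd ℚ α h1
    have h3 : M.map (algebraMap ℤ ℚ) ∣ W.map (algebraMap ℤ ℚ) := by
      obtain ⟨Q, hQ⟩ := h2
      refine ⟨C c⁻¹ * Q, ?_⟩
      rw [hmap, hQ, mul_comm (C c) (minpoly ℚ α), mul_assoc, ← mul_assoc (C c), ← C_mul,
        mul_inv_cancel₀ hc, C_1, one_mul]
    have h4 : M.map (algebraMap ℤ ℚ) ∣ (W.primPart).map (algebraMap ℤ ℚ) := by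
      have hEq : W.map (algebraMap ℤ ℚ)
          = C ((W.content : ℚ)) * (W.primPart).map (algebraMap ℤ ℚ) := by
        conv_lhs => rw [W.eq_C_content_mul_primPart]
        rw [Polynomial.map_mul, map_C]
        rfl
      rw [hEq] at h3
      have hcont : ((W.content : ℚ)) ≠ 0 := by
        simp only [ne_eq, Int.cast_eq_zero]
        exact fun h => hW0 (content_eq_zero_iff.mp h)
      exact (IsUnit.dvd_mul_left (isUnit_C.mpr (isUnit_iff_ne_zero.mpr hcont))).mp h3
    exact (hprim.dvd_of_fraction_map_dvd_fraction_map h4).trans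
      W.primPart_dvd
  -- residue congruence between two witnesses
  have hker2 : ∀ W W' : ℤ[X], aeval α W = aeval α W' → a₀ ∣ (W.eval 0 - W'.eval 0) := by
    intro W W' h
    have : aeval α (W - W') = 0 := by rw [map_sub, h, sub_self]
    have := hker _ this
    have := eval_dvd (x := (0:ℤ)) this
    rwa [eval_sub] at this
  -- res function with spec
  have hresE : ∀ z : ℂ, ∃ r : ℤ, ∀ W : ℤ[X], aeval α W = z → a₀ ∣ (r - W.eval 0) := by
    intro z
    by_cases h : z ∈ Zadj α
    · obtain ⟨W₀, hW₀⟩ := h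
      exact ⟨W₀.eval 0, fun W hW => hker2 W₀ W (by rw [hW₀, hW])⟩
    · exact ⟨0, fun W hW => absurd ⟨W, hW⟩ h⟩
  choose res hres using hresE
  -- every element of Zadj has integer digits
  have hdig : ∀ z : ℂ, z ∈ Zadj α → ∃ (L : ℕ) (s : ℕ → ℤ), 1 ≤ L ∧ (∀ j, j < L → s j ∈ S) ∧
      z = ∑ j ∈ Finset.range L, (s j : ℂ) * α ^ j := by
    intro z hz
    rw [← hrep] at hz
    obtain ⟨n, f, hf, hsum⟩ := hz
    have hch : ∀ j : ℕ, ∃ m : ℤ, (j ≤ n → (m ∈ S ∧ (m : ℂ) = f j)) := by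
      intro j
      by_cases hj : j ≤ n
      · obtain ⟨m, hmS, hme⟩ := hf j hj
        exact ⟨m, fun _ => ⟨hmS, hme⟩⟩
      · exact ⟨0, fun h => absurd h hj⟩
    choose s hs using hch
    refine ⟨n + 1, s, by omega, fun j hj => (hs j (by omega)).1, ?_⟩
    rw [hsum]
    refine Finset.sum_congr rfl fun j hj => ?_
    rw [(hs j (by have := Finset.mem_range.mp hj; omega)).2]
  -- integer membership in Zadj
  have hintZ : ∀ q : ℤ, (q : ℂ) ∈ Zadj α := fun q => ⟨C q, by rw [aeval_C]; rfl⟩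
  -- CRS: surjectivity
  have hsurj : ∀ t : ℤ, ∃ s ∈ S, a₀ ∣ (s - t) := by
    intro t
    obtain ⟨L, s, hL, hsS, hsum⟩ := hdig _ (hintZ t)
    refine ⟨s 0, hsS 0 hL, ?_⟩
    have h1 : aeval α (SP s L) = aeval α (C t) := by
      rw [SP_aeval, aeval_C, ← hsum]; rfl
    have := hker2 _ _ h1
    rwa [SP_eval0 s L hL, eval_C] at this
  -- CRS: uniqueness through cardinality
  set N : ℕ := a₀.natAbs with hNdef
  have hN0 : N ≠ 0 := Int.natAbs_ne_zero.mpr ha₀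
  haveI : NeZero N := ⟨hN0⟩
  have hdvd_iff : ∀ x y : ℤ, a₀ ∣ (x - y) ↔ ((x : ZMod N) = (y : ZMod N)) := by
    intro x y
    rw [ZMod.intCast_eq_intCast_iff, Int.modEq_iff_dvd]
    constructor
    · intro h; exact Int.natAbs_dvd.mpr (dvd_sub_comm.mp h)
    · intro h; exact dvd_sub_comm.mp (Int.natAbs_dvd.mp h)
  have hCRS : ∀ t : ℤ, ∃ s : ℤ, (s ∈ S ∧ a₀ ∣ (s - t)) ∧
      (∀ s', s' ∈ S → a₀ ∣ (s' - t) → s' = s) := by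
    have hfsurj : Function.Surjective (fun x : {x // x ∈ S} => ((x.1 : ℤ) : ZMod N)) := by
      intro cls
      obtain ⟨t, rfl⟩ := ZMod.intCast_surjective cls
      obtain ⟨s, hsS, hdvd⟩ := hsurj t
      exact ⟨⟨s, hsS⟩, (hdvd_iff s t).mp hdvd⟩
    have hbij : Function.Bijective (fun x : {x // x ∈ S} => ((x.1 : ℤ) : ZMod N)) := by
      rw [Fintype.bijective_iff_surjective_and_card]
      refine ⟨hfsurj, ?_⟩
      rw [Fintype.card_coe, hcard, ZMod.card]
    intro t
    obtain ⟨s, hsS, hdvd⟩ := hsurj t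
    refine ⟨s, ⟨hsS, hdvd⟩, ?_⟩
    intro s' hs'S hdvd'
    have h1 : ((⟨s', hs'S⟩ : {x // x ∈ S}) : {x // x ∈ S}).1 = s' := rfl
    have heq : ((s' : ℤ) : ZMod N) = ((s : ℤ) : ZMod N) := by
      rw [(hdvd_iff s' t).mp hdvd', ← (hdvd_iff s t).mp hdvd]
    have := hbij.1 (a₁ := ⟨s', hs'S⟩) (a₂ := ⟨s, hsS⟩) heq
    exact congrArg Subtype.val this
  choose pick hpick huniq using hCRS
  -- division lemma
  have hdiv : ∀ z : ℂ, z ∈ Zadj α → ∀ d : ℤ, a₀ ∣ (res z - d) →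
      (z - (d : ℂ)) / α ∈ Zadj α := by
    intro z hz d hd
    obtain ⟨W, hW⟩ := hz
    have h1 : a₀ ∣ (res z - W.eval 0) := hres z W hW
    have h2 : a₀ ∣ (W.eval 0 - d) := by
      have h3 := dvd_sub h1 hd
      have h4 : (res z - W.eval 0) - (res z - d) = d - W.eval 0 := by ring
      rw [h4] at h3
      exact dvd_sub_comm.mp h3
    obtain ⟨t, ht⟩ := h2
    set P : ℤ[X] := W - C d - C t * M with hPdef
    have hP0 : P.eval 0 = 0 := by
      rw [hPdef]
      simp only [eval_sub, eval_mul, eval_C]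
      rw [← ha₀def]
      linear_combination ht
    have hXdvd : X ∣ P := by
      rw [X_dvd_iff, coeff_zero_eq_eval_zero]
      exact hP0
    obtain ⟨V, hV⟩ := hXdvd
    refine ⟨V, ?_⟩
    have hPa : aeval α P = z - (d : ℂ) := by
      rw [hPdef]
      simp only [map_sub, map_mul, aeval_C, hroot, mul_zero, hW]
      simp
    have : α * aeval α V = z - (d : ℂ) := by
      rw [← hPa, hV, map_mul, aeval_X]
    field_simp
    linear_combination this
  -- the orbit of 0
  let o : ℕ → ℂ := fun n => Nat.rec (0:ℂ) (fun _ ih => (ih - ((pick (res ih) : ℤ) : ℂ)) / α) n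
  have o_zero : o 0 = 0 := rfl
  have o_succ : ∀ m, o (m+1) = (o m - ((pick (res (o m)) : ℤ) : ℂ)) / α := fun _ => rfl
  have homem : ∀ i, o i ∈ Zadj α := by
    intro i
    induction i with
    | zero => exact ⟨0, by simp [o_zero]⟩
    | succ m ih =>
        rw [o_succ]
        refine hdiv _ ih _ ?_
        exact dvd_sub_comm.mp (hpick (res (o m))).2
  -- reversal computation
  have hconjα : (starRingEnd ℂ) α = α⁻¹ := by
    have h1 : α * (starRingEnd ℂ) α = 1 := by
      rw [Complex.mul_conj]
      norm_cast
      rw [Complex.normSq_eq_norm_sq, habs]; norm_num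
    field_simp
    linear_combination h1
  have hrev : ∀ (q : ℤ) (L : ℕ) (s : ℕ → ℤ), 1 ≤ L →
      ((q : ℂ) = ∑ j ∈ Finset.range L, (s j : ℂ) * α ^ j) →
      ∑ j ∈ Finset.range L, (s j : ℂ) * α ^ (L - 1 - j) = α ^ (L - 1) * (q : ℂ) := by
    intro q L s hL hq
    have hcq : (starRingEnd ℂ) (q : ℂ) = (q : ℂ) := by simp
    calc ∑ j ∈ Finset.range L, (s j : ℂ) * α ^ (L - 1 - j)
        = ∑ j ∈ Finset.range L, (s j : ℂ) * (α ^ (L-1) * (α⁻¹) ^ j) := by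
          refine Finset.sum_congr rfl fun j hj => ?_
          congr 1
          have hjL : j ≤ L - 1 := by
            have := Finset.mem_range.mp hj; omega
          rw [inv_pow, eq_comm, mul_inv_eq_iff_eq_mul₀ (pow_ne_zero _ hne), ← pow_add]
          congr 1
          omega
      _ = α ^ (L-1) * ∑ j ∈ Finset.range L, (s j : ℂ) * (α⁻¹) ^ j := by
          rw [Finset.mul_sum]; refine Finset.sum_congr rfl fun j _ => by ring
      _ = α ^ (L-1) * (q : ℂ) := by
          congr 1
          rw [← hcq, hq, map_sum]
          refine Finset.sum_congr rfl fun j _ => ?_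
          rw [map_mul, map_pow, hconjα]
          congr 1
          simp
  -- structure lemma: bottom digit determines the element via the orbit of 0
  have hstruct : ∀ (q : ℤ) (L : ℕ) (s : ℕ → ℤ), 1 ≤ L → (∀ j, j < L → s j ∈ S) →
      ((q : ℂ) = ∑ j ∈ Finset.range L, (s j : ℂ) * α ^ j) → (s 0 : ℂ) = o (L - 1) + (q : ℂ) := by
    intro q L s hL hsS hq
    have claim : ∀ i, i ≤ L - 1 →
        ∑ t ∈ Finset.range (L - i), (s (L - 1 - i - t) : ℂ) * α ^ t
          = o i + α ^ (L - 1 - i) * (q : ℂ) := by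
      intro i
      induction i with
      | zero =>
        intro _
        rw [o_zero, zero_add]
        have h2 := Finset.sum_range_reflect (fun u => (s u : ℂ) * α ^ (L - 1 - u)) L
        have h1 : ∑ t ∈ Finset.range (L - 0), (s (L - 1 - 0 - t) : ℂ) * α ^ t
            = ∑ j ∈ Finset.range L, (s (L - 1 - j) : ℂ) * α ^ (L - 1 - (L - 1 - j)) := by
          simp only [Nat.sub_zero]
          refine Finset.sum_congr rfl fun t ht => ?_
          have htL := Finset.mem_range.mp ht
          have h3 : L - 1 - (L - 1 - t) = t := by omega
          rw [h3]
        rw [h1, h2]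
        simp only [Nat.sub_zero]
        exact hrev q L s hL hq
      | succ i ih =>
        intro hi1
        have hi : i ≤ L - 1 := by omega
        have hiL : i + 1 < L := by omega
        have IH := ih hi
        -- split off the first digit of the reversed tail
        have hsplit : ∑ t ∈ Finset.range (L - i), (s (L - 1 - i - t) : ℂ) * α ^ t
            = α * (∑ t ∈ Finset.range (L - (i+1)), (s (L - 1 - (i+1) - t) : ℂ) * α ^ t)
              + (s (L - 1 - i) : ℂ) := by
          have hLi : L - i = (L - (i+1)) + 1 := by omega
          rw [hLi, Finset.sum_range_succ']
          simp only [pow_zero, mul_one, Nat.sub_zero]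
          congr 1
          · rw [Finset.mul_sum]
            refine Finset.sum_congr rfl fun t ht => ?_
            have h3 : L - 1 - i - (t+1) = L - 1 - (i+1) - t := by omega
            rw [h3, pow_succ]
            ring
        -- the digit at the top is forced
        have hSd : s (L - 1 - i) ∈ S := hsS _ (by omega)
        obtain ⟨Oi, hOi⟩ := homem i
        have hdigit : s (L - 1 - i) = pick (res (o i)) := by
          apply huniq _ _ hSd
          have e1 : aeval α (SP (fun t => s (L - 1 - i - t)) (L - i))
              = aeval α (Oi + X ^ (L - 1 - i) * SP s L) := by
            rw [SP_aeval, map_add, map_mul, map_pow, aeval_X, hOi, SP_aeval, ← hq]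
            exact IH
          have e2 := hker2 _ _ e1
          rw [SP_eval0 _ _ (by omega)] at e2
          simp only [Nat.sub_zero] at e2
          have e3 : (Oi + X ^ (L - 1 - i) * SP s L).eval 0 = Oi.eval 0 := by
            rw [eval_add, eval_mul, eval_pow, eval_X,
              zero_pow (by omega : L - 1 - i ≠ 0), zero_mul, add_zero]
          rw [e3] at e2
          have e4 := hres (o i) Oi hOi
          have e5 := dvd_sub e2 e4
          have e6 : (s (L - 1 - i) - Oi.eval 0) - (res (o i) - Oi.eval 0)
              = s (L - 1 - i) - res (o i) := by ring
          rwa [e6] at e5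
        -- conclude the induction step
        have hoα : α * o (i + 1) = o i - ((pick (res (o i)) : ℤ) : ℂ) := by
          rw [o_succ]
          field_simp
        have hpow : α ^ (L - 1 - i) = α * α ^ (L - 1 - (i+1)) := by
          rw [← pow_succ']
          congr 1
          omega
        apply mul_left_cancel₀ hne
        rw [mul_add, hoα, ← hdigit]
        rw [hpow] at IH
        linear_combination IH - hsplit
    -- apply at i = L - 1
    have hfinal := claim (L - 1) le_rfl
    have h4 : L - (L - 1) = 1 := by omega
    have h6 : L - 1 - (L - 1) = 0 := by omega
    rw [h4, h6, Finset.sum_range_one] at hfinal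
    simpa using hfinal
  -- the zero element gives periodicity of the orbit
  obtain ⟨L₀, s0f, hL₀, hs0S, h0sum⟩ := hdig 0 ⟨0, by simp⟩
  have h0q : (((0:ℤ) : ℂ)) = ∑ j ∈ Finset.range L₀, (s0f j : ℂ) * α ^ j := by
    simpa using h0sum
  have h0' := hstruct 0 L₀ s0f hL₀ hs0S h0q
  have hOm : o (L₀ - 1) = ((s0f 0 : ℤ) : ℂ) := by
    rw [h0']; simp
  have hper0 : o L₀ = 0 := by
    have hL0eq : L₀ = (L₀ - 1) + 1 := by omega
    rw [hL0eq, o_succ]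
    have hpe : pick (res (o (L₀ - 1))) = s0f 0 := by
      symm
      apply huniq _ _ (hs0S 0 hL₀)
      have e4 := hres (o (L₀ - 1)) (C (s0f 0)) (by rw [aeval_C, hOm]; rfl)
      rw [eval_C] at e4
      exact dvd_sub_comm.mp e4
    rw [hpe, hOm]
    simp
  have hper : ∀ k, o (k + L₀) = o k := by
    intro k
    induction k with
    | zero => rw [Nat.zero_add, hper0, o_zero]
    | succ m ih =>
        have hm : m + 1 + L₀ = (m + L₀) + 1 := by omega
        rw [hm, o_succ, ih, ← o_succ]
  have hfin : ∀ k, ∃ m, m < L₀ ∧ o k = o m := by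
    intro k
    induction k using Nat.strong_induction_on with
    | _ k IH =>
      by_cases hk : k < L₀
      · exact ⟨k, hk, rfl⟩
      · have hk2 : k - L₀ < k := by omega
        obtain ⟨m, hm, he⟩ := IH _ hk2
        refine ⟨m, hm, ?_⟩
        have hkk : (k - L₀) + L₀ = k := by omega
        rw [← hkk, hper, he]
  -- every integer lies in a fixed finite set: contradiction
  have hmem : ∀ q : ℤ, (q : ℂ) ∈
      (Finset.image (fun p : ℤ × ℕ => ((p.1 : ℂ) - o p.2)) (S ×ˢ Finset.range L₀)) := by
    intro q
    obtain ⟨L, s, hL, hsS, hsum⟩ := hdig _ (hintZ q)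
    have h := hstruct q L s hL hsS hsum
    obtain ⟨m, hm, he⟩ := hfin (L - 1)
    rw [Finset.mem_image]
    refine ⟨(s 0, m), Finset.mem_product.mpr ⟨hsS 0 hL, Finset.mem_range.mpr hm⟩, ?_⟩
    simp only
    rw [← he]
    linear_combination h
  have hinf : (Set.range (fun q : ℤ => (q : ℂ))).Infinite :=
    Set.infinite_range_of_injective (fun a b hab => by exact_mod_cast hab)
  apply hinf
  apply Set.Finite.subset (Finset.finite_toSet
    (Finset.image (fun p : ℤ × ℕ => ((p.1 : ℂ) - o p.2)) (S ×ˢ Finset.range L₀)))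
  rintro _ ⟨q, rfl⟩
  exact hmem q

/-- Let `α` be an algebraic number all of whose conjugates have modulus `1`.  Then there
is no set `S ⊆ ℤ` with `Card(S) = |M_α(0)|` and `ℤ[α] = S[α]`; consequently if the minimal
cardinality of a finite `S ⊆ ℂ` with `ℤ[α] = S[α]` equals `|M_α(0)|`, any such minimal set
is not contained in `ℤ`. -/
theorem no_integer_digit_set_of_conjugates_modulus_one (α : ℂ) (hα : IsAlgebraic ℚ α)
    (M : ℤ[X]) (hM : IsPrimMinPoly α M)
    (hconj : ∀ z : ℂ, aeval z M = 0 → ‖z‖ = 1) :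
    (¬ ∃ S : Finset ℤ, S.card = (M.eval 0).natAbs ∧
        repSet α ((fun m : ℤ => (m : ℂ)) '' ↑S) = Zadj α) ∧
    (memF α (M.eval 0).natAbs →
      ∀ S : Finset ℂ, S.card = (M.eval 0).natAbs → repSet α ↑S = Zadj α →
        ¬ (↑S : Set ℂ) ⊆ Set.range (fun m : ℤ => (m : ℂ))) := by
  refine ⟨no_int_digit_core α hα M hM hconj, ?_⟩
  intro _hmem S hcard hrep hsub
  apply no_int_digit_core α hα M hM hconj
  have hinj : Set.InjOn (fun m : ℤ => (m : ℂ)) ((fun m : ℤ => (m : ℂ)) ⁻¹' ↑S) :=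
    fun a _ b _ hab => by simpa using hab
  classical
  set T := S.preimage (fun m : ℤ => (m : ℂ)) hinj with hT
  have himg : (fun m : ℤ => (m : ℂ)) '' ↑T = ↑S := by
    rw [hT, Finset.coe_preimage]
    exact Set.image_preimage_eq_of_subset hsub
  have himgF : T.image (fun m : ℤ => (m : ℂ)) = S := by
    apply Finset.coe_injective
    rw [Finset.coe_image]; exact himg
  refine ⟨T, ?_, ?_⟩
  · have hTc : (T.image (fun m : ℤ => (m : ℂ))).card = T.card :=
      Finset.card_image_of_injective _ (fun a b hab => by simpa using hab)
    rw [himgF] at hTc; rw [← hTc]; exact hcard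
  · rw [himg, hrep]
end

section
/- If α is an algebraic integer all of whose conjugates (the complex roots of its minimal polynomial, including α itself) have modulus greater than 2, then α ∈ 𝓕_{|M_α(0)|}; that is, there exists a finite set S ⊆ ℂ with Card(S) = |M_α(0)| and ℤ[α] = S[α], and this cardinality is minimal. -/
open Polynomial

open IntermediateField

/-- Congruence: if two integers agree modulo `α` inside `ℤ[α]`, they agree
modulo `|M_α(0)|`. -/
lemma congC (α : ℂ) (hint : IsIntegral ℤ α) (m m' : ℤ) (R R' : ℤ[X])
    (h : (m : ℂ) + α * aeval α R = (m' : ℂ) + α * aeval α R') :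
    ((m : ZMod ((minpoly ℤ α).eval 0).natAbs) = (m' : ZMod ((minpoly ℤ α).eval 0).natAbs)) := by
  set M := minpoly ℤ α with hM
  set N := (M.eval 0).natAbs with hN
  have hF : aeval α ((C m + X * R) - (C m' + X * R')) = 0 := by
    simp only [map_sub, map_add, map_mul, aeval_C, aeval_X, algebraMap_int_eq, eq_intCast,
      map_intCast]
    rw [sub_eq_zero]; exact h
  obtain ⟨T, hT⟩ := minpoly.isIntegrallyClosed_dvd hint hF
  have heval : m - m' = M.eval 0 * T.eval 0 := by
    have := congrArg (fun p : ℤ[X] => p.eval 0) hT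
    simpa using this
  have hM0 : ((M.eval 0 : ℤ) : ZMod N) = 0 := by
    rw [ZMod.intCast_zmod_eq_zero_iff_dvd]
    exact Int.natAbs_dvd.mpr dvd_rfl
  have : ((m - m' : ℤ) : ZMod N) = 0 := by
    rw [heval, Int.cast_mul, hM0, zero_mul]
  rw [Int.cast_sub, sub_eq_zero] at this
  exact this

set_option maxHeartbeats 1600000 in
/-- If `α` is an algebraic integer all of whose conjugates have modulus greater than `2`,
then `α ∈ 𝓕_{|M_α(0)|}` (for an algebraic integer, `M_α` is the monic minimal polynomial
over `ℤ`). -/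
theorem memF_of_conjugates_gt_two (α : ℂ) (hint : IsIntegral ℤ α)
    (hconj : ∀ z : ℂ, aeval z (minpoly ℤ α) = 0 → 2 < ‖z‖) :
    memF α (((minpoly ℤ α).eval 0).natAbs) := by
  classical
  set M := minpoly ℤ α with hM
  set N := (M.eval 0).natAbs with hNdef
  -- `N ≠ 0`
  have hM0 : M.eval 0 ≠ 0 := by
    intro h
    have h0 : aeval (0 : ℂ) M = 0 := by
      rw [aeval_def, eval₂_at_zero, coeff_zero_eq_eval_zero, h, map_zero]
    have := hconj 0 h0
    simp at this
    linarith
  have hNpos : 0 < N := Int.natAbs_pos.mpr hM0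
  haveI : NeZero N := ⟨hNpos.ne'⟩
  haveI : FiniteDimensional ℚ ℚ⟮α⟯ := adjoin.finiteDimensional (hint.tower_top (A := ℚ))
  haveI hne : Nonempty (ℚ⟮α⟯ →ₐ[ℚ] ℂ) := ⟨(ℚ⟮α⟯).val⟩
  set A := AdjoinSimple.gen ℚ α with hA
  have hcoeA : algebraMap ℚ⟮α⟯ ℂ A = α := AdjoinSimple.algebraMap_gen ℚ α
  have hinj : Function.Injective (algebraMap ℚ⟮α⟯ ℂ) := (algebraMap ℚ⟮α⟯ ℂ).injective
  have hMA : aeval A M = 0 := by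
    apply hinj
    rw [← aeval_algebraMap_apply, hcoeA, map_zero]
    exact minpoly.aeval ℤ α
  have hAint : IsIntegral ℤ A := by
    rw [← isIntegral_algebraMap_iff hinj, hcoeA]; exact hint
  -- transfer of `ℤ[α]`-shaped elements to `ℂ`
  have trans : ∀ (m : ℤ) (R : ℤ[X]),
      algebraMap ℚ⟮α⟯ ℂ ((m : ℚ⟮α⟯) + A * aeval A R) = (m : ℂ) + α * aeval α R := by
    intro m R
    rw [map_add, map_mul, map_intCast, ← aeval_algebraMap_apply, hcoeA]
  -- the house function `q`
  have huniv : (Finset.univ : Finset (ℚ⟮α⟯ →ₐ[ℚ] ℂ)).Nonempty := Finset.univ_nonempty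
  obtain ⟨q, hq⟩ : ∃ q : ℚ⟮α⟯ → ℝ, q = fun x =>
      Finset.sup' Finset.univ huniv (fun σ => ‖σ x‖) := ⟨_, rfl⟩
  have le_q : ∀ (x : ℚ⟮α⟯) (σ : ℚ⟮α⟯ →ₐ[ℚ] ℂ), ‖σ x‖ ≤ q x := by
    intro x σ
    simp only [hq]
    exact Finset.le_sup' (fun σ : ℚ⟮α⟯ →ₐ[ℚ] ℂ => ‖σ x‖) (Finset.mem_univ σ)
  have q_le : ∀ (x : ℚ⟮α⟯) (c : ℝ), (∀ σ : ℚ⟮α⟯ →ₐ[ℚ] ℂ, ‖σ x‖ ≤ c) → q x ≤ c := by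
    intro x c h
    simp only [hq]
    exact Finset.sup'_le _ _ fun σ _ => h σ
  have q_nonneg : ∀ x : ℚ⟮α⟯, 0 ≤ q x := by
    intro x
    obtain ⟨σ⟩ := hne
    exact le_trans (norm_nonneg _) (le_q x σ)
  have q_zero : q 0 = 0 := by
    apply le_antisymm _ (q_nonneg 0)
    apply q_le; intro σ; simp
  -- all conjugates of `A` are large
  have hroot : ∀ σ : ℚ⟮α⟯ →ₐ[ℚ] ℂ, 2 < ‖σ A‖ := by
    intro σ
    apply hconj
    have h2 := aeval_algHom_apply (σ.restrictScalars ℤ) A M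
    simp only [AlgHom.coe_restrictScalars'] at h2
    rw [h2, hMA, map_zero]
  obtain ⟨Amin, hAmin⟩ : ∃ a : ℝ, a = Finset.inf' Finset.univ huniv
      (fun σ : ℚ⟮α⟯ →ₐ[ℚ] ℂ => ‖σ A‖) := ⟨_, rfl⟩
  have hAminle : ∀ σ : ℚ⟮α⟯ →ₐ[ℚ] ℂ, Amin ≤ ‖σ A‖ := by
    intro σ
    rw [hAmin]
    exact Finset.inf'_le _ (Finset.mem_univ σ)
  have hAmin2 : 2 < Amin := by
    rw [hAmin, Finset.lt_inf'_iff]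
    intro σ _; exact hroot σ
  -- `q x ≥ 1` for nonzero integral points
  have q_ge_one : ∀ x : ℚ⟮α⟯, (∃ P : ℤ[X], aeval A P = x) → x ≠ 0 → 1 ≤ q x := by
    intro x hxΛ hx0
    have hxint : IsIntegral ℤ x := by
      obtain ⟨P, hP⟩ := hxΛ
      rw [← hP]
      exact IsIntegral.of_mem_of_fg (Algebra.adjoin ℤ {A}) hAint.fg_adjoin_singleton _
        (aeval_mem_adjoin_singleton ℤ A)
    obtain ⟨m, hm⟩ := IsIntegrallyClosed.isIntegral_iff.mp (Algebra.isIntegral_norm ℚ hxint)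
    have hm0 : m ≠ 0 := by
      rintro rfl
      simp only [map_zero] at hm
      exact (Algebra.norm_ne_zero_iff.mpr hx0) hm.symm
    have h2 : ‖(m : ℂ)‖ = ∏ σ : ℚ⟮α⟯ →ₐ[ℚ] ℂ, ‖σ x‖ := by
      have h3 : ((m : ℂ)) = ∏ σ : ℚ⟮α⟯ →ₐ[ℚ] ℂ, σ x := by
        rw [← Algebra.norm_eq_prod_embeddings ℚ ℂ x, ← hm]
        simp
      rw [h3, norm_prod]
    have h1 : (1 : ℝ) ≤ ‖(m : ℂ)‖ := by
      rw [Complex.norm_intCast]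
      rw [← Int.cast_abs]
      exact_mod_cast Int.one_le_abs hm0
    by_contra hlt
    push_neg at hlt
    have h4 : ∏ σ : ℚ⟮α⟯ →ₐ[ℚ] ℂ, ‖σ x‖
        ≤ ∏ _σ : ℚ⟮α⟯ →ₐ[ℚ] ℂ, q x := by
      apply Finset.prod_le_prod
      · intro σ _; exact norm_nonneg _
      · intro σ _; exact le_q x σ
    rw [Finset.prod_const] at h4
    have h5 : q x ^ (Finset.univ : Finset (ℚ⟮α⟯ →ₐ[ℚ] ℂ)).card < 1 := by
      apply pow_lt_one₀ (q_nonneg x) hlt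
      rw [Finset.card_univ]
      exact Fintype.card_ne_zero
    linarith [h2 ▸ h1, h4]
  -- choice of digits
  set ε : ℝ := (Amin - 2) / 2 with hε
  have hεpos : 0 < ε := by rw [hε]; linarith
  have hsex : ∀ i : ZMod N, ∃ y : ℚ⟮α⟯,
      (∃ m : ℤ, ((m : ZMod N) = i) ∧ ∃ R : ℤ[X], y = (m : ℚ⟮α⟯) + A * aeval A R) ∧
      (∀ z : ℚ⟮α⟯, (∃ m : ℤ, ((m : ZMod N) = i) ∧ ∃ R : ℤ[X], z = (m : ℚ⟮α⟯) + A * aeval A R) →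
        q y ≤ q z + ε) ∧ (i = 0 → y = 0) := by
    intro i
    by_cases hi : i = 0
    · refine ⟨0, ⟨0, by simp [hi], 0, by simp⟩, ?_, fun _ => rfl⟩
      intro z _
      rw [q_zero]
      linarith [q_nonneg z]
    · obtain ⟨m₀, hm₀⟩ := ZMod.intCast_surjective (n := N) i
      have hCne : (q '' {z : ℚ⟮α⟯ | ∃ m : ℤ, ((m : ZMod N) = i) ∧
          ∃ R : ℤ[X], z = (m : ℚ⟮α⟯) + A * aeval A R}).Nonempty := by
        exact ⟨q ((m₀ : ℚ⟮α⟯)), ⟨(m₀ : ℚ⟮α⟯), ⟨m₀, hm₀, 0, by simp⟩, rfl⟩⟩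
      obtain ⟨a, ha, hlt⟩ := Real.lt_sInf_add_pos hCne hεpos
      obtain ⟨y, hy, rfl⟩ := ha
      refine ⟨y, hy, ?_, fun h => absurd h hi⟩
      intro z hz
      have hble : sInf (q '' {z : ℚ⟮α⟯ | ∃ m : ℤ, ((m : ZMod N) = i) ∧
          ∃ R : ℤ[X], z = (m : ℚ⟮α⟯) + A * aeval A R}) ≤ q z := by
        apply csInf_le
        · exact ⟨0, by rintro b ⟨w, _, rfl⟩; exact q_nonneg w⟩
        · exact ⟨z, hz, rfl⟩
      linarith
  choose s hs1 hs2 hs3 using hsex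
  -- `N` is divisible by `A` in `ℤ[A]`
  have hNA : ∃ G : ℤ[X], ((N : ℤ) : ℚ⟮α⟯) = A * aeval A G := by
    have h2 : aeval A (M.divX * X + C (M.coeff 0)) = 0 := by rw [divX_mul_X_add, hMA]
    simp only [map_add, map_mul, aeval_X, aeval_C, algebraMap_int_eq, eq_intCast,
      map_intCast] at h2
    have h0 : ((M.eval 0 : ℤ) : ℚ⟮α⟯) = -(A * aeval A M.divX) := by
      rw [← coeff_zero_eq_eval_zero]
      linear_combination h2
    rcases Int.natAbs_eq (M.eval 0) with h | h
    · refine ⟨-M.divX, ?_⟩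
      rw [map_neg, mul_neg, ← h0, ← h]
    · refine ⟨M.divX, ?_⟩
      have h1 : (-(M.eval 0) : ℤ) = (N : ℤ) := by omega
      rw [← h1, Int.cast_neg, h0, neg_neg]
  obtain ⟨G, hG⟩ := hNA
  -- the division step
  have step : ∀ x : ℚ⟮α⟯, (∃ P : ℤ[X], aeval A P = x) →
      ∃ (i : ZMod N) (y : ℚ⟮α⟯), (∃ P : ℤ[X], aeval A P = y) ∧ x = s i + A * y ∧
      (∃ m : ℤ, ((m : ZMod N) = i) ∧ ∃ R : ℤ[X], x = (m : ℚ⟮α⟯) + A * aeval A R) := by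
    rintro x ⟨P, hP⟩
    set m : ℤ := P.coeff 0 with hmdef
    have hxm : x = (m : ℚ⟮α⟯) + A * aeval A P.divX := by
      rw [← hP]
      conv_lhs => rw [← divX_mul_X_add P]
      simp only [map_add, map_mul, aeval_X, aeval_C, algebraMap_int_eq, eq_intCast, map_intCast]
      ring
    have hxCls : ∃ m' : ℤ, ((m' : ZMod N) = (m : ZMod N)) ∧
        ∃ R : ℤ[X], x = (m' : ℚ⟮α⟯) + A * aeval A R := ⟨m, rfl, P.divX, hxm⟩
    obtain ⟨m', hm', R', hsR'⟩ := hs1 (m : ZMod N)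
    have hdvd : (N : ℤ) ∣ (m - m') := by
      have hcast : ((m - m' : ℤ) : ZMod N) = 0 := by
        rw [Int.cast_sub, hm', sub_self]
      rwa [ZMod.intCast_zmod_eq_zero_iff_dvd] at hcast
    obtain ⟨k, hk⟩ := hdvd
    refine ⟨(m : ZMod N), aeval A (C k * G + P.divX - R'), ⟨_, rfl⟩, ?_, hxCls⟩
    have hkK : ((m : ℚ⟮α⟯)) = (m' : ℚ⟮α⟯) + (k : ℚ⟮α⟯) * ((N : ℤ) : ℚ⟮α⟯) := by
      exact_mod_cast congrArg (fun t : ℤ => ((t : ℚ⟮α⟯)))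
        (by linear_combination hk : m = m' + k * (N : ℤ))
    rw [hsR', hxm]
    simp only [map_add, map_sub, map_mul, aeval_C, algebraMap_int_eq, eq_intCast, map_intCast]
    linear_combination hkK + (k : ℚ⟮α⟯) * hG
  -- contraction estimate
  have qdiv : ∀ x dgt y : ℚ⟮α⟯, x = dgt + A * y → q y ≤ (q x + q dgt) / Amin := by
    intro x dgt y hxy
    apply q_le
    intro σ
    have hσA : (0 : ℝ) < ‖σ A‖ := lt_trans (by norm_num) (hroot σ)
    have hval : σ x = σ dgt + σ A * σ y := by rw [hxy]; simp
    have hy : ‖σ y‖ = ‖σ x - σ dgt‖ / ‖σ A‖ := by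
      rw [eq_div_iff hσA.ne', ← norm_mul]
      congr 1
      rw [hval]; ring
    rw [hy]
    apply div_le_div₀ (by linarith [q_nonneg x, q_nonneg dgt]) ?_ (by linarith) (hAminle σ)
    calc ‖σ x - σ dgt‖ = ‖σ x - σ dgt‖ := by rfl
      _ ≤ ‖σ x‖ + ‖σ dgt‖ := norm_sub_le _ _
      _ = ‖σ x‖ + ‖σ dgt‖ := by rfl
      _ ≤ q x + q dgt := add_le_add (le_q x σ) (le_q dgt σ)
  -- the decreasing bound sequence
  set g : ℕ → ℝ := fun n => (Amin / 2) ^ n / 2 + 1 / 2 with hg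
  have hgn : ∀ k : ℕ, g k = (Amin / 2) ^ k / 2 + 1 / 2 := fun k => by simp only [hg]
  have hAmin0 : (Amin : ℝ) ≠ 0 := by linarith
  have hgrec : ∀ n : ℕ, (2 * g (n + 1) + ε) / Amin = g n := by
    intro n
    rw [hgn n, hgn (n + 1), hε, pow_succ, div_eq_iff hAmin0]
    ring
  -- main induction
  have main : ∀ n : ℕ, ∀ x : ℚ⟮α⟯, (∃ P : ℤ[X], aeval A P = x) → q x < g n →
      ∃ (nn : ℕ) (f : ℕ → ℚ⟮α⟯), (∀ j ≤ nn, ∃ i : ZMod N, f j = s i) ∧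
        x = ∑ j ∈ Finset.range (nn + 1), f j * A ^ j := by
    intro n
    induction n with
    | zero =>
      intro x hxΛ hq1
      have hx0 : x = 0 := by
        by_contra h
        have := q_ge_one x hxΛ h
        rw [hgn 0] at hq1
        norm_num at hq1
        linarith
      exact ⟨0, fun _ => 0, fun j _ => ⟨0, (hs3 0 rfl).symm⟩, by simp [hx0]⟩
    | succ n ih =>
      intro x hxΛ hqx
      obtain ⟨i, y, hyΛ, hxy, hxCls⟩ := step x hxΛ
      have hqd : q (s i) ≤ q x + ε := hs2 i x hxCls
      have hqy : q y < g n := by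
        have hApos : (0 : ℝ) < Amin := by linarith
        have h1 := qdiv x (s i) y hxy
        calc q y ≤ (q x + q (s i)) / Amin := h1
          _ < (2 * g (n + 1) + ε) / Amin := by
              apply (div_lt_div_iff_of_pos_right hApos).mpr
              linarith
          _ = g n := hgrec n
      obtain ⟨nn, f, hf, hsum⟩ := ih y hyΛ hqy
      refine ⟨nn + 1, fun j => match j with | 0 => s i | Nat.succ k => f k, ?_, ?_⟩
      · intro j hj
        match j with
        | 0 => exact ⟨i, rfl⟩
        | Nat.succ k => exact hf k (by omega)
      · rw [Finset.sum_range_succ']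
        have hterm : ∀ j ∈ Finset.range (nn + 1),
            (match j + 1 with | 0 => s i | Nat.succ k => f k) * A ^ (j + 1)
              = A * (f j * A ^ j) := by
          intro j _
          show f j * A ^ (j + 1) = A * (f j * A ^ j)
          ring
        rw [Finset.sum_congr rfl hterm, ← Finset.mul_sum, ← hsum, hxy]
        show s i + A * y = A * y + s i * A ^ 0
        ring
  -- every integral point has some bound
  have hgrow : ∀ x : ℚ⟮α⟯, ∃ n : ℕ, q x < g n := by
    intro x
    obtain ⟨n, hn⟩ := pow_unbounded_of_one_lt (2 * q x) (by linarith : (1 : ℝ) < Amin / 2)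
    refine ⟨n, ?_⟩
    rw [hgn n]
    linarith
  have repL : ∀ x : ℚ⟮α⟯, (∃ P : ℤ[X], aeval A P = x) →
      ∃ (nn : ℕ) (f : ℕ → ℚ⟮α⟯), (∀ j ≤ nn, ∃ i : ZMod N, f j = s i) ∧
        x = ∑ j ∈ Finset.range (nn + 1), f j * A ^ j := by
    intro x hx
    obtain ⟨n, hn⟩ := hgrow x
    exact main n x hx hn
  -- the digit set in ℂ
  set S : Finset ℂ := Finset.image (fun i : ZMod N => algebraMap ℚ⟮α⟯ ℂ (s i)) Finset.univ
    with hS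
  -- injectivity of digits
  have hsinj : Set.InjOn (fun i : ZMod N => algebraMap ℚ⟮α⟯ ℂ (s i)) ↑(Finset.univ : Finset (ZMod N)) := by
    intro i _ j _ hij
    have hij' : s i = s j := hinj hij
    obtain ⟨m, hm, R, hR⟩ := hs1 i
    obtain ⟨m', hm', R', hR'⟩ := hs1 j
    have hC : (m : ℂ) + α * aeval α R = (m' : ℂ) + α * aeval α R' := by
      rw [← trans m R, ← trans m' R', ← hR, ← hR', hij']
    have := congC α hint m m' R R' hC
    rw [← hm, ← hm']
    exact this
  have hcard : S.card = N := by
    rw [hS, Finset.card_image_of_injOn hsinj, Finset.card_univ, ZMod.card]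
  -- the two inclusions
  have hsub1 : repSet α ↑S ⊆ Zadj α := by
    rintro z ⟨n, f, hf, hsum⟩
    have hQ : ∀ j : ℕ, ∃ Q : ℤ[X], j ≤ n → aeval α Q = f j := by
      intro j
      by_cases hj : j ≤ n
      · obtain ⟨i, _, hfi⟩ := Finset.mem_image.mp (hf j hj)
        obtain ⟨m, _, R, hR⟩ := hs1 i
        refine ⟨C m + X * R, fun _ => ?_⟩
        rw [← hfi, hR, trans m R]
        simp only [map_add, map_mul, aeval_C, aeval_X, algebraMap_int_eq, eq_intCast, map_intCast]
      · exact ⟨0, fun h => absurd h hj⟩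
    choose Q hQs using hQ
    refine ⟨∑ j ∈ Finset.range (n + 1), Q j * X ^ j, ?_⟩
    rw [map_sum, hsum]
    apply Finset.sum_congr rfl
    intro j hj
    rw [map_mul, map_pow, aeval_X, hQs j (Finset.mem_range_succ_iff.mp hj)]
  have hsub2 : Zadj α ⊆ repSet α ↑S := by
    rintro z ⟨P, hP⟩
    obtain ⟨nn, f, hf, hsum⟩ := repL (aeval A P) ⟨P, rfl⟩
    refine ⟨nn, fun j => algebraMap ℚ⟮α⟯ ℂ (f j), ?_, ?_⟩
    · intro j hj
      obtain ⟨i, hi⟩ := hf j hj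
      rw [Finset.mem_coe, hS, Finset.mem_image]
      exact ⟨i, Finset.mem_univ i, congrArg (algebraMap ℚ⟮α⟯ ℂ) hi.symm⟩
    · have hz : z = algebraMap ℚ⟮α⟯ ℂ (aeval A P) := by
        rw [← aeval_algebraMap_apply, hcoeA, hP]
      rw [hz, hsum, map_sum]
      apply Finset.sum_congr rfl
      intro j _
      rw [map_mul, map_pow, hcoeA]
  -- lower bound
  constructor
  · exact ⟨S, hcard, le_antisymm hsub1 hsub2⟩
  · intro S' hS'
    set φ : ℂ → ZMod N := fun t =>
      if h : ∃ P : ℤ[X], aeval α P = t then (((h.choose.coeff 0 : ℤ)) : ZMod N) else 0 with hφ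
    have hsurj : Set.SurjOn φ ↑S' ↑(Finset.univ : Finset (ZMod N)) := by
      intro i _
      obtain ⟨m₀, hm₀⟩ := ZMod.intCast_surjective (n := N) i
      have hz : ((m₀ : ℂ)) ∈ Zadj α := ⟨C m₀, by simp⟩
      rw [← hS'] at hz
      obtain ⟨n, f, hf, hsum⟩ := hz
      have hf0 : f 0 ∈ (↑S' : Set ℂ) := hf 0 (Nat.zero_le n)
      refine ⟨f 0, hf0, ?_⟩
      -- each digit is in Zadj
      have hdig : ∀ j : ℕ, ∃ Q : ℤ[X], j ≤ n → aeval α Q = f j := by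
        intro j
        by_cases hj : j ≤ n
        · have : f j ∈ repSet α ↑S' := by
            refine ⟨0, fun _ => f j, fun k hk => ?_, by simp⟩
            exact hf j hj
          rw [hS'] at this
          obtain ⟨Q, hQ⟩ := this
          exact ⟨Q, fun _ => hQ⟩
        · exact ⟨0, fun h => absurd h hj⟩
      choose Q hQs using hdig
      have h0 : ∃ P0 : ℤ[X], aeval α P0 = f 0 := ⟨Q 0, hQs 0 (Nat.zero_le n)⟩
      -- z - f 0 = α * (...)
      have hWex : ((m₀ : ℂ)) = f 0 + α * aeval α (∑ j ∈ Finset.range n, Q (j + 1) * X ^ j) := by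
        rw [hsum, Finset.sum_range_succ']
        simp only [pow_zero, mul_one]
        rw [add_comm]
        congr 1
        rw [map_sum, Finset.mul_sum]
        apply Finset.sum_congr rfl
        intro j hj
        rw [map_mul, map_pow, aeval_X, hQs (j + 1) (Nat.succ_le_of_lt (Finset.mem_range.mp hj))]
        ring
      -- now φ (f 0) = i
      have hmem : ∃ P : ℤ[X], aeval α P = f 0 := h0
      have hφval : φ (f 0) = (((hmem.choose.coeff 0 : ℤ)) : ZMod N) := by
        simp only [hφ]
        rw [dif_pos hmem]
      rw [hφval]
      -- congruence
      have hchoose : aeval α hmem.choose = f 0 := hmem.choose_spec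
      set Pc := hmem.choose with hPc
      have hPcsplit : f 0 = ((Pc.coeff 0 : ℤ) : ℂ) + α * aeval α Pc.divX := by
        rw [← hchoose]
        conv_lhs => rw [← divX_mul_X_add Pc]
        simp only [map_add, map_mul, aeval_X, aeval_C, algebraMap_int_eq, eq_intCast, map_intCast]
        ring
      have hCeq : ((m₀ : ℂ)) + α * aeval α (0 : ℤ[X]) = ((Pc.coeff 0 : ℤ) : ℂ) +
          α * aeval α (Pc.divX + ∑ j ∈ Finset.range n, Q (j + 1) * X ^ j) := by
        rw [map_zero, mul_zero, add_zero, hWex, hPcsplit, map_add]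
        ring
      have hcg := congC α hint m₀ (Pc.coeff 0) 0 _ hCeq
      rw [← hcg]
      exact hm₀
    have := Finset.card_le_card_of_surjOn φ hsurj
    rwa [Finset.card_univ, ZMod.card] at this
end

section
/- Let α = a/b where a ∈ ℕ, b ∈ ℤ, a > |b| ≥ 1, gcd(a, b) = 1 and a ≠ b + 1. Then α ∈ 𝓕_a (note |M_α(0)| = a since M_α(x) = bx − a), and moreover one can choose a set S ⊆ ℤ with 0 ∈ S, Card(S) = a, and ℤ[α] = S[α]. -/
open Polynomial

namespace RatBase

def kf (A b s : ℤ) : ℤ := if 0 < b then (if s = 0 then 0 else s - 1) else -(s * (-b) / A)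

def dg (A b s : ℤ) : ℤ := b * s - A * kf A b s

def Uf (A b m : ℤ) : ℤ := (m / A) * b + kf A b (m % A)

def digs (A b : ℤ) : Finset ℤ := (Finset.range A.toNat).image (fun s : ℕ => dg A b (s : ℤ))

lemma kf_zero (A b : ℤ) : kf A b 0 = 0 := by
  unfold kf; split_ifs <;> simp_all

lemma key_id (A b m : ℤ) : b * m = dg A b (m % A) + A * Uf A b m := by
  have h := Int.mul_ediv_add_emod m A
  unfold dg Uf
  linear_combination b * h.symm

lemma dg_mem' (A b : ℤ) (hA : 0 < A) {s : ℤ} (h0 : 0 ≤ s) (h1 : s < A) :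
    dg A b s ∈ digs A b := by
  refine Finset.mem_image.mpr ⟨s.toNat, Finset.mem_range.mpr (by omega), ?_⟩
  rw [Int.toNat_of_nonneg h0]

lemma dg_mem (A b : ℤ) (hA : 0 < A) (m : ℤ) : dg A b (m % A) ∈ digs A b :=
  dg_mem' A b hA (Int.emod_nonneg m hA.ne') (Int.emod_lt_of_pos m hA)

lemma zero_mem_digs (A b : ℤ) (hA : 0 < A) : (0 : ℤ) ∈ digs A b := by
  have := dg_mem' A b hA (le_refl 0) hA
  simpa [dg, kf_zero] using this

lemma digs_card (A b : ℤ) (hA : 0 < A) (hcop : IsCoprime A b) :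
    (digs A b).card = A.toNat := by
  rw [digs, Finset.card_image_of_injOn, Finset.card_range]
  intro s₁ h₁ s₂ h₂ heq
  simp only [Finset.coe_range, Set.mem_Iio] at h₁ h₂
  have hdvd : A ∣ b * ((s₁ : ℤ) - (s₂ : ℤ)) :=
    ⟨kf A b s₁ - kf A b s₂, by unfold dg at heq; linear_combination heq⟩
  have hd : A ∣ ((s₁ : ℤ) - (s₂ : ℤ)) := hcop.dvd_of_dvd_mul_left hdvd
  obtain ⟨t, ht⟩ := hd
  have hs1 : (s₁ : ℤ) < A := by omega
  have hs2 : (s₂ : ℤ) < A := by omega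
  have ht0 : t = 0 := by
    rcases lt_trichotomy t 0 with h | h | h
    · have : A * t ≤ A * (-1) := mul_le_mul_of_nonneg_left (by omega) hA.le
      omega
    · exact h
    · have : A * 1 ≤ A * t := mul_le_mul_of_nonneg_left (by omega) hA.le
      omega
  subst ht0
  simp only [mul_zero] at ht
  omega

lemma U_pos (A b : ℤ) (hb : 0 < b) (hba : b < A) {m : ℤ} (hm : 0 < m) :
    0 ≤ Uf A b m ∧ Uf A b m < m := by
  have hA : 0 < A := lt_trans hb hba
  have hs0 : 0 ≤ m % A := Int.emod_nonneg m hA.ne'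
  have hsA : m % A < A := Int.emod_lt_of_pos m hA
  have hp : 0 ≤ m / A := Int.ediv_nonneg hm.le hA.le
  have hm' : A * (m / A) + m % A = m := Int.mul_ediv_add_emod m A
  unfold Uf kf
  rw [if_pos hb]
  by_cases h0 : m % A = 0
  · rw [if_pos h0]
    have hp1 : 1 ≤ m / A := by nlinarith
    constructor
    · positivity
    · nlinarith
  · rw [if_neg h0]
    constructor
    · nlinarith
    · nlinarith

lemma U_neg (A b : ℤ) (hb : 0 < b) (hba : b + 2 ≤ A) {m : ℤ} (hm : m < 0) :
    m < Uf A b m := by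
  have hA : 0 < A := by omega
  have hs0 : 0 ≤ m % A := Int.emod_nonneg m hA.ne'
  have hsA : m % A < A := Int.emod_lt_of_pos m hA
  have hm' : A * (m / A) + m % A = m := Int.mul_ediv_add_emod m A
  have hp : m / A ≤ -1 := by
    have := Int.ediv_neg_of_neg_of_pos hm hA
    omega
  unfold Uf kf
  rw [if_pos hb]
  by_cases h0 : m % A = 0
  · rw [if_pos h0]
    nlinarith
  · rw [if_neg h0]
    nlinarith

lemma U_negb_eq (A b : ℤ) (hb : b < 0) (hA : 0 < A) (m : ℤ) :
    Uf A b m = -((m * (-b)) / A) := by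
  unfold Uf kf
  rw [if_neg (by omega)]
  have h1 : m * (-b) = m % A * (-b) + A * ((m / A) * (-b)) := by
    linear_combination (-b) * (Int.mul_ediv_add_emod m A).symm
  rw [h1, Int.add_mul_ediv_left _ _ hA.ne']
  ring

lemma U_negb_pos (A b : ℤ) (hb : b < 0) (hba : -b < A) {m : ℤ} (hm : 0 < m) :
    -m < Uf A b m ∧ Uf A b m ≤ 0 := by
  have hA : 0 < A := by omega
  rw [U_negb_eq A b hb hA]
  constructor
  · have : m * (-b) / A < m := by
      rw [Int.ediv_lt_iff_lt_mul hA]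
      nlinarith
    omega
  · have : 0 ≤ m * (-b) / A := Int.ediv_nonneg (by nlinarith) hA.le
    omega

lemma U_negb_neg (A b : ℤ) (hb : b < 0) (hba : -b < A) {m : ℤ} (hm : m < 0) :
    0 ≤ Uf A b m ∧ Uf A b m ≤ -m := by
  have hA : 0 < A := by omega
  rw [U_negb_eq A b hb hA]
  constructor
  · have : m * (-b) / A ≤ 0 := by
      have h2 : m * (-b) / A ≤ 0 / A := Int.ediv_le_ediv hA (by nlinarith)
      simpa using h2
    omega
  · have : m ≤ m * (-b) / A := by
      rw [Int.le_ediv_iff_mul_le hA]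
      nlinarith
    omega

def RepQ (A b : ℤ) (x : ℚ) : Prop :=
  ∃ n : ℕ, ∃ f : ℕ → ℤ, (∀ j ≤ n, f j ∈ digs A b) ∧
    x = ∑ j ∈ Finset.range (n + 1), (f j : ℚ) * ((A : ℚ) / (b : ℚ)) ^ j

lemma repQ_zero (A b : ℤ) (hA : 0 < A) : RepQ A b 0 :=
  ⟨0, fun _ => 0, fun _ _ => by simpa using zero_mem_digs A b hA, by simp⟩

lemma repQ_step (A b : ℤ) {d : ℤ} {y : ℚ} (hd : d ∈ digs A b) (h : RepQ A b y) :
    RepQ A b ((d : ℚ) + ((A : ℚ) / (b : ℚ)) * y) := by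
  obtain ⟨n, f, hf, rfl⟩ := h
  refine ⟨n + 1, fun j => if j = 0 then d else f (j - 1), ?_, ?_⟩
  · intro j hj
    by_cases h0 : j = 0
    · simpa [h0] using hd
    · simpa [h0] using hf (j - 1) (by omega)
  · rw [Finset.sum_range_succ'
      (fun j => ((if j = 0 then d else f (j - 1) : ℤ) : ℚ) * ((A : ℚ) / (b : ℚ)) ^ j) (n + 1)]
    simp only [if_pos rfl, pow_zero, mul_one]
    have hterm : ∀ j ∈ Finset.range (n + 1),
        ((if j + 1 = 0 then d else f (j + 1 - 1) : ℤ) : ℚ) * ((A : ℚ) / (b : ℚ)) ^ (j + 1)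
        = ((A : ℚ) / (b : ℚ)) * ((f j : ℚ) * ((A : ℚ) / (b : ℚ)) ^ j) := by
      intro j _
      rw [if_neg (Nat.succ_ne_zero j)]
      simp only [Nat.add_sub_cancel]
      ring
    rw [Finset.sum_congr rfl hterm, ← Finset.mul_sum]
    simp only [if_true]
    ring

lemma repQ_bstep (A b : ℤ) (hA : 0 < A) (hb0 : b ≠ 0) (m : ℤ)
    (h : RepQ A b ((Uf A b m * b : ℤ) : ℚ)) : RepQ A b ((m * b : ℤ) : ℚ) := by
  have hid : (b : ℚ) * (m : ℚ) = (dg A b (m % A) : ℚ) + (A : ℚ) * (Uf A b m : ℚ) := by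
    exact_mod_cast congrArg (fun z : ℤ => (z : ℚ)) (key_id A b m)
  have hb0' : (b : ℚ) ≠ 0 := Int.cast_ne_zero.mpr hb0
  have := repQ_step A b (dg_mem A b hA m) h
  convert this using 1
  push_cast
  field_simp
  linear_combination hid

lemma repQ_bmul_nonneg (A b : ℤ) (hb : 0 < b) (hba : b < A) :
    ∀ N : ℕ, ∀ m : ℤ, 0 ≤ m → m ≤ (N : ℤ) → RepQ A b ((m * b : ℤ) : ℚ) := by
  have hA : 0 < A := lt_trans hb hba
  intro N
  induction N with
  | zero =>
    intro m h0 h1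
    have : m = 0 := by omega
    subst this
    simpa using repQ_zero A b hA
  | succ n ih =>
    intro m h0 h1
    rcases h0.eq_or_lt with h | hm
    · subst h
      simpa using repQ_zero A b hA
    · obtain ⟨hU0, hUm⟩ := U_pos A b hb hba hm
      exact repQ_bstep A b hA hb.ne' m (ih _ hU0 (by omega))

lemma repQ_bmul_pos (A b : ℤ) (hb : 0 < b) (hba : b + 2 ≤ A) (m : ℤ) :
    RepQ A b ((m * b : ℤ) : ℚ) := by
  have hA : 0 < A := by omega
  have hba' : b < A := by omega
  rcases le_or_gt 0 m with h | h
  · exact repQ_bmul_nonneg A b hb hba' m.toNat m h (by omega)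
  · have key : ∀ N : ℕ, ∀ m : ℤ, m < 0 → -m ≤ (N : ℤ) → RepQ A b ((m * b : ℤ) : ℚ) := by
      intro N
      induction N with
      | zero => intro m hm hN; omega
      | succ n ih =>
        intro m hm hN
        have hU := U_neg A b hb hba hm
        apply repQ_bstep A b hA hb.ne'
        rcases le_or_gt 0 (Uf A b m) with h' | h'
        · exact repQ_bmul_nonneg A b hb hba' (Uf A b m).toNat _ h' (by omega)
        · exact ih _ h' (by omega)
    exact key (-m).toNat m h (by omega)

lemma repQ_bmul_negb (A b : ℤ) (hb : b < 0) (hba : -b < A) (m : ℤ) :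
    RepQ A b ((m * b : ℤ) : ℚ) := by
  have hA : 0 < A := by omega
  have key : ∀ N : ℕ, ∀ m : ℤ,
      2 * m.natAbs + (if m < 0 then 1 else 0) ≤ N → RepQ A b ((m * b : ℤ) : ℚ) := by
    intro N
    induction N with
    | zero =>
      intro m hm
      have : m = 0 := by omega
      subst this
      simpa using repQ_zero A b hA
    | succ n ih =>
      intro m hm
      rcases lt_trichotomy m 0 with h | h | h
      · obtain ⟨h1, h2⟩ := U_negb_neg A b hb hba h
        rw [if_pos h] at hm
        apply repQ_bstep A b hA hb.ne m
        refine ih _ ?_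
        rw [if_neg (not_lt.mpr h1)]
        omega
      · subst h
        simpa using repQ_zero A b hA
      · obtain ⟨h1, h2⟩ := U_negb_pos A b hb hba h
        rw [if_neg (by omega : ¬ m < 0)] at hm
        apply repQ_bstep A b hA hb.ne m
        refine ih _ ?_
        split_ifs <;> omega
  exact key (2 * m.natAbs + 1) m (by split_ifs <;> omega)

lemma repQ_bmul (A b : ℤ) (hA : 0 < A) (hb0 : b ≠ 0) (hba : |b| < A)
    (hne2 : 0 < b → b + 2 ≤ A) (m : ℤ) : RepQ A b ((m * b : ℤ) : ℚ) := by
  rcases lt_or_gt_of_ne hb0 with h | h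
  · exact repQ_bmul_negb A b h (by rw [abs_of_neg h] at hba; omega) m
  · exact repQ_bmul_pos A b h (hne2 h) m

lemma repQ_int (A b : ℤ) (hA : 0 < A) (hb0 : b ≠ 0) (hba : |b| < A)
    (hne2 : 0 < b → b + 2 ≤ A) (hcop : IsCoprime A b) (z : ℤ) :
    RepQ A b ((z : ℤ) : ℚ) := by
  obtain ⟨u, e, hue⟩ := hcop
  set σ := (z * e) % A with hσdef
  have hσ0 : 0 ≤ σ := Int.emod_nonneg _ hA.ne'
  have hσA : σ < A := Int.emod_lt_of_pos _ hA
  have hmod : σ = z * e - A * ((z * e) / A) := by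
    rw [hσdef, Int.emod_def]
  set m : ℤ := z * u + b * ((z * e) / A) + kf A b σ with hmdef
  have hz : z = dg A b σ + A * m := by
    rw [hmdef]
    unfold dg
    linear_combination z * hue.symm + (-b) * hmod
  have hb0' : (b : ℚ) ≠ 0 := Int.cast_ne_zero.mpr hb0
  have hval : ((z : ℤ) : ℚ) = (dg A b σ : ℚ) + ((A : ℚ) / (b : ℚ)) * ((m * b : ℤ) : ℚ) := by
    have := congrArg (fun t : ℤ => (t : ℚ)) hz
    push_cast at this ⊢
    field_simp
    linear_combination this
  rw [hval]
  exact repQ_step A b (dg_mem' A b hA hσ0 hσA) (repQ_bmul A b hA hb0 hba hne2 m)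

lemma repQ_div_pow (A b : ℤ) (hA : 0 < A) (hb0 : b ≠ 0) (hba : |b| < A)
    (hne2 : 0 < b → b + 2 ≤ A) (hcop : IsCoprime A b) :
    ∀ n : ℕ, ∀ z : ℤ, RepQ A b ((z : ℚ) / (b : ℚ) ^ n) := by
  obtain ⟨u, e, hue⟩ := hcop
  have hcop' : IsCoprime A b := ⟨u, e, hue⟩
  intro n
  induction n with
  | zero =>
    intro z
    simpa using repQ_int A b hA hb0 hba hne2 hcop' z
  | succ n ih =>
    intro z
    set σ := (z * e ^ (n + 2)) % A with hσdef
    have hσ0 : 0 ≤ σ := Int.emod_nonneg _ hA.ne'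
    have hσA : σ < A := Int.emod_lt_of_pos _ hA
    set q := (z * e ^ (n + 2)) / A with hqdef
    have hmod : σ = z * e ^ (n + 2) - A * q := by
      rw [hσdef, hqdef, Int.emod_def]
    have hw : ∃ w : ℤ, (b * e) ^ (n + 2) = 1 + A * w := by
      have h1 : (b * e) ≡ 1 [ZMOD A] := by
        have : A ∣ 1 - b * e := ⟨u, by linarith⟩
        exact (Int.modEq_iff_dvd.mpr this)
      have h2 : (b * e) ^ (n + 2) ≡ 1 [ZMOD A] := by
        simpa using h1.pow (n + 2)
      obtain ⟨w, hw⟩ := Int.modEq_iff_dvd.mp h2.symm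
      exact ⟨w, by linarith⟩
    obtain ⟨w, hw⟩ := hw
    set m : ℤ := -z * w + b ^ (n + 2) * q + kf A b σ * b ^ (n + 1) with hmdef
    have hz : z = dg A b σ * b ^ (n + 1) + A * m := by
      rw [hmdef]
      unfold dg
      linear_combination (-(b : ℤ) ^ (n + 2)) * hmod + (-z) * hw
    have hb0' : (b : ℚ) ≠ 0 := Int.cast_ne_zero.mpr hb0
    have hbp : (b : ℚ) ^ (n + 1) ≠ 0 := pow_ne_zero _ hb0'
    have hval : ((z : ℚ)) / (b : ℚ) ^ (n + 1)
        = (dg A b σ : ℚ) + ((A : ℚ) / (b : ℚ)) * ((m : ℚ) / (b : ℚ) ^ n) := by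
      have := congrArg (fun t : ℤ => (t : ℚ)) hz
      push_cast at this ⊢
      field_simp
      linear_combination ((b : ℚ) ^ (n + 1)) * this
    rw [hval]
    exact repQ_step A b (dg_mem' A b hA hσ0 hσA) (ih m)

lemma repQ_aeval (A b : ℤ) (hA : 0 < A) (hb0 : b ≠ 0) (hba : |b| < A)
    (hne2 : 0 < b → b + 2 ≤ A) (hcop : IsCoprime A b) (P : Polynomial ℤ) :
    RepQ A b (Polynomial.aeval ((A : ℚ) / (b : ℚ)) P) := by
  have hb0' : (b : ℚ) ≠ 0 := Int.cast_ne_zero.mpr hb0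
  set n := P.natDegree with hn
  set u : ℤ := ∑ j ∈ Finset.range (n + 1), P.coeff j * A ^ j * b ^ (n - j) with hu
  have hval : Polynomial.aeval ((A : ℚ) / (b : ℚ)) P = (u : ℚ) / (b : ℚ) ^ n := by
    rw [Polynomial.aeval_eq_sum_range, hu]
    push_cast
    rw [Finset.sum_div]
    apply Finset.sum_congr rfl
    intro j hj
    have hj' : j ≤ n := Nat.lt_succ_iff.mp (Finset.mem_range.mp hj)
    have hbb : (b : ℚ) ^ (n - j) * (b : ℚ) ^ j = (b : ℚ) ^ n := by
      rw [← pow_add]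
      congr 1
      omega
    rw [zsmul_eq_mul, div_pow, ← hbb]
    field_simp
  rw [hval]
  exact repQ_div_pow A b hA hb0 hba hne2 hcop n u

lemma aeval_div_powC (A b : ℤ) (hb0 : b ≠ 0) (P : Polynomial ℤ) :
    Polynomial.aeval ((A : ℂ) / (b : ℂ)) P =
      ((∑ j ∈ Finset.range (P.natDegree + 1),
        P.coeff j * A ^ j * b ^ (P.natDegree - j) : ℤ) : ℂ) / (b : ℂ) ^ P.natDegree := by
  have hb0' : (b : ℂ) ≠ 0 := Int.cast_ne_zero.mpr hb0
  set n := P.natDegree with hn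
  rw [Polynomial.aeval_eq_sum_range]
  push_cast
  rw [Finset.sum_div]
  apply Finset.sum_congr rfl
  intro j hj
  have hj' : j ≤ n := Nat.lt_succ_iff.mp (Finset.mem_range.mp hj)
  have hbb : (b : ℂ) ^ (n - j) * (b : ℂ) ^ j = (b : ℂ) ^ n := by
    rw [← pow_add]
    congr 1
    omega
  rw [zsmul_eq_mul, div_pow, ← hbb]
  field_simp

lemma kd (A b : ℤ) (hb0 : b ≠ 0) (hcop : IsCoprime A b) (R : Polynomial ℤ)
    (h : Polynomial.aeval ((A : ℂ) / (b : ℂ)) R = 0) : A ∣ R.coeff 0 := by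
  have hb0' : (b : ℂ) ≠ 0 := Int.cast_ne_zero.mpr hb0
  set n := R.natDegree with hn
  rw [aeval_div_powC A b hb0 R] at h
  rw [_root_.div_eq_zero_iff] at h
  have hu : (∑ j ∈ Finset.range (n + 1), R.coeff j * A ^ j * b ^ (n - j)) = 0 := by
    rcases h with h | h
    · exact_mod_cast h
    · exact absurd h (pow_ne_zero _ hb0')
  have hsplit := Finset.sum_range_succ' (fun j => R.coeff j * A ^ j * b ^ (n - j)) n
  rw [hu] at hsplit
  have hdvd : A ∣ ∑ j ∈ Finset.range n, R.coeff (j + 1) * A ^ (j + 1) * b ^ (n - (j + 1)) :=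
    Finset.dvd_sum (fun j _ => ⟨R.coeff (j + 1) * A ^ j * b ^ (n - (j + 1)), by ring⟩)
  have h0 : A ∣ R.coeff 0 * b ^ n := by
    have : R.coeff 0 * b ^ n =
        -(∑ j ∈ Finset.range n, R.coeff (j + 1) * A ^ (j + 1) * b ^ (n - (j + 1))) := by
      simp only [pow_zero, Nat.sub_zero, mul_one, one_mul] at hsplit
      linarith [hsplit]
    rw [this]
    exact dvd_neg.mpr hdvd
  exact (hcop.pow_right).dvd_of_dvd_mul_right h0

lemma aeval_div_powQ (A b : ℤ) (hb0 : b ≠ 0) (P : Polynomial ℤ) :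
    Polynomial.aeval ((A : ℚ) / (b : ℚ)) P =
      ((∑ j ∈ Finset.range (P.natDegree + 1),
        P.coeff j * A ^ j * b ^ (P.natDegree - j) : ℤ) : ℚ) / (b : ℚ) ^ P.natDegree := by
  have hb0' : (b : ℚ) ≠ 0 := Int.cast_ne_zero.mpr hb0
  set n := P.natDegree with hn
  rw [Polynomial.aeval_eq_sum_range]
  push_cast
  rw [Finset.sum_div]
  apply Finset.sum_congr rfl
  intro j hj
  have hj' : j ≤ n := Nat.lt_succ_iff.mp (Finset.mem_range.mp hj)
  have hbb : (b : ℚ) ^ (n - j) * (b : ℚ) ^ j = (b : ℚ) ^ n := by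
    rw [← pow_add]
    congr 1
    omega
  rw [zsmul_eq_mul, div_pow, ← hbb]
  field_simp

lemma aeval_cast (A b : ℤ) (hb0 : b ≠ 0) (P : Polynomial ℤ) :
    Polynomial.aeval ((A : ℂ) / (b : ℂ)) P
      = ((Polynomial.aeval ((A : ℚ) / (b : ℚ)) P : ℚ) : ℂ) := by
  rw [aeval_div_powC A b hb0 P, aeval_div_powQ A b hb0 P]
  push_cast
  ring



lemma main_eq (A b : ℤ) (hA : 0 < A) (hb0 : b ≠ 0) (hba : |b| < A)
    (hne2 : 0 < b → b + 2 ≤ A) (hcop : IsCoprime A b) :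
    repSet ((A : ℂ) / (b : ℂ)) ((fun m : ℤ => (m : ℂ)) '' ↑(digs A b))
      = Zadj ((A : ℂ) / (b : ℂ)) := by
  apply Set.eq_of_subset_of_subset
  · rintro z ⟨n, f, hf, hsum⟩
    have hg : ∀ j : ℕ, ∃ m : ℤ, (j ≤ n → m ∈ digs A b ∧ (m : ℂ) = f j) := by
      intro j
      by_cases hj : j ≤ n
      · obtain ⟨m, hm, he⟩ := hf j hj
        exact ⟨m, fun _ => ⟨hm, he⟩⟩
      · exact ⟨0, fun h => absurd h hj⟩
    choose g hg using hg
    refine ⟨∑ j ∈ Finset.range (n + 1), Polynomial.C (g j) * Polynomial.X ^ j, ?_⟩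
    rw [map_sum]
    rw [hsum]
    apply Finset.sum_congr rfl
    intro j hj
    have hj' : j ≤ n := Nat.lt_succ_iff.mp (Finset.mem_range.mp hj)
    rw [map_mul, Polynomial.aeval_C, Polynomial.aeval_X_pow, eq_intCast, (hg j hj').2]
  · rintro z ⟨P, hP⟩
    obtain ⟨n, f, hf, hsum⟩ := repQ_aeval A b hA hb0 hba hne2 hcop P
    refine ⟨n, fun j => (f j : ℂ), fun j hj => ⟨f j, hf j hj, rfl⟩, ?_⟩
    have hcast := congrArg (fun q : ℚ => (q : ℂ)) hsum
    push_cast at hcast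
    rw [← hP, aeval_cast A b hb0 P]
    exact hcast

lemma mem_repSet_self (α : ℂ) (S : Finset ℂ) {s : ℂ} (hs : s ∈ S) :
    s ∈ repSet α ↑S :=
  ⟨0, fun _ => s, fun _ _ => hs, by simp⟩

lemma lower_bound (a : ℕ) (b : ℤ) (ha2 : 2 ≤ a) (hb0 : b ≠ 0)
    (hcop : IsCoprime (a : ℤ) b) (S : Finset ℂ)
    (hS : repSet ((a : ℂ) / (b : ℂ)) ↑S = Zadj ((a : ℂ) / (b : ℂ))) :
    a ≤ S.card := by
  classical
  haveI : NeZero a := ⟨by omega⟩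
  set α : ℂ := (a : ℂ) / (b : ℂ) with hα
  set res : ℂ → ZMod a := fun z =>
    if h : ∃ P : Polynomial ℤ, aeval α P = z then ((h.choose.coeff 0 : ℤ) : ZMod a) else 0
    with hres
  have res_eq : ∀ (z : ℂ) (P : Polynomial ℤ), aeval α P = z →
      res z = ((P.coeff 0 : ℤ) : ZMod a) := by
    intro z P hP
    have hz : ∃ Q : Polynomial ℤ, aeval α Q = z := ⟨P, hP⟩
    have hspec : aeval α hz.choose = z := hz.choose_spec
    have hcc : (((a : ℕ) : ℤ) : ℂ) = ((a : ℕ) : ℂ) := by push_cast; ring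
    have hdvd : (a : ℤ) ∣ (hz.choose - P).coeff 0 := by
      apply kd (a : ℤ) b hb0 hcop
      rw [hcc, map_sub, hspec, hP, sub_self]
    rw [hres]
    simp only [dif_pos hz]
    rw [Polynomial.coeff_sub] at hdvd
    have : (hz.choose.coeff 0 : ZMod a) = ((P.coeff 0 : ℤ) : ZMod a) := by
      rw [ZMod.intCast_eq_intCast_iff]
      exact Int.modEq_iff_dvd.mpr (by simpa using dvd_neg.mpr hdvd)
    exact this
  have hsurj : ∀ t : ZMod a, ∃ s ∈ S, res s = t := by
    intro t
    have hP₀ : aeval α (Polynomial.C ((t.val : ℕ) : ℤ)) = ((t.val : ℤ) : ℂ) := by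
      rw [Polynomial.aeval_C, eq_intCast]
    have hzZ : ((t.val : ℤ) : ℂ) ∈ Zadj α := ⟨Polynomial.C ((t.val : ℕ) : ℤ), hP₀⟩
    rw [← hS] at hzZ
    obtain ⟨n, f, hf, hsum⟩ := hzZ
    have hfS : ∀ j, j ≤ n → f j ∈ S := fun j hj => hf j hj
    have hfZ : ∀ j : ℕ, ∃ P : Polynomial ℤ, (j ≤ n → aeval α P = f j) := by
      intro j
      by_cases hj : j ≤ n
      · have : f j ∈ Zadj α := by
          rw [← hS]
          exact mem_repSet_self α S (hfS j hj)
        obtain ⟨P, hP⟩ := this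
        exact ⟨P, fun _ => hP⟩
      · exact ⟨0, fun h => absurd h hj⟩
    choose Pg hPg using hfZ
    set Q : Polynomial ℤ := ∑ j ∈ Finset.range (n + 1), Pg j * Polynomial.X ^ j with hQ
    have hQev : aeval α Q = ((t.val : ℤ) : ℂ) := by
      rw [hQ, map_sum, hsum]
      apply Finset.sum_congr rfl
      intro j hj
      have hj' : j ≤ n := Nat.lt_succ_iff.mp (Finset.mem_range.mp hj)
      rw [map_mul, Polynomial.aeval_X_pow, hPg j hj']
    have hQ0 : Q.coeff 0 = (Pg 0).coeff 0 := by
      rw [hQ, Polynomial.finset_sum_coeff]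
      rw [Finset.sum_eq_single 0]
      · simp
      · intro j hj hj0
        rw [Polynomial.coeff_mul_X_pow']
        rw [if_neg (by omega)]
      · intro h
        exact absurd (Finset.mem_range.mpr (by omega)) h
    have h1 : res ((t.val : ℤ) : ℂ) = ((Q.coeff 0 : ℤ) : ZMod a) := res_eq _ Q hQev
    have h2 : res (f 0) = (((Pg 0).coeff 0 : ℤ) : ZMod a) :=
      res_eq _ (Pg 0) (hPg 0 (Nat.zero_le n))
    have h3 : res ((t.val : ℤ) : ℂ) = ((t.val : ℤ) : ZMod a) := by
      rw [res_eq _ (Polynomial.C ((t.val : ℕ) : ℤ)) hP₀]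
      rw [Polynomial.coeff_C_zero]
    refine ⟨f 0, hfS 0 (Nat.zero_le n), ?_⟩
    rw [h2, ← hQ0, ← h1, h3]
    push_cast
    rw [ZMod.natCast_val, ZMod.cast_id]
  have hsub : Finset.univ ⊆ S.image res := by
    intro t _
    obtain ⟨s, hs, hst⟩ := hsurj t
    exact Finset.mem_image.mpr ⟨s, hs, hst⟩
  calc a = Fintype.card (ZMod a) := (ZMod.card a).symm
    _ = Finset.univ.card := (Finset.card_univ).symm
    _ ≤ (S.image res).card := Finset.card_le_card hsub
    _ ≤ S.card := Finset.card_image_le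

end RatBase

/-- Let `α = a/b` with `a ∈ ℕ`, `b ∈ ℤ`, `a > |b| ≥ 1`, `gcd(a,b) = 1` and `a ≠ b + 1`.
Then `α ∈ 𝓕_a`, and one can choose `S ⊆ ℤ` with `0 ∈ S`, `Card(S) = a` and `ℤ[α] = S[α]`. -/
theorem rational_number_system (a : ℕ) (b : ℤ) (h1 : 1 ≤ |b|) (h2 : |b| < (a : ℤ))
    (hgcd : Int.gcd (a : ℤ) b = 1) (hne : (a : ℤ) ≠ b + 1) :
    memF ((a : ℂ) / (b : ℂ)) a ∧
    ∃ S : Finset ℤ, (0 : ℤ) ∈ S ∧ S.card = a ∧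
      repSet ((a : ℂ) / (b : ℂ)) ((fun m : ℤ => (m : ℂ)) '' ↑S) =
        Zadj ((a : ℂ) / (b : ℂ)) := by
  have hb0 : b ≠ 0 := by
    intro h
    rw [h] at h1
    simp at h1
  have hcop : IsCoprime ((a : ℕ) : ℤ) b := Int.isCoprime_iff_gcd_eq_one.mpr hgcd
  have hA : 0 < ((a : ℕ) : ℤ) := lt_of_le_of_lt (abs_nonneg b) h2
  have habs : |b| = b ∨ |b| = -b := abs_choice b
  have ha2 : 2 ≤ a := by rcases habs with h | h <;> omega
  have hne2 : 0 < b → b + 2 ≤ ((a : ℕ) : ℤ) := by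
    intro hbpos
    rcases habs with h | h <;> omega
  have hcc : ((((a : ℕ) : ℤ)) : ℂ) = ((a : ℕ) : ℂ) := by push_cast; ring
  have hmain : repSet ((a : ℂ) / (b : ℂ))
      ((fun m : ℤ => (m : ℂ)) '' ↑(RatBase.digs ((a : ℕ) : ℤ) b))
      = Zadj ((a : ℂ) / (b : ℂ)) := by
    have := RatBase.main_eq ((a : ℕ) : ℤ) b hA hb0 h2 hne2 hcop
    rw [hcc] at this
    exact this
  have hcard : (RatBase.digs ((a : ℕ) : ℤ) b).card = a := by
    rw [RatBase.digs_card ((a : ℕ) : ℤ) b hA hcop]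
    omega
  have hzero : (0 : ℤ) ∈ RatBase.digs ((a : ℕ) : ℤ) b := RatBase.zero_mem_digs _ _ hA
  refine ⟨⟨⟨(RatBase.digs ((a : ℕ) : ℤ) b).image (fun m : ℤ => (m : ℂ)), ?_, ?_⟩, ?_⟩,
    ⟨RatBase.digs ((a : ℕ) : ℤ) b, hzero, hcard, hmain⟩⟩
  · rw [Finset.card_image_of_injective _ (Int.cast_injective : Function.Injective (fun m : ℤ => (m : ℂ)))]
    exact hcard
  · rw [Finset.coe_image]
    exact hmain
  · intro S hS
    exact RatBase.lower_bound a b ha2 hb0 hcop S hS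
end

section
/- Let α = a/b where a ∈ ℕ, b ∈ ℤ, a > |b| ≥ 1, gcd(a, b) = 1 and a = b + 1. Then α ∈ 𝓕_{2a−1} (note |M_α(0)| = a since M_α(x) = bx − a), and moreover one can choose a set S ⊆ ℤ with 0 ∈ S, Card(S) = 2a − 1, and ℤ[α] = S[α]; explicitly S = {−a+1, …, a−1} works, and no finite set of smaller cardinality works. -/
open Polynomial

namespace RationalSuccAux

abbrev Dig (a : ℕ) : Set ℂ := (fun m : ℤ => (m : ℂ)) '' ↑(Finset.Icc (-(a : ℤ) + 1) ((a : ℤ) - 1))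

lemma mem_Dig {a : ℕ} {m : ℤ} (h1 : -(a:ℤ)+1 ≤ m) (h2 : m ≤ (a:ℤ)-1) : (m:ℂ) ∈ Dig a :=
  ⟨m, by simpa [Finset.mem_Icc] using And.intro h1 h2, rfl⟩

lemma sum_shift (α : ℂ) (g : ℕ → ℂ) (n : ℕ) :
    ∑ j ∈ Finset.range (n+1), g j * α ^ j
      = g 0 + α * ∑ j ∈ Finset.range n, g (j+1) * α ^ j := by
  rw [Finset.sum_range_succ', Finset.mul_sum]
  simp only [pow_zero, mul_one]
  rw [add_comm]
  congr 1
  refine Finset.sum_congr rfl fun j _ => ?_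
  ring

lemma single_mem {α : ℂ} {F : Set ℂ} {r : ℂ} (hr : r ∈ F) : r ∈ repSet α F := by
  refine ⟨0, fun _ => r, fun j _ => hr, ?_⟩
  simp

lemma prepend {α : ℂ} {F : Set ℂ} {r z : ℂ} (hr : r ∈ F) (hz : z ∈ repSet α F) :
    r + α * z ∈ repSet α F := by
  obtain ⟨n, f, hf, rfl⟩ := hz
  refine ⟨n+1, fun j => if j = 0 then r else f (j-1), fun j hj => ?_, ?_⟩
  · by_cases h : j = 0
    · simpa [h] using hr
    · simpa [h] using hf (j-1) (by omega)
  · conv_rhs => rw [sum_shift]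
    simp

lemma cast_pow_split {b α A : ℂ} (hbα : b * α = A) {j k : ℕ} (hjk : j ≤ k) :
    α ^ j * b ^ k = A ^ j * b ^ (k - j) := by
  obtain ⟨l, rfl⟩ : ∃ l, k = j + l := ⟨k - j, by omega⟩
  rw [Nat.add_sub_cancel_left]
  calc α ^ j * b ^ (j + l) = (b * α) ^ j * b ^ l := by rw [mul_pow, pow_add]; ring
    _ = A ^ j * b ^ l := by rw [hbα]

lemma decomp {a : ℕ} {b : ℤ} (ha : 2 ≤ a) (hab : (a:ℤ) = b + 1) {N : ℤ}
    (hN : (a:ℤ) ≤ N ∨ N ≤ -(a:ℤ)) :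
    ∃ q r : ℤ, N = (a:ℤ) * q + r ∧ -(a:ℤ)+1 ≤ r ∧ r ≤ (a:ℤ)-1 ∧ (b*q).natAbs < N.natAbs := by
  have ha2 : (2:ℤ) ≤ (a:ℤ) := by exact_mod_cast ha
  have ha0 : (0:ℤ) < (a:ℤ) := by omega
  rcases hN with hpos | hneg
  · refine ⟨N / a, N % a, (Int.mul_ediv_add_emod N a).symm, ?_, ?_, ?_⟩
    · have := Int.emod_nonneg N (by omega : (a:ℤ) ≠ 0); omega
    · have := Int.emod_lt_of_pos N ha0; omega
    · have hq1 : 1 ≤ N / (a:ℤ) := by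
        rw [Int.le_ediv_iff_mul_le ha0]; omega
      have hdm := Int.mul_ediv_add_emod N (a:ℤ)
      have hm0 := Int.emod_nonneg N (by omega : (a:ℤ) ≠ 0)
      have hm1 := Int.emod_lt_of_pos N ha0
      have e : (a:ℤ) * (N / a) - b * (N / a) = N / a := by rw [hab]; ring
      have hds : N / (a:ℤ) ≤ N := Int.ediv_le_self _ (by omega)
      omega
  · refine ⟨-((-N) / a), -((-N) % a), ?_, ?_, ?_, ?_⟩
    · have hdm := Int.mul_ediv_add_emod (-N) (a:ℤ)
      have e0 : (a:ℤ) * -((-N)/a) = -((a:ℤ)*((-N)/a)) := by ring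
      omega
    · have := Int.emod_lt_of_pos (-N) ha0; omega
    · have := Int.emod_nonneg (-N) (by omega : (a:ℤ) ≠ 0); omega
    · have hq1 : 1 ≤ (-N) / (a:ℤ) := by
        rw [Int.le_ediv_iff_mul_le ha0]; omega
      have hdm := Int.mul_ediv_add_emod (-N) (a:ℤ)
      have hm0 := Int.emod_nonneg (-N) (by omega : (a:ℤ) ≠ 0)
      have hm1 := Int.emod_lt_of_pos (-N) ha0
      have e : (a:ℤ) * ((-N) / a) - b * ((-N) / a) = (-N) / a := by rw [hab]; ring
      have e2 : b * -((-N) / a) = -(b * ((-N)/a)) := by ring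
      have hds : (-N) / (a:ℤ) ≤ -N := Int.ediv_le_self _ (by omega)
      omega

lemma intRep {a : ℕ} {b : ℤ} {α : ℂ} (ha : 2 ≤ a) (hab : (a:ℤ) = b + 1)
    (hbα : (b:ℂ) * α = ((a:ℕ):ℂ)) : ∀ N : ℤ, (N:ℂ) ∈ repSet α (Dig a) := by
  suffices H : ∀ n : ℕ, ∀ N : ℤ, N.natAbs = n → (N:ℂ) ∈ repSet α (Dig a) from fun N => H _ N rfl
  intro n
  induction n using Nat.strong_induction_on with
  | _ n IH =>
    intro N hn
    have ha2 : (2:ℤ) ≤ (a:ℤ) := by exact_mod_cast ha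
    by_cases hsmall : -(a:ℤ)+1 ≤ N ∧ N ≤ (a:ℤ)-1
    · exact single_mem (mem_Dig hsmall.1 hsmall.2)
    · have hN : (a:ℤ) ≤ N ∨ N ≤ -(a:ℤ) := by omega
      obtain ⟨q, r, hNe, hr1, hr2, hlt⟩ := decomp ha hab hN
      have hmem := IH (b*q).natAbs (hn ▸ hlt) (b*q) rfl
      have hNc : (N:ℂ) = ((a:ℕ):ℂ)*(q:ℂ) + (r:ℂ) := by exact_mod_cast hNe
      have hcast : (N:ℂ) = (r:ℂ) + α * ((b*q : ℤ):ℂ) := by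
        push_cast
        push_cast at hNc
        linear_combination hNc - (q:ℂ) * hbα
      rw [hcast]
      exact prepend (mem_Dig hr1 hr2) hmem

lemma polyRep {a : ℕ} {b : ℤ} {α : ℂ} (ha : 2 ≤ a) (hab : (a:ℤ) = b + 1)
    (hbα : (b:ℂ) * α = ((a:ℕ):ℂ)) :
    ∀ (n : ℕ) (c : ℕ → ℤ), (∑ j ∈ Finset.range n, (c j : ℂ) * α ^ j) ∈ repSet α (Dig a) := by
  intro n
  induction n with
  | zero => intro c; simpa using intRep ha hab hbα 0
  | succ n IH =>
    cases n with
    | zero => intro c; simpa using intRep ha hab hbα (c 0)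
    | succ m =>
      intro c
      have ha2 : (2:ℤ) ≤ (a:ℤ) := by exact_mod_cast ha
      set q := c 0 / (a:ℤ) with hqdef
      have hr0 : 0 ≤ c 0 % (a:ℤ) := Int.emod_nonneg _ (by omega)
      have hr1 : c 0 % (a:ℤ) < (a:ℤ) := Int.emod_lt_of_pos _ (by omega)
      have hdm := Int.mul_ediv_add_emod (c 0) (a:ℤ)
      have hIH := IH (fun j => if j = 0 then c 1 + b * q else c (j+1))
      have E1 : ∑ j ∈ Finset.range (m+1+1), (c j : ℂ) * α ^ j
          = (c 0 : ℂ) + α * ((c 1 : ℂ) + α * ∑ j ∈ Finset.range m, (c (j+2) : ℂ) * α ^ j) := by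
        rw [sum_shift α (fun j => ((c j : ℤ):ℂ)) (m+1),
            sum_shift α (fun j => ((c (j+1) : ℤ):ℂ)) m]
      have E2 : ∑ j ∈ Finset.range (m+1), ((if j = 0 then c 1 + b*q else c (j+1) : ℤ):ℂ) * α ^ j
          = ((c 1 + b*q : ℤ):ℂ) + α * ∑ j ∈ Finset.range m, (c (j+2) : ℂ) * α ^ j := by
        rw [sum_shift α (fun j => ((if j = 0 then c 1 + b*q else c (j+1) : ℤ):ℂ)) m]
        simp
      have hdmC : ((a:ℕ):ℂ) * (q:ℂ) + ((c 0 % (a:ℤ) : ℤ):ℂ) = ((c 0 : ℤ):ℂ) := by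
        exact_mod_cast hdm
      have key : ∑ j ∈ Finset.range (m+1+1), (c j : ℂ) * α ^ j
          = ((c 0 % (a:ℤ) : ℤ):ℂ) + α * ∑ j ∈ Finset.range (m+1),
              ((if j = 0 then c 1 + b*q else c (j+1) : ℤ):ℂ) * α ^ j := by
        rw [E1, E2]
        push_cast
        push_cast at hdmC
        linear_combination -hdmC - (q:ℂ) * hbα
      rw [key]
      exact prepend (mem_Dig (by omega) (by omega)) hIH

lemma repSet_eq_Zadj {a : ℕ} {b : ℤ} {α : ℂ} (ha : 2 ≤ a) (hab : (a:ℤ) = b + 1)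
    (hbα : (b:ℂ) * α = ((a:ℕ):ℂ)) :
    repSet α (Dig a) = Zadj α := by
  ext z
  constructor
  · rintro ⟨n, f, hf, rfl⟩
    classical
    have hg : ∀ j, ∃ m : ℤ, (j ≤ n → (m:ℂ) = f j) := by
      intro j
      by_cases hj : j ≤ n
      · obtain ⟨m, _, hm2⟩ := hf j hj
        exact ⟨m, fun _ => hm2⟩
      · exact ⟨0, fun hc => absurd hc hj⟩
    choose g hgs using hg
    refine ⟨∑ j ∈ Finset.range (n+1), C (g j) * X ^ j, ?_⟩
    rw [map_sum]
    refine Finset.sum_congr rfl fun j hj => ?_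
    rw [map_mul, aeval_C, map_pow, aeval_X]
    simp [hgs j (by simpa [Nat.lt_succ_iff] using hj)]
  · rintro ⟨P, rfl⟩
    rw [Polynomial.aeval_eq_sum_range]
    simp only [zsmul_eq_mul]
    exact polyRep ha hab hbα (P.natDegree + 1) P.coeff

lemma uniform_den {b : ℤ} (S : Finset ℂ)
    (h : ∀ s ∈ S, ∃ (k : ℕ) (m : ℤ), s * (b:ℂ)^k = (m:ℂ)) :
    ∃ N : ℕ, ∀ s ∈ S, ∃ m : ℤ, s * (b:ℂ)^N = (m:ℂ) := by
  classical
  induction S using Finset.induction with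
  | empty => exact ⟨0, by simp⟩
  | @insert x s hx ih =>
    obtain ⟨N, hN⟩ := ih (fun t ht => h t (Finset.mem_insert_of_mem ht))
    obtain ⟨k, m, hm⟩ := h x (Finset.mem_insert_self _ _)
    refine ⟨N + k, fun t ht => ?_⟩
    rcases Finset.mem_insert.1 ht with rfl | ht
    · refine ⟨m * b^N, ?_⟩
      calc t * (b:ℂ)^(N+k) = t * (b:ℂ)^k * (b:ℂ)^N := by rw [pow_add]; ring
        _ = (m:ℂ) * (b:ℂ)^N := by rw [hm]
        _ = ((m * b^N : ℤ):ℂ) := by push_cast; ring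
    · obtain ⟨m', hm'⟩ := hN t ht
      refine ⟨m' * b^k, ?_⟩
      calc t * (b:ℂ)^(N+k) = t * (b:ℂ)^N * (b:ℂ)^k := by rw [pow_add]; ring
        _ = (m':ℂ) * (b:ℂ)^k := by rw [hm']
        _ = ((m' * b^k : ℤ):ℂ) := by push_cast; ring

lemma lower_bound {a : ℕ} {b : ℤ} {α : ℂ} (ha : 2 ≤ a) (hab : (a:ℤ) = b + 1)
    (hbα : (b:ℂ) * α = ((a:ℕ):ℂ)) (S : Finset ℂ)
    (h : repSet α ↑S = Zadj α) : 2 * a - 1 ≤ S.card := by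
  classical
  haveI : NeZero a := ⟨by omega⟩
  have haC : ((a:ℕ):ℂ) ≠ 0 := Nat.cast_ne_zero.2 (by omega)
  have hα0 : α ≠ 0 := by
    intro h0; rw [h0, mul_zero] at hbα; exact haC hbα.symm
  have hSZ : ∀ s ∈ S, s ∈ Zadj α := by
    intro s hs
    rw [← h]
    exact single_mem (by exact_mod_cast hs)
  -- denominators
  have hden : ∀ s ∈ S, ∃ (k : ℕ) (m : ℤ), s * (b:ℂ)^k = (m:ℂ) := by
    intro s hs
    obtain ⟨P, rfl⟩ := hSZ s hs
    refine ⟨P.natDegree, ∑ j ∈ Finset.range (P.natDegree+1),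
      P.coeff j * (a:ℤ)^j * b^(P.natDegree - j), ?_⟩
    rw [Polynomial.aeval_eq_sum_range]
    simp only [zsmul_eq_mul]
    rw [Finset.sum_mul]
    push_cast
    refine Finset.sum_congr rfl fun j hj => ?_
    rw [mul_assoc, mul_assoc, cast_pow_split hbα (by simpa [Nat.lt_succ_iff] using hj)]
  obtain ⟨N, hNS⟩ := uniform_den S hden
  -- the integer numerators
  set M : ℂ → ℤ := fun s =>
    if hm : ∃ m : ℤ, s * (b:ℂ)^N = (m:ℂ) then hm.choose else 0 with hMdef
  have hM : ∀ s ∈ S, s * (b:ℂ)^N = ((M s : ℤ) : ℂ) := by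
    intro s hs
    have e : ∃ m : ℤ, s * (b:ℂ)^N = (m:ℂ) := hNS s hs
    have : M s = e.choose := by rw [hMdef]; exact dif_pos e
    rw [this]; exact e.choose_spec
  -- b ≡ -1 mod a
  have hbZ : ((b : ℤ) : ZMod a) = -1 := by
    have h0 : ((a:ℕ) : ZMod a) = 0 := ZMod.natCast_self a
    have h2 : ((b + 1 : ℤ) : ZMod a) = 0 := by
      rw [← hab]; push_cast; rw [h0]
    push_cast at h2
    linear_combination h2
  -- key congruence
  have key : ∀ (n : ℕ) (f : ℕ → ℂ) (w : ℤ), (∀ j ≤ n, f j ∈ S) →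
      ((w : ℂ) = (∑ j ∈ Finset.range (n+1), f j * α ^ j) * (b:ℂ)^(N + n)) →
      (w : ZMod a) = (M (f 0) : ZMod a) * (-1)^n := by
    intro n f w hf hw
    have hint : (w : ℂ)
        = ((∑ j ∈ Finset.range (n+1), M (f j) * (a:ℤ)^j * b^(n-j) : ℤ) : ℂ) := by
      rw [hw, Finset.sum_mul]
      push_cast
      refine Finset.sum_congr rfl fun j hj => ?_
      have hj' : j ≤ n := by simpa [Nat.lt_succ_iff] using hj
      have hMj := hM (f j) (hf j hj')
      have hsplit : (b:ℂ)^(N+n) = (b:ℂ)^N * (b:ℂ)^n := pow_add _ _ _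
      calc f j * α^j * (b:ℂ)^(N+n)
          = (f j * (b:ℂ)^N) * (α^j * (b:ℂ)^n) := by rw [hsplit]; ring
        _ = ((M (f j) : ℤ):ℂ) * (((a:ℕ):ℂ)^j * (b:ℂ)^(n-j)) := by
            rw [hMj, cast_pow_split hbα hj']
        _ = _ := by push_cast; ring
    have hZ : w = ∑ j ∈ Finset.range (n+1), M (f j) * (a:ℤ)^j * b^(n-j) := by
      exact_mod_cast hint
    have hZ2 : (w : ZMod a)
        = ((∑ j ∈ Finset.range (n+1), M (f j) * (a:ℤ)^j * b^(n-j) : ℤ) : ZMod a) := by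
      exact_mod_cast congrArg (fun t : ℤ => (t : ZMod a)) hZ
    push_cast at hZ2
    rw [Finset.sum_eq_single 0 (fun j _ hj0 => by
        simp [ZMod.natCast_self, zero_pow hj0])
      (fun habs => absurd (Finset.mem_range.2 (Nat.succ_pos n)) habs)] at hZ2
    rw [hZ2, hbZ]
    simp
  -- the residue function
  set φ : ℂ → ZMod a := fun s => (M s : ZMod a) * (-1)^N with hφdef
  have hsqN : ((-1 : ZMod a))^N * (-1)^N = 1 := by
    rw [← pow_add]
    exact Even.neg_one_pow ⟨N, rfl⟩
  -- claim 1 : all residues covered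
  have claim1 : ∀ r : ZMod a, ∃ s ∈ S, φ s = r := by
    intro r
    have hz : ((r.val : ℤ) : ℂ) ∈ Zadj α := ⟨C (r.val : ℤ), by rw [aeval_C, eq_intCast]⟩
    rw [← h] at hz
    obtain ⟨n, f, hf, hsum⟩ := hz
    refine ⟨f 0, hf 0 (Nat.zero_le n), ?_⟩
    have hw : (((r.val : ℤ) * b^(N+n) : ℤ) : ℂ)
        = (∑ j ∈ Finset.range (n+1), f j * α^j) * (b:ℂ)^(N+n) := by
      rw [← hsum]; push_cast; ring
    have hk := key n f _ hf hw
    push_cast at hk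
    rw [hbZ] at hk
    simp only [ZMod.natCast_val, ZMod.cast_id] at hk
    -- hk : r * (-1)^(N+n) = M (f 0) * (-1)^n
    have hEn : ((-1 : ZMod a))^n * (-1)^n = 1 := by
      rw [← pow_add]; exact Even.neg_one_pow ⟨n, rfl⟩
    have hMf : (M (f 0) : ZMod a) = r * (-1)^N := by
      rw [pow_add] at hk
      linear_combination (-(-1:ZMod a)^n) * hk + (r * (-1:ZMod a)^N - (M (f 0):ZMod a)) * hEn
    rw [hφdef]
    simp only
    rw [hMf, mul_assoc, hsqN, mul_one]
  -- M at 0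
  have hMzero : (0:ℂ) ∈ S → M 0 = 0 := by
    intro h0
    have := hM 0 h0
    rw [zero_mul] at this
    exact_mod_cast this.symm
  -- claim 2 : nonzero digits are not alone in their class
  have claim2 : ∀ s ∈ S, s ≠ 0 → ∃ s' ∈ S, φ s' = φ s ∧ s' ≠ s := by
    intro s hsS hs0
    by_contra hcon
    push_neg at hcon
    have hcon' : ∀ s' ∈ S, φ s' = φ s → s' = s := by
      intro s' hs' he
      by_contra hne
      exact hne (hcon s' hs' he)
    -- the forced-digit property
    have hdigit : ∀ (n : ℕ) (f : ℕ → ℂ), (∀ j ≤ n, f j ∈ S) →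
        (-s * (b:ℂ) = ∑ j ∈ Finset.range (n+1), f j * α ^ j) → f 0 = s := by
      intro n f hf hsum
      have hw : ((-(M s) * b^(n+1) : ℤ) : ℂ)
          = (∑ j ∈ Finset.range (n+1), f j * α^j) * (b:ℂ)^(N+n) := by
        rw [← hsum]
        have hMs := hM s hsS
        push_cast
        linear_combination ((b:ℂ)^(n+1)) * hMs
      have hk := key n f _ hf hw
      push_cast at hk
      rw [hbZ] at hk
      -- hk : -(M s) * (-1)^(n+1) = M (f 0) * (-1)^n
      have hEn : ((-1 : ZMod a))^n * (-1)^n = 1 := by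
        rw [← pow_add]; exact Even.neg_one_pow ⟨n, rfl⟩
      have hMeq : (M (f 0) : ZMod a) = (M s : ZMod a) := by
        rw [pow_succ] at hk
        linear_combination (-(-1:ZMod a)^n) * hk + ((M s : ZMod a) - (M (f 0):ZMod a)) * hEn
      apply hcon' (f 0) (hf 0 (Nat.zero_le n))
      rw [hφdef]
      simp only
      rw [hMeq]
    -- induction: the representation can never terminate
    have hforce : ∀ (n : ℕ) (f : ℕ → ℂ), (∀ j ≤ n, f j ∈ S) →
        (-s * (b:ℂ) = ∑ j ∈ Finset.range (n+1), f j * α ^ j) → False := by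
      intro n
      induction n with
      | zero =>
        intro f hf hsum
        have hf0 := hdigit 0 f hf hsum
        have hone : -s * (b:ℂ) = s := by
          have h1 : -s * (b:ℂ) = f 0 := by simpa using hsum
          rw [hf0] at h1
          exact h1
        have hba : ((b:ℂ) + 1) = ((a:ℕ):ℂ) := by
          have : ((b + 1 : ℤ):ℂ) = (((a:ℕ):ℤ):ℂ) := by exact_mod_cast congrArg (fun t : ℤ => (t:ℂ)) hab.symm
          push_cast at this
          exact this
        have : s * ((a:ℕ):ℂ) = 0 := by
          rw [← hba]
          linear_combination -hone
        rcases mul_eq_zero.1 this with h' | h'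
        · exact hs0 h'
        · exact haC h'
      | succ n IH =>
        intro f hf hsum
        have hf0 := hdigit (n+1) f hf hsum
        rw [sum_shift] at hsum
        -- hsum : -s*b = f 0 + α * T
        have hba : ((b:ℂ) + 1) = ((a:ℕ):ℂ) := by
          have : ((b + 1 : ℤ):ℂ) = (((a:ℕ):ℤ):ℂ) := by exact_mod_cast congrArg (fun t : ℤ => (t:ℂ)) hab.symm
          push_cast at this
          exact this
        have hT : α * (∑ j ∈ Finset.range (n+1), f (j+1) * α ^ j) = α * (-s * (b:ℂ)) := by
          rw [hf0] at hsum
          linear_combination -hsum + s * hbα - s * hba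
        have hT2 := mul_left_cancel₀ hα0 hT
        exact IH (fun j => f (j+1)) (fun j hj => hf (j+1) (by omega)) hT2.symm
    -- -s*b is representable
    have hz : -s * (b:ℂ) ∈ Zadj α := by
      obtain ⟨P, hP⟩ := hSZ s hsS
      refine ⟨C (-b) * P, ?_⟩
      rw [map_mul, aeval_C, hP, eq_intCast]
      push_cast
      ring
    rw [← h] at hz
    obtain ⟨n, f, hf, hsum⟩ := hz
    exact hforce n f hf hsum
  -- counting
  have hcards : S.card = ∑ r : ZMod a, (S.filter fun s => φ s = r).card :=
    Finset.card_eq_sum_card_fiberwise (fun s _ => Finset.mem_univ (φ s))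
  have hbound : ∀ r : ZMod a, (if r = 0 then 1 else 2) ≤ (S.filter fun s => φ s = r).card := by
    intro r
    obtain ⟨s, hsS, hsr⟩ := claim1 r
    by_cases hr : r = 0
    · rw [if_pos hr]
      exact Finset.card_pos.2 ⟨s, Finset.mem_filter.2 ⟨hsS, hsr⟩⟩
    · rw [if_neg hr]
      have hs0 : s ≠ 0 := by
        intro h0
        rw [h0] at hsr hsS
        apply hr
        rw [← hsr, hφdef]
        simp only
        rw [hMzero hsS]
        simp
      obtain ⟨s', hs'S, hs'φ, hne⟩ := claim2 s hsS hs0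
      exact Finset.one_lt_card.2 ⟨s, Finset.mem_filter.2 ⟨hsS, hsr⟩,
        s', Finset.mem_filter.2 ⟨hs'S, by rw [hs'φ, hsr]⟩, Ne.symm hne⟩
  have hsum2 : ∑ r : ZMod a, (if r = 0 then 1 else 2)
      ≤ ∑ r : ZMod a, (S.filter fun s => φ s = r).card :=
    Finset.sum_le_sum (fun r _ => hbound r)
  have hval : ∑ r : ZMod a, (if r = 0 then (1:ℕ) else 2) = 2*a - 1 := by
    rw [← Finset.sum_erase_add _ _ (Finset.mem_univ (0 : ZMod a)), if_pos rfl]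
    rw [Finset.sum_congr rfl (fun r hr => if_neg (Finset.mem_erase.1 hr).1)]
    rw [Finset.sum_const, smul_eq_mul]
    have hcard : (Finset.univ.erase (0 : ZMod a)).card = a - 1 := by
      rw [Finset.card_erase_of_mem (Finset.mem_univ _), Finset.card_univ, ZMod.card]
    rw [hcard]
    omega
  omega

end RationalSuccAux

/-- Let `α = a/b` with `a ∈ ℕ`, `b ∈ ℤ`, `a > |b| ≥ 1`, `gcd(a,b) = 1` and `a = b + 1`.
Then `α ∈ 𝓕_{2a−1}`; explicitly `S = {−a+1, …, a−1}` satisfies `ℤ[α] = S[α]`, `0 ∈ S`,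
`Card(S) = 2a − 1`, and no finite set of smaller cardinality works. -/
theorem rational_succ_case (a : ℕ) (b : ℤ) (h1 : 1 ≤ |b|) (h2 : |b| < (a : ℤ))
    (hgcd : Int.gcd (a : ℤ) b = 1) (heq : (a : ℤ) = b + 1) :
    memF ((a : ℂ) / (b : ℂ)) (2 * a - 1) ∧
    ((0 : ℤ) ∈ Finset.Icc (-(a : ℤ) + 1) ((a : ℤ) - 1) ∧
      (Finset.Icc (-(a : ℤ) + 1) ((a : ℤ) - 1)).card = 2 * a - 1 ∧
      repSet ((a : ℂ) / (b : ℂ))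
          ((fun m : ℤ => (m : ℂ)) '' ↑(Finset.Icc (-(a : ℤ) + 1) ((a : ℤ) - 1))) =
        Zadj ((a : ℂ) / (b : ℂ))) ∧
    ∀ S : Finset ℂ, S.card < 2 * a - 1 →
      repSet ((a : ℂ) / (b : ℂ)) ↑S ≠ Zadj ((a : ℂ) / (b : ℂ)) := by
  have hb : 1 ≤ b := by rcases abs_cases b with ⟨e1,e2⟩|⟨e1,e2⟩ <;> omega
  have ha : 2 ≤ a := by rcases abs_cases b with ⟨e1,e2⟩|⟨e1,e2⟩ <;> omega
  have hbα : (b:ℂ) * ((a:ℂ)/(b:ℂ)) = ((a:ℕ):ℂ) := by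
    have hb0 : (b:ℂ) ≠ 0 := Int.cast_ne_zero.2 (by omega)
    field_simp
  have hEq : repSet ((a:ℂ)/(b:ℂ)) (RationalSuccAux.Dig a) = Zadj ((a:ℂ)/(b:ℂ)) :=
    RationalSuccAux.repSet_eq_Zadj ha heq hbα
  refine ⟨⟨⟨(Finset.Icc (-(a:ℤ)+1) ((a:ℤ)-1)).image (fun m : ℤ => (m:ℂ)), ?_, ?_⟩,
      fun S hS => RationalSuccAux.lower_bound ha heq hbα S hS⟩, ⟨?_, ?_, ?_⟩, ?_⟩
  · rw [Finset.card_image_of_injective _ Int.cast_injective, Int.card_Icc]; omega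
  · rw [Finset.coe_image]; exact hEq
  · simp only [Finset.mem_Icc]; omega
  · rw [Int.card_Icc]; omega
  · exact hEq
  · intro S hI hrep
    have := RationalSuccAux.lower_bound ha heq hbα S hrep
    omega
end

section
/- Let α be a nonzero algebraic number, R a complete residue system mod α in ℤ[α], and J the associated backward division map. Then the following are equivalent: (i) ℤ[α] = R[α]; (ii) ℘ = {J^{(n)}(0) : n ≥ 0} and for every β ∈ ℤ[α] there exists s ∈ ℕ with J^{(s+1)}(β) = 0; (iii) ℘ = {J^{(n)}(0) : n ≥ 0} and for every β ∈ ℤ[α] the sequence (J^{(n)}(β))_{n≥0} is eventually periodic. -/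
open Polynomial

/-- `R` is a complete residue system mod `α` in `ℤ[α]`: `R ⊆ ℤ[α]` and every `β ∈ ℤ[α]`
is congruent modulo the ideal `αℤ[α]` to exactly one element of `R`. -/
def IsCRS (α : ℂ) (R : Set ℂ) : Prop :=
  R ⊆ Zadj α ∧ ∀ β ∈ Zadj α, ∃! r, r ∈ R ∧ ∃ γ ∈ Zadj α, β - r = α * γ

/-- `J` is the backward division map associated to the CRS `R`:
for every `β ∈ ℤ[α]`, `J β ∈ ℤ[α]` and `β = r + α · J β` for some `r ∈ R`. -/
def IsJmap (α : ℂ) (R : Set ℂ) (J : ℂ → ℂ) : Prop :=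
  ∀ β ∈ Zadj α, J β ∈ Zadj α ∧ ∃ r ∈ R, β = r + α * J β

/-- `℘`: the set of periodic elements of `ℤ[α]` under `J`. -/
def perSet (α : ℂ) (J : ℂ → ℂ) : Set ℂ :=
  {β ∈ Zadj α | ∃ n : ℕ, 1 ≤ n ∧ J^[n] β = β}

/-- The orbit of `β` under `J` is eventually periodic. -/
def EvPeriodic (J : ℂ → ℂ) (β : ℂ) : Prop :=
  ∃ (k m : ℕ), 1 ≤ m ∧ J^[k + m] β = J^[k] β

lemma zadj_zero (α : ℂ) : (0:ℂ) ∈ Zadj α := ⟨0, by simp⟩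
lemma zadj_add {α a b : ℂ} (ha : a ∈ Zadj α) (hb : b ∈ Zadj α) : a + b ∈ Zadj α := by
  obtain ⟨P, hP⟩ := ha; obtain ⟨Q, hQ⟩ := hb; exact ⟨P + Q, by simp [hP, hQ]⟩
lemma zadj_mul {α a b : ℂ} (ha : a ∈ Zadj α) (hb : b ∈ Zadj α) : a * b ∈ Zadj α := by
  obtain ⟨P, hP⟩ := ha; obtain ⟨Q, hQ⟩ := hb; exact ⟨P * Q, by simp [hP, hQ]⟩
lemma zadj_pow (α : ℂ) (j : ℕ) : α ^ j ∈ Zadj α := ⟨X ^ j, by simp⟩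
lemma zadj_sum {α : ℂ} (n : ℕ) (g : ℕ → ℂ) (hg : ∀ j < n, g j ∈ Zadj α) :
    (∑ j ∈ Finset.range n, g j) ∈ Zadj α := by
  induction n with
  | zero => simpa using zadj_zero α
  | succ n ih =>
    rw [Finset.sum_range_succ]
    exact zadj_add (ih fun j hj => hg j (Nat.lt_succ_of_lt hj)) (hg n (Nat.lt_succ_self n))

lemma zadj_iter {α : ℂ} {R : Set ℂ} {J : ℂ → ℂ} (hJ : IsJmap α R J)
    {β : ℂ} (hβ : β ∈ Zadj α) (n : ℕ) : J^[n] β ∈ Zadj α := by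
  induction n with
  | zero => simpa
  | succ n ih => rw [Function.iterate_succ_apply']; exact (hJ _ ih).1

/-- expansion: β = Σ_{j<N} r_j α^j + α^N J^N β -/
lemma expand {α : ℂ} {R : Set ℂ} {J : ℂ → ℂ} (hJ : IsJmap α R J)
    {β : ℂ} (hβ : β ∈ Zadj α) (N : ℕ) :
    ∃ f : ℕ → ℂ, (∀ j, f j ∈ R) ∧
      β = (∑ j ∈ Finset.range N, f j * α ^ j) + α ^ N * J^[N] β := by
  choose! r hrR hrEq using fun n => (hJ (J^[n] β) (zadj_iter hJ hβ n)).2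
  refine ⟨r, hrR, ?_⟩
  induction N with
  | zero => simp
  | succ N ih =>
    rw [Finset.sum_range_succ]
    have h1 : J^[N] β = r N + α * J^[N+1] β := by
      rw [Function.iterate_succ_apply']; exact hrEq N
    calc β = (∑ j ∈ Finset.range N, r j * α ^ j) + α ^ N * J^[N] β := ih
    _ = _ := by rw [h1]; ring

/-- if β has a representation of length n+1 over R, then J β has the shifted one -/
lemma J_shift {α : ℂ} (h0 : α ≠ 0) {R : Set ℂ} (hR : IsCRS α R) {J : ℂ → ℂ}
    (hJ : IsJmap α R J) (n : ℕ) (f : ℕ → ℂ) (hf : ∀ j ≤ n, f j ∈ R) :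
    J (∑ j ∈ Finset.range (n+1), f j * α ^ j) = ∑ j ∈ Finset.range n, f (j+1) * α ^ j := by
  set β := ∑ j ∈ Finset.range (n+1), f j * α ^ j with hβdef
  set γ := ∑ j ∈ Finset.range n, f (j+1) * α ^ j with hγdef
  have hβ : β ∈ Zadj α :=
    zadj_sum _ _ fun j hj => zadj_mul (hR.1 (hf j (Nat.lt_succ_iff.mp hj))) (zadj_pow α j)
  have hγ : γ ∈ Zadj α :=
    zadj_sum _ _ fun j hj => zadj_mul (hR.1 (hf (j+1) hj)) (zadj_pow α j)
  have key : β = f 0 + α * γ := by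
    rw [hβdef, Finset.sum_range_succ' (fun j => f j * α ^ j) n, hγdef, Finset.mul_sum]
    simp only [pow_succ, pow_zero, mul_one]
    rw [add_comm]
    congr 1
    exact Finset.sum_congr rfl fun x _ => by ring
  obtain ⟨r, -, huniq⟩ := hR.2 β hβ
  obtain ⟨hJβ, r', hr'R, heq⟩ := hJ β hβ
  have h1 : f 0 = r := huniq (f 0) ⟨hf 0 (Nat.zero_le n), γ, hγ, by linear_combination key⟩
  have h2 : r' = r := huniq r' ⟨hr'R, J β, hJβ, by linear_combination heq⟩
  have : α * J β = α * γ := by linear_combination key - heq + h1 - h2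
  exact mul_left_cancel₀ h0 this

lemma rep_to_zero {α : ℂ} (h0 : α ≠ 0) {R : Set ℂ} (hR : IsCRS α R) {J : ℂ → ℂ}
    (hJ : IsJmap α R J) :
    ∀ (n : ℕ) (f : ℕ → ℂ), (∀ j ≤ n, f j ∈ R) →
      J^[n+1] (∑ j ∈ Finset.range (n+1), f j * α ^ j) = 0 := by
  intro n
  induction n with
  | zero =>
    intro f hf
    simpa using J_shift h0 hR hJ 0 f hf
  | succ n ih =>
    intro f hf
    rw [Function.iterate_succ_apply, show n+1+1 = (n+1)+1 from rfl,
      J_shift h0 hR hJ (n+1) f hf]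
    exact ih (fun j => f (j+1)) (fun j hj => hf (j+1) (by omega))

lemma iter_periodic {J : ℂ → ℂ} {β : ℂ} {p : ℕ} (hp : J^[p] β = β) :
    ∀ k, J^[p * k] β = β := by
  intro k
  induction k with
  | zero => simp
  | succ k ih => rw [Nat.mul_succ, Function.iterate_add_apply, hp, ih]


/-- Proposition 1: for a nonzero algebraic number `α`, a CRS `R` and the associated map `J`,
the following are equivalent: (i) `ℤ[α] = R[α]`; (ii) `℘ = {J^{(n)}(0) : n ≥ 0}` and every
`β ∈ ℤ[α]` has `J^{(s+1)}(β) = 0` for some `s`; (iii) `℘ = {J^{(n)}(0) : n ≥ 0}` and every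
orbit is eventually periodic. -/
theorem crs_representation_tfae (α : ℂ) (hα : IsAlgebraic ℚ α) (h0 : α ≠ 0)
    (R : Set ℂ) (hR : IsCRS α R) (J : ℂ → ℂ) (hJ : IsJmap α R J) :
    (repSet α R = Zadj α ↔
      (perSet α J = {β | ∃ n : ℕ, J^[n] 0 = β} ∧
        ∀ β ∈ Zadj α, ∃ s : ℕ, J^[s + 1] β = 0)) ∧
    (repSet α R = Zadj α ↔
      (perSet α J = {β | ∃ n : ℕ, J^[n] 0 = β} ∧
        ∀ β ∈ Zadj α, EvPeriodic J β)) := by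
  have hzad_rep : repSet α R ⊆ Zadj α := by
    rintro z ⟨n, f, hf, rfl⟩
    exact zadj_sum _ _ fun j hj => zadj_mul (hR.1 (hf j (Nat.lt_succ_iff.mp hj))) (zadj_pow α j)
  have h1 : repSet α R = Zadj α →
      (perSet α J = {β | ∃ n : ℕ, J^[n] 0 = β} ∧ ∀ β ∈ Zadj α, ∃ s : ℕ, J^[s + 1] β = 0) := by
    intro hrep
    have hzero : ∀ β ∈ Zadj α, ∃ s : ℕ, J^[s+1] β = 0 := by
      intro β hβ
      rw [← hrep] at hβ
      obtain ⟨n, f, hf, rfl⟩ := hβ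
      exact ⟨n, rep_to_zero h0 hR hJ n f hf⟩
    refine ⟨?_, hzero⟩
    obtain ⟨s0, hs0⟩ := hzero 0 (zadj_zero α)
    ext β
    constructor
    · rintro ⟨hβZ, n, hn1, hper⟩
      obtain ⟨s, hs⟩ := hzero β hβZ
      have hmul : J^[n * (s+1)] β = β := iter_periodic hper (s+1)
      have hge : s + 1 ≤ n * (s+1) := Nat.le_mul_of_pos_left _ hn1
      refine ⟨n*(s+1) - (s+1), ?_⟩
      have he : n*(s+1) - (s+1) + (s+1) = n*(s+1) := by omega
      rw [← he, Function.iterate_add_apply, hs] at hmul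
      exact hmul
    · rintro ⟨n, rfl⟩
      refine ⟨zadj_iter hJ (zadj_zero α) n, s0+1, by omega, ?_⟩
      have he : (s0+1)+n = n+(s0+1) := by omega
      rw [← Function.iterate_add_apply, he, Function.iterate_add_apply, hs0]
  have h2 : (perSet α J = {β | ∃ n : ℕ, J^[n] 0 = β} ∧ ∀ β ∈ Zadj α, ∃ s : ℕ, J^[s + 1] β = 0) →
      (perSet α J = {β | ∃ n : ℕ, J^[n] 0 = β} ∧ ∀ β ∈ Zadj α, EvPeriodic J β) := by
    rintro ⟨hP, hz⟩
    refine ⟨hP, fun β hβ => ?_⟩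
    have h0per : (0:ℂ) ∈ perSet α J := by rw [hP]; exact ⟨0, rfl⟩
    obtain ⟨-, m, hm1, hm0⟩ := h0per
    obtain ⟨s, hs⟩ := hz β hβ
    refine ⟨s+1, m, hm1, ?_⟩
    have he : (s+1)+m = m+(s+1) := by omega
    rw [he, Function.iterate_add_apply, hs]
    exact hm0
  have h3 : (perSet α J = {β | ∃ n : ℕ, J^[n] 0 = β} ∧ ∀ β ∈ Zadj α, EvPeriodic J β) →
      repSet α R = Zadj α := by
    rintro ⟨hP, hev⟩
    apply Set.eq_of_subset_of_subset hzad_rep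
    intro β hβ
    obtain ⟨k, m, hm1, hkm⟩ := hev β hβ
    have hkmem : J^[k] β ∈ perSet α J := by
      refine ⟨zadj_iter hJ hβ k, m, hm1, ?_⟩
      rw [← Function.iterate_add_apply, show m + k = k + m by omega]
      exact hkm
    rw [hP] at hkmem
    obtain ⟨t, ht⟩ := hkmem
    have h0per : (0:ℂ) ∈ perSet α J := by rw [hP]; exact ⟨0, rfl⟩
    obtain ⟨-, p, hp1, hp0⟩ := h0per
    set c := p * (t+1) - t with hc
    have hle : t + 1 ≤ p * (t+1) := Nat.le_mul_of_pos_left _ hp1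
    have hct : c + t = p * (t+1) := by omega
    have hN0 : J^[k + c] β = 0 := by
      have e1 : J^[k + c] β = J^[c] (J^[k] β) := by
        rw [show k + c = c + k by omega, Function.iterate_add_apply]
      rw [e1, ← ht, ← Function.iterate_add_apply, hct]
      exact iter_periodic hp0 (t+1)
    obtain ⟨f, hfR, hfe⟩ := expand hJ hβ (k+c)
    rw [hN0, mul_zero, add_zero] at hfe
    refine ⟨k + c - 1, f, fun j _ => hfR j, ?_⟩
    rw [show k + c - 1 + 1 = k + c by omega]
    exact hfe
  exact ⟨⟨h1, fun h => h3 (h2 h)⟩, ⟨fun h => h2 (h1 h), h3⟩⟩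
end

section
/- Let α be a nonzero algebraic number, R a complete residue system mod α in ℤ[α], and J the associated backward division map. Then there exists a positive integer L = L(α, R) such that for each β ∈ ℤ[α] there is a constant c = c(α, β) ∈ ℕ with the property that L · J^{(n)}(β) is an algebraic integer for all n ≥ c. -/
open Polynomial

namespace ZadjAux
variable {α : ℂ}

/-- Congruence modulo `αℤ[α]`. -/
def Cong (α : ℂ) (x y : ℂ) : Prop := ∃ γ ∈ Zadj α, x - y = α * γ

lemma zero_mem : (0 : ℂ) ∈ Zadj α := ⟨0, by simp⟩
lemma intCast_mem (t : ℤ) : (t : ℂ) ∈ Zadj α := ⟨C t, by simp⟩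
lemma neg_mem {x : ℂ} (hx : x ∈ Zadj α) : -x ∈ Zadj α := by
  obtain ⟨P, rfl⟩ := hx; exact ⟨-P, by simp⟩
lemma mul_mem {x y : ℂ} (hx : x ∈ Zadj α) (hy : y ∈ Zadj α) : x * y ∈ Zadj α := by
  obtain ⟨P, rfl⟩ := hx; obtain ⟨Q, rfl⟩ := hy; exact ⟨P * Q, by simp⟩

lemma isAlgebraic (hα : IsAlgebraic ℚ α) {z : ℂ} (hz : z ∈ Zadj α) : IsAlgebraic ℤ z := by
  rw [IsFractionRing.isAlgebraic_iff ℤ ℚ ℂ]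
  obtain ⟨P, rfl⟩ := hz
  have h1 : (aeval α) P = aeval α (P.map (algebraMap ℤ ℚ)) := by
    rw [aeval_map_algebraMap]
  rw [h1]
  have h2 : aeval α (P.map (algebraMap ℤ ℚ)) ∈ Algebra.adjoin ℚ {α} :=
    aeval_mem_adjoin_singleton ℚ α
  have h3 : IsIntegral ℚ α := hα.isIntegral
  exact (IsIntegral.of_mem_of_fg _ h3.fg_adjoin_singleton _ h2).isAlgebraic

lemma cong_symm {x y : ℂ} (h : Cong α x y) : Cong α y x := by
  obtain ⟨γ, hγ, he⟩ := h
  exact ⟨-γ, neg_mem hγ, by rw [mul_neg, ← he]; ring⟩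

lemma cong_trans {x y z : ℂ} (h : Cong α x y) (h' : Cong α y z) : Cong α x z := by
  obtain ⟨γ, hγ, he⟩ := h; obtain ⟨δ, hδ, he'⟩ := h'
  exact ⟨γ + δ, by obtain ⟨P, rfl⟩ := hγ; obtain ⟨Q, rfl⟩ := hδ; exact ⟨P + Q, by simp⟩,
    by rw [mul_add, ← he, ← he']; ring⟩

lemma cong_intCast {z : ℂ} (hz : z ∈ Zadj α) : ∃ t : ℤ, Cong α z (t : ℂ) := by
  obtain ⟨P, rfl⟩ := hz
  refine ⟨P.coeff 0, aeval α P.divX, ⟨P.divX, rfl⟩, ?_⟩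
  conv_lhs => rw [← P.divX_mul_X_add]
  push_cast [map_add, map_mul]
  simp
  ring

variable {q : ℤ[X]} (hq : aeval α q = 0) (hq0 : q.coeff 0 ≠ 0)

include hq in
lemma cong_a0 : Cong α ((q.coeff 0 : ℤ) : ℂ) 0 := by
  refine ⟨-aeval α q.divX, neg_mem ⟨q.divX, rfl⟩, ?_⟩
  have : aeval α (q.divX * X + C (q.coeff 0)) = 0 := by rw [q.divX_mul_X_add]; exact hq
  simp only [map_add, map_mul, aeval_X, aeval_C] at this
  have h2 : algebraMap ℤ ℂ (q.coeff 0) = ((q.coeff 0 : ℤ) : ℂ) := by simp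
  rw [h2] at this
  rw [sub_zero, mul_neg]
  linear_combination this

include hq in
lemma cong_mod (t : ℤ) : Cong α (t : ℂ) ((t % ((q.coeff 0).natAbs : ℤ) : ℤ) : ℂ) := by
  obtain ⟨γ, hγ, he⟩ := cong_a0 hq
  rw [sub_zero] at he
  set m : ℤ := ((q.coeff 0).natAbs : ℤ) with hm
  have hma : (m : ℂ) = α * γ ∨ (m : ℂ) = α * (-γ) := by
    rcases Int.natAbs_eq (q.coeff 0) with h | h
    · left; rw [hm, ← h]; exact he
    · right
      have h2 : ((m:ℤ):ℂ) = -((q.coeff 0 : ℤ):ℂ) := by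
        rw [hm, h]; push_cast [abs_neg, abs_abs]; ring
      rw [mul_neg, ← he, h2]
  have hdiv : (t:ℂ) - ((t % m : ℤ) : ℂ) = (m:ℂ) * ((t / m : ℤ) : ℂ) := by
    have : t % m = t - m * (t / m) := by rw [Int.emod_def]
    rw [this]; push_cast; ring
  rcases hma with h | h
  · exact ⟨γ * ((t / m : ℤ) : ℂ), mul_mem hγ (intCast_mem _),
      by rw [hdiv, h, mul_assoc]⟩
  · exact ⟨(-γ) * ((t / m : ℤ) : ℂ), mul_mem (neg_mem hγ) (intCast_mem _),
      by rw [hdiv, h, mul_assoc]⟩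

include hq hq0 in
lemma finite_R {R : Set ℂ} (hR : IsCRS α R) : R.Finite := by
  set N : ℕ := (q.coeff 0).natAbs with hN
  have hNpos : 0 < N := by simpa [hN] using hq0
  have key : ∀ r ∈ R, ∃ u : ℕ, u < N ∧ Cong α r (u : ℂ) := by
    intro r hr
    obtain ⟨t, ht⟩ := cong_intCast (hR.1 hr)
    have hm0 : ((N:ℤ)) ≠ 0 := by exact_mod_cast hNpos.ne'
    have h1 : 0 ≤ t % (N:ℤ) := Int.emod_nonneg t hm0
    have h2 : t % (N:ℤ) < (N:ℤ) := Int.emod_lt_of_pos t (by exact_mod_cast hNpos)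
    refine ⟨(t % (N:ℤ)).toNat, by omega, ?_⟩
    have := cong_trans ht (cong_mod hq t)
    have he : (((t % (N:ℤ)).toNat : ℕ) : ℂ) = ((t % (N:ℤ) : ℤ) : ℂ) := by
      have h3 := Int.toNat_of_nonneg h1
      exact_mod_cast congrArg (fun z : ℤ => (z : ℂ)) h3
    rw [he]; exact this
  choose! u hu hcong using key
  have hinj : Function.Injective (fun r : R => (⟨u r, hu r r.2⟩ : Fin N)) := by
    rintro ⟨r, hr⟩ ⟨r', hr'⟩ hrr
    simp only [Fin.mk.injEq] at hrr
    have hcr : Cong α r r' := by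
      refine cong_trans (hcong r hr) ?_
      rw [hrr]
      exact cong_symm (hcong r' hr')
    obtain ⟨γ, hγ, he⟩ := hcr
    obtain ⟨rr, hrru, hrrq⟩ := hR.2 r (hR.1 hr)
    have e1 : r = rr := hrrq r ⟨hr, 0, zero_mem, by ring⟩
    have e2 : r' = rr := hrrq r' ⟨hr', γ, hγ, he⟩
    exact Subtype.ext (e1.trans e2.symm)
  have : Finite R := Finite.of_injective _ hinj
  exact Set.finite_coe_iff.mp this

/-- The key lemma: if `L·J` lies in `ℤ[α]` (witnessed by `f`) and
`g(α) = Σ_{k<n} r_k α^k + α^n J` with each `L·r_k` an algebraic integer and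
`n > deg g`, then `L·J` is an algebraic integer. -/
lemma key_lemma (α : ℂ) (h0 : α ≠ 0) (L : ℕ) (r : ℕ → ℂ)
    (hLr : ∀ k, IsIntegral ℤ ((L : ℂ) * r k))
    (g f : ℤ[X]) (n : ℕ) (hn : g.natDegree + 1 ≤ n) (J : ℂ)
    (hJf : (L : ℂ) * J = aeval α f)
    (hsum : aeval α g = (∑ k ∈ Finset.range n, r k * α ^ k) + α ^ n * J) :
    IsIntegral ℤ ((L : ℂ) * J) := by
  set x : ℂ := (L : ℂ) * J with hx
  set m : ℕ := f.natDegree with hm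
  have hpow : ∀ (a : ℤ) (b : ℕ), α ^ (a + (b : ℤ)) = α ^ a * α ^ b := fun a b => by
    rw [zpow_add₀ h0, zpow_natCast]
  have hgval : aeval α g = ∑ j ∈ Finset.range (g.natDegree + 1), (g.coeff j : ℂ) * α ^ j := by
    rw [aeval_eq_sum_range]
    exact Finset.sum_congr rfl fun j _ => by rw [zsmul_eq_mul]
  have hfval : aeval α f = ∑ s ∈ Finset.range (m + 1), (f.coeff s : ℂ) * α ^ s := by
    rw [aeval_eq_sum_range]
    exact Finset.sum_congr rfl fun s _ => by rw [zsmul_eq_mul]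
  have hA : ∀ i : ℤ, x * α ^ i =
      (∑ j ∈ Finset.range (g.natDegree + 1), ((L * g.coeff j : ℤ) : ℂ) * α ^ (i - n + j)) -
      ∑ k ∈ Finset.range n, ((L : ℂ) * r k) * α ^ (i - (n : ℤ) + k) := by
    intro i
    have h1 : α ^ (i : ℤ) = α ^ (i - (n : ℤ)) * α ^ (n : ℕ) := by
      rw [← zpow_natCast α n, ← zpow_add₀ h0]; congr 1; ring
    have h2 : x * α ^ (i : ℤ) =
        (L : ℂ) * α ^ (i - (n : ℤ)) * (aeval α g - ∑ k ∈ Finset.range n, r k * α ^ k) := by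
      rw [h1, hsum]; ring
    rw [h2, hgval, mul_sub, Finset.mul_sum, Finset.mul_sum]
    congr 1
    · exact Finset.sum_congr rfl fun j _ => by rw [hpow (i - n) j]; push_cast; ring
    · exact Finset.sum_congr rfl fun k _ => by rw [hpow (i - n) k]; ring
  have hB : ∀ i : ℤ, x * α ^ i = ∑ s ∈ Finset.range (m + 1), (f.coeff s : ℂ) * α ^ (i + s) := by
    intro i
    rw [hJf, hfval, Finset.sum_mul]
    exact Finset.sum_congr rfl fun s _ => by rw [hpow i s]; ring
  -- the module
  set O := integralClosure ℤ ℂ with hO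
  set N : Submodule O ℂ :=
    Submodule.span O ((fun i : ℤ => α ^ i) '' (Set.Icc (-(n : ℤ)) (m : ℤ))) with hN
  have hgen : ∀ e : ℤ, -(n : ℤ) ≤ e → e ≤ (m : ℤ) → α ^ e ∈ N :=
    fun e h1 h2 => Submodule.subset_span ⟨e, ⟨h1, h2⟩, rfl⟩
  have hterm1 : ∀ (t : ℤ) (e : ℤ), -(n : ℤ) ≤ e → e ≤ (m : ℤ) → (t : ℂ) * α ^ e ∈ N := by
    intro t e h1 h2
    have := N.toAddSubgroup.zsmul_mem (hgen e h1 h2) t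
    rwa [zsmul_eq_mul] at this
  have hterm2 : ∀ (b : ℂ), IsIntegral ℤ b → ∀ e : ℤ, -(n : ℤ) ≤ e → e ≤ (m : ℤ) →
      b * α ^ e ∈ N := by
    intro b hb e h1 h2
    exact N.smul_mem (⟨b, hb⟩ : O) (hgen e h1 h2)
  have hstab : ∀ z ∈ N, x * z ∈ N := by
    intro z hz
    induction hz using Submodule.span_induction with
    | mem z hzmem =>
      obtain ⟨i, ⟨hi1, hi2⟩, rfl⟩ := hzmem
      rcases le_or_gt 0 i with hi0 | hi0
      · rw [hA i]
        refine sub_mem (Submodule.sum_mem _ fun j hj => ?_) (Submodule.sum_mem _ fun k hk => ?_)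
        · have hj' := Finset.mem_range.mp hj
          exact hterm1 _ _ (by omega) (by omega)
        · have hk' := Finset.mem_range.mp hk
          exact hterm2 _ (hLr k) _ (by omega) (by omega)
      · rw [hB i]
        refine Submodule.sum_mem _ fun s hs => ?_
        have hs' := Finset.mem_range.mp hs
        exact hterm1 _ _ (by omega) (by omega)
    | zero => rw [mul_zero]; exact N.zero_mem
    | add y z _ _ hy hz => rw [mul_add]; exact N.add_mem hy hz
    | smul a y _ hy => rw [mul_smul_comm]; exact N.smul_mem a hy
  have hbot : N ≠ ⊥ := by
    rw [Submodule.ne_bot_iff]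
    refine ⟨1, ?_, one_ne_zero⟩
    have := hgen 0 (by omega) (by omega)
    rwa [zpow_zero] at this
  have hfg : N.FG := Submodule.fg_span (((Set.finite_Icc _ _).image _))
  have h1 : IsIntegral O x :=
    isIntegral_of_smul_mem_submodule N hbot hfg x fun z hz => by
      rw [smul_eq_mul]; exact hstab z hz
  have : Algebra.IsIntegral ℤ O := ⟨fun y => integralClosure.isIntegral y⟩
  exact isIntegral_trans x h1

end ZadjAux

/-- Proposition 2: there is a positive integer `L = L(α, R)` such that for each
`β ∈ ℤ[α]` there is `c = c(α, β) ∈ ℕ` with `L · J^{(n)}(β)` an algebraic integer for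
all `n ≥ c`. -/
theorem exists_denominator_bound (α : ℂ) (hα : IsAlgebraic ℚ α) (h0 : α ≠ 0)
    (R : Set ℂ) (hR : IsCRS α R) (J : ℂ → ℂ) (hJ : IsJmap α R J) :
    ∃ L : ℕ, 0 < L ∧ ∀ β ∈ Zadj α, ∃ c : ℕ, ∀ n ≥ c,
      IsIntegral ℤ ((L : ℂ) * J^[n] β) := by
  classical
  -- an integer polynomial annihilating α with nonzero constant term
  obtain ⟨q, hq, hq0⟩ : ∃ q : ℤ[X], aeval α q = 0 ∧ q.coeff 0 ≠ 0 := by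
    have hz : IsAlgebraic ℤ α := by
      rw [IsFractionRing.isAlgebraic_iff ℤ ℚ ℂ]; exact hα
    obtain ⟨p, hp0, hpa⟩ := hz
    refine ⟨p /ₘ (X - C 0) ^ p.rootMultiplicity 0, ?_, ?_⟩
    · have h := p.pow_mul_divByMonic_rootMultiplicity_eq 0
      have h2 : aeval α ((X - C 0) ^ p.rootMultiplicity 0 *
          (p /ₘ (X - C 0) ^ p.rootMultiplicity 0)) = 0 := by
        rw [h, hpa]
      rw [map_mul, map_pow] at h2
      have hX : aeval α (X - C (0:ℤ)) = α := by simp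
      rw [hX] at h2
      rcases mul_eq_zero.mp h2 with h3 | h3
      · exact absurd (pow_eq_zero_iff'.mp h3).1 h0
      · exact h3
    · have := eval_divByMonic_pow_rootMultiplicity_ne_zero (0 : ℤ) hp0
      simpa [coeff_zero_eq_eval_zero] using this
  -- R is finite
  have hRfin : R.Finite := ZadjAux.finite_R hq hq0 hR
  -- a common denominator for the elements of R
  have hden : ∀ r ∈ R, ∃ y : ℤ, y ≠ 0 ∧ IsIntegral ℤ ((y : ℂ) * r) := by
    intro r hr
    have halg : IsAlgebraic ℤ r := ZadjAux.isAlgebraic hα (hR.1 hr)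
    obtain ⟨y, hy0, hyint⟩ := halg.exists_integral_multiple
    refine ⟨y, hy0, ?_⟩
    simpa [zsmul_eq_mul] using hyint
  choose! d hd0 hdint using hden
  set s := hRfin.toFinset with hs
  set P : ℤ := ∏ r ∈ s, d r with hP
  have hP0 : P ≠ 0 := by
    rw [hP]
    exact Finset.prod_ne_zero_iff.mpr fun r hr => hd0 r (hRfin.mem_toFinset.mp hr)
  refine ⟨P.natAbs, Int.natAbs_pos.mpr hP0, ?_⟩
  set L : ℕ := P.natAbs with hL
  -- L kills denominators of all elements of R
  have hLr : ∀ r ∈ R, IsIntegral ℤ ((L : ℂ) * r) := by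
    intro r hr
    have h1 : IsIntegral ℤ ((P : ℂ) * r) := by
      have he : d r * ∏ r' ∈ s.erase r, d r' = P :=
        Finset.mul_prod_erase s d (hRfin.mem_toFinset.mpr hr)
      have h2 : (P : ℂ) * r = ((∏ r' ∈ s.erase r, d r' : ℤ) : ℂ) * ((d r : ℂ) * r) := by
        rw [← he]; push_cast; ring
      rw [h2]
      exact IsIntegral.mul (by
        have : ((∏ r' ∈ s.erase r, d r' : ℤ) : ℂ) =
            algebraMap ℤ ℂ (∏ r' ∈ s.erase r, d r') := by norm_num
        rw [this]; exact isIntegral_algebraMap) (hdint r hr)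
    rcases Int.natAbs_eq P with h | h
    · have h2 : (((P.natAbs : ℤ)) : ℂ) = (P : ℂ) := by rw [← h]
      rw [hL, ← Int.cast_natCast (R := ℂ), h2]
      exact h1
    · have h' : (P.natAbs : ℤ) = -P := by omega
      have h2 : (((P.natAbs : ℤ)) : ℂ) = -(P : ℂ) := by rw [h']; push_cast; ring
      rw [hL, ← Int.cast_natCast (R := ℂ), h2, neg_mul]
      exact h1.neg
  -- now fix β
  intro β hβ
  obtain ⟨g, hg⟩ := hβ
  -- all iterates stay in ℤ[α]
  have hmem : ∀ n : ℕ, J^[n] β ∈ Zadj α := by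
    intro n
    induction n with
    | zero => exact ⟨g, hg⟩
    | succ n ih =>
      rw [Function.iterate_succ_apply']
      exact (hJ _ ih).1
  -- digits
  have hdig : ∀ k : ℕ, ∃ e, e ∈ R ∧ J^[k] β = e + α * J^[k + 1] β := by
    intro k
    obtain ⟨e, heR, hee⟩ := (hJ _ (hmem k)).2
    exact ⟨e, heR, by rw [Function.iterate_succ_apply']; exact hee⟩
  choose r hrR hrec using hdig
  -- the partial-sum identity
  have hsum : ∀ n : ℕ, β = (∑ k ∈ Finset.range n, r k * α ^ k) + α ^ n * J^[n] β := by
    intro n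
    induction n with
    | zero => simp
    | succ n ih =>
      rw [Finset.sum_range_succ]
      calc β = (∑ k ∈ Finset.range n, r k * α ^ k) + α ^ n * J^[n] β := ih
        _ = (∑ k ∈ Finset.range n, r k * α ^ k) + α ^ n * (r n + α * J^[n + 1] β) := by
            rw [← hrec n]
        _ = (∑ k ∈ Finset.range n, r k * α ^ k) + r n * α ^ n + α ^ (n + 1) * J^[n + 1] β := by
            ring
  refine ⟨g.natDegree + 1, fun n hn => ?_⟩
  -- L · J^[n] β ∈ ℤ[α]
  have hxZ : (L : ℂ) * J^[n] β ∈ Zadj α := by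
    have h1 : ((L : ℕ) : ℂ) = (((L : ℤ) : ℤ) : ℂ) := by push_cast; rfl
    rw [h1]
    exact ZadjAux.mul_mem (ZadjAux.intCast_mem _) (hmem n)
  obtain ⟨f, hf⟩ := hxZ
  exact ZadjAux.key_lemma α h0 L r (fun k => hLr (r k) (hrR k)) g f n hn (J^[n] β)
    hf.symm (by rw [hg]; exact hsum n)
end
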